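/- arXiv:1508.02335 — 6 statements merged into one kernel-verified Lean document; each statement's English description precedes it below -/
import Mathlib

section
/- Let Σ be a countable alphabet. There exists a factor map π : Deficient(Σ^ℤ) → ℕ^ℤ whose image is contained in Deficient(ℕ^ℤ), such that H̃(π(x)) < 2 for every x ∈ Deficient(Σ^ℤ), and such that π maps regular points to regular points. -/
open Filter
open scoped Classical ENNReal

/-- The shift on `Λ^ℤ`. -/
def shift {Λ : Type*} (x : ℤ → Λ) : ℤ → Λ := fun i => x (i + 1)

/-- The word `a` occurs in `x ∈ Λ^ℤ` at position `i`. -/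
def OccursAt {Λ : Type*} (x : ℤ → Λ) (a : List Λ) (i : ℤ) : Prop :=
  ∀ j : Fin a.length, x (i + ((j : ℕ) : ℤ)) = a.get j

/-- `(1/N) · #{0 ≤ i < N : a occurs in x at i}`. -/
noncomputable def wordFreq {Λ : Type*} (x : ℤ → Λ) (a : List Λ) (N : ℕ) : ℝ :=
  (∑ i ∈ Finset.range N, if OccursAt x a (i : ℤ) then (1 : ℝ) else 0) / N

/-- A point `x ∈ Λ^ℤ` is regular if the frequency `s(x,a)` exists for every finite word. -/
def Regular {Λ : Type*} (x : ℤ → Λ) : Prop :=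
  ∀ a : List Λ, ∃ L : ℝ, Tendsto (wordFreq x a) atTop (nhds L)

/-- The frequency `s(x,a)` of the symbol `a` in `x` (the limit of the finite window
frequencies, when it exists). -/
noncomputable def symFreq {Λ : Type*} (x : ℤ → Λ) (a : Λ) : ℝ :=
  limUnder atTop (wordFreq x [a])

/-- The set of deficient points of `Λ^ℤ`: points `x` such that `s(x,a)` exists and is
positive for every symbol `a ∈ Λ`, and `ρ(x) = ∑_{a∈Λ} s(x,a) < 1`. -/
def DeficientSet (Λ : Type*) : Set (ℤ → Λ) :=
  {x | (∀ a : Λ, ∃ L : ℝ, 0 < L ∧ Tendsto (wordFreq x [a]) atTop (nhds L)) ∧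
    ∃ c : ℝ, HasSum (fun a : Λ => symFreq x a) c ∧ c < 1}

/-- `ρ(x) = ∑_{a∈Λ} s(x,a)`. -/
noncomputable def rho {Λ : Type*} (x : ℤ → Λ) : ℝ :=
  ∑' a : Λ, symFreq x a

/-- `H̃(x) = −(1−ρ(x))·log₂(1−ρ(x)) − ∑_{a∈Λ} s(x,a)·log₂ s(x,a)` (valued in `[0,∞]`,
with the convention `0·log₂ 0 = 0`). -/
noncomputable def Htilde {Λ : Type*} (x : ℤ → Λ) : ℝ≥0∞ :=
  ENNReal.ofReal (-((1 - rho x) * Real.logb 2 (1 - rho x))) +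
    ∑' a : Λ, ENNReal.ofReal (-(symFreq x a * Real.logb 2 (symFreq x a)))
namespace ReduceEntropy

variable {Λ : Type*}

lemma occursAt_singleton (x : ℤ → Λ) (a : Λ) (i : ℤ) : OccursAt x [a] i ↔ x i = a := by
  constructor
  · intro h
    have := h ⟨0, by simp⟩
    simpa using this
  · intro h j
    have hj0 : (j : ℕ) = 0 := by have := j.isLt; simp only [List.length_singleton] at this; omega
    have hj : j = ⟨0, by simp⟩ := Fin.ext (by simpa using hj0)
    subst hj
    simpa using h

lemma wordFreq_singleton (x : ℤ → Λ) (a : Λ) (N : ℕ) :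
    wordFreq x [a] N = (∑ i ∈ Finset.range N, if x (i : ℤ) = a then (1 : ℝ) else 0) / N := by
  unfold wordFreq
  congr 1
  refine Finset.sum_congr rfl fun i _ => ?_
  simp [occursAt_singleton]

/-- `σ(x,a)`: the `ℝ≥0∞`-valued limsup of symbol frequencies. -/
noncomputable def sig (x : ℤ → Λ) (a : Λ) : ℝ≥0∞ :=
  atTop.limsup (fun N => ENNReal.ofReal (wordFreq x [a] N))

/-- Tail sums of `σ` along the enumeration `e`. -/
noncomputable def tailS (e : Λ ≃ ℕ) (x : ℤ → Λ) (n : ℕ) : ℝ≥0∞ :=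
  ∑' m : ℕ, sig x (e.symm (m + n))

/-- Block boundaries. -/
noncomputable def nseq (e : Λ ≃ ℕ) (k : ℕ) (x : ℤ → Λ) : ℕ :=
  k + sInf {n | tailS e x n < ENNReal.ofReal ((1 / 16 : ℝ) ^ (k + 2))}

/-- Block index of `m ∈ ℕ`. -/
noncomputable def bIdx (e : Λ ≃ ℕ) (x : ℤ → Λ) (m : ℕ) : ℕ :=
  ∑ j ∈ Finset.Icc 1 m, if nseq e j x ≤ m then 1 else 0

/-- The factor map. -/
noncomputable def pimap (e : Λ ≃ ℕ) (x : ℤ → Λ) : ℤ → ℕ :=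
  fun i => bIdx e x (e (x i))

section Measurability

variable [Countable Λ] [MeasurableSpace Λ] [DiscreteMeasurableSpace Λ]

lemma measurable_wordFreq_singleton (a : Λ) (N : ℕ) :
    Measurable fun x : ℤ → Λ => wordFreq x [a] N := by
  simp only [wordFreq_singleton]
  apply Measurable.div_const
  apply Finset.measurable_sum
  intro i _
  have hs : MeasurableSet {x : ℤ → Λ | x (i : ℤ) = a} := by
    have : {x : ℤ → Λ | x (i : ℤ) = a} = (fun x : ℤ → Λ => x (i : ℤ)) ⁻¹' {a} := by ext; simp
    rw [this]
    exact (measurable_pi_apply _) (measurableSet_singleton a)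
  exact Measurable.ite hs measurable_const measurable_const

lemma measurable_sig (a : Λ) : Measurable fun x : ℤ → Λ => sig x a := by
  have : (fun x : ℤ → Λ => sig x a) =
      fun x => ⨅ n : ℕ, ⨆ i : ℕ, ⨆ _ : i ≥ n, ENNReal.ofReal (wordFreq x [a] i) := by
    funext x
    exact Filter.limsup_eq_iInf_iSup_of_nat
  rw [this]
  refine Measurable.iInf fun n => Measurable.iSup fun i => ?_
  by_cases h : i ≥ n
  · simp only [ciSup_pos h]
    exact ENNReal.measurable_ofReal.comp (measurable_wordFreq_singleton a i)
  · simp [h]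

lemma measurable_tailS (e : Λ ≃ ℕ) (n : ℕ) : Measurable fun x : ℤ → Λ => tailS e x n :=
  Measurable.ennreal_tsum fun m => measurable_sig _

lemma measurable_nseq (e : Λ ≃ ℕ) (k : ℕ) : Measurable (nseq e k) := by
  have h1 : ∀ n : ℕ, MeasurableSet {x : ℤ → Λ |
      tailS e x n < ENNReal.ofReal ((1 / 16 : ℝ) ^ (k + 2))} := fun n =>
    measurableSet_lt (measurable_tailS e n) measurable_const
  apply Measurable.add measurable_const
  apply measurable_to_countable'
  intro n
  have : (fun x : ℤ → Λ =>
      sInf {n | tailS e x n < ENNReal.ofReal ((1 / 16 : ℝ) ^ (k + 2))}) ⁻¹' {n} =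
      {x : ℤ → Λ | sInf {n | tailS e x n < ENNReal.ofReal ((1 / 16 : ℝ) ^ (k + 2))} = n} := by
    ext x; simp [Set.mem_preimage]
  rw [this]
  rcases Nat.eq_zero_or_pos n with rfl | hn
  · -- sInf = 0 : either 0 in set, or set empty
    have : {x : ℤ → Λ | sInf {n | tailS e x n < ENNReal.ofReal ((1 / 16 : ℝ) ^ (k + 2))} = 0} =
        {x : ℤ → Λ | tailS e x 0 < ENNReal.ofReal ((1 / 16 : ℝ) ^ (k + 2))} ∪
        ⋂ j : ℕ, {x : ℤ → Λ | ¬ tailS e x j < ENNReal.ofReal ((1 / 16 : ℝ) ^ (k + 2))} := by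
      ext x
      simp only [Set.mem_setOf_eq, Set.mem_union, Set.mem_iInter]
      constructor
      · intro h
        by_cases he : {n | tailS e x n < ENNReal.ofReal ((1 / 16 : ℝ) ^ (k + 2))} = ∅
        · right; intro j hj
          exact (Set.eq_empty_iff_forall_notMem.1 he j) hj
        · left
          have := Nat.sInf_mem (Set.nonempty_iff_ne_empty.2 he)
          rw [h] at this
          exact this
      · rintro (h | h)
        · exact Nat.sInf_eq_zero.2 (Or.inl h)
        · refine Nat.sInf_eq_zero.2 (Or.inr ?_)
          exact Set.eq_empty_iff_forall_notMem.2 fun j hj => h j hj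
    rw [this]
    exact MeasurableSet.union (h1 0) (MeasurableSet.iInter fun j => (h1 j).compl)
  · obtain ⟨n, rfl⟩ := Nat.exists_eq_add_of_lt hn
    simp only [Nat.zero_add]
    have : {x : ℤ → Λ | sInf {n | tailS e x n < ENNReal.ofReal ((1 / 16 : ℝ) ^ (k + 2))} = n + 1} =
        {x : ℤ → Λ | tailS e x (n + 1) < ENNReal.ofReal ((1 / 16 : ℝ) ^ (k + 2))} ∩
        ⋂ j ∈ Finset.range (n + 1),
          {x : ℤ → Λ | ¬ tailS e x j < ENNReal.ofReal ((1 / 16 : ℝ) ^ (k + 2))} := by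
      ext x
      simp only [Set.mem_setOf_eq, Set.mem_inter_iff, Set.mem_iInter, Finset.mem_range]
      constructor
      · intro h
        have hne : {n | tailS e x n < ENNReal.ofReal ((1 / 16 : ℝ) ^ (k + 2))}.Nonempty := by
          by_contra hc
          rw [Set.not_nonempty_iff_eq_empty] at hc
          rw [hc] at h
          simp at h
        have hmem := Nat.sInf_mem hne
        rw [h] at hmem
        refine ⟨hmem, fun j hj hmem' => ?_⟩
        have := Nat.sInf_le (show j ∈ {n | tailS e x n < ENNReal.ofReal ((1 / 16 : ℝ) ^ (k + 2))} from hmem')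
        omega
      · rintro ⟨h1', h2'⟩
        have hle := Nat.sInf_le (show (n+1) ∈ {n | tailS e x n < ENNReal.ofReal ((1 / 16 : ℝ) ^ (k + 2))} from h1')
        rcases Nat.lt_or_ge (sInf {n | tailS e x n < ENNReal.ofReal ((1 / 16 : ℝ) ^ (k + 2))}) (n+1) with h | h
        · exfalso
          have hne : {n | tailS e x n < ENNReal.ofReal ((1 / 16 : ℝ) ^ (k + 2))}.Nonempty := ⟨_, h1'⟩
          exact h2' _ h (Nat.sInf_mem hne)
        · omega
    rw [this]
    refine MeasurableSet.inter (h1 (n + 1)) ?_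
    exact MeasurableSet.biInter (Finset.range (n + 1)).countable_toSet fun j _ => (h1 j).compl

lemma measurable_bIdx (e : Λ ≃ ℕ) (m : ℕ) : Measurable fun x : ℤ → Λ => bIdx e x m := by
  unfold bIdx
  apply Finset.measurable_sum
  intro j _
  exact Measurable.ite (measurableSet_le (measurable_nseq e j) measurable_const)
    measurable_const measurable_const

lemma measurable_pimap (e : Λ ≃ ℕ) : Measurable (pimap e) := by
  apply measurable_pi_lambda
  intro i
  apply measurable_to_countable'
  intro k
  have : (fun x : ℤ → Λ => pimap e x i) ⁻¹' {k} =
      ⋃ a : Λ, ({x : ℤ → Λ | x i = a} ∩ {x : ℤ → Λ | bIdx e x (e a) = k}) := by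
    ext x
    simp only [Set.mem_preimage, Set.mem_singleton_iff, Set.mem_iUnion, Set.mem_inter_iff,
      Set.mem_setOf_eq, pimap]
    constructor
    · intro h; exact ⟨x i, rfl, h⟩
    · rintro ⟨a, ha, hk⟩; rw [ha]; exact hk
  rw [this]
  refine MeasurableSet.iUnion fun a => MeasurableSet.inter ?_ ?_
  · have : {x : ℤ → Λ | x i = a} = (fun x : ℤ → Λ => x i) ⁻¹' {a} := by ext; simp
    rw [this]
    exact (measurable_pi_apply i) (measurableSet_singleton a)
  · have : {x : ℤ → Λ | bIdx e x (e a) = k} = (fun x : ℤ → Λ => bIdx e x (e a)) ⁻¹' {k} := by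
      ext; simp
    rw [this]
    exact (measurable_bIdx e (e a)) (measurableSet_singleton k)

end Measurability
section Deficient

variable {Λ : Type*}

lemma tendsto_wordFreq_symFreq {x : ℤ → Λ} (hx : x ∈ DeficientSet Λ) (a : Λ) :
    Tendsto (wordFreq x [a]) atTop (nhds (symFreq x a)) := by
  obtain ⟨L, _, hT⟩ := hx.1 a
  have : symFreq x a = L := hT.limUnder_eq
  rw [this]; exact hT

lemma symFreq_pos {x : ℤ → Λ} (hx : x ∈ DeficientSet Λ) (a : Λ) : 0 < symFreq x a := by
  obtain ⟨L, hL, hT⟩ := hx.1 a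
  have : symFreq x a = L := hT.limUnder_eq
  rw [this]; exact hL

lemma sig_eq_ofReal {x : ℤ → Λ} (hx : x ∈ DeficientSet Λ) (a : Λ) :
    sig x a = ENNReal.ofReal (symFreq x a) := by
  have h := tendsto_wordFreq_symFreq hx a
  have h2 : Tendsto (fun N => ENNReal.ofReal (wordFreq x [a] N)) atTop
      (nhds (ENNReal.ofReal (symFreq x a))) :=
    (ENNReal.continuous_ofReal.tendsto _).comp h
  exact h2.limsup_eq

/-- real-valued enumerated frequencies -/
noncomputable def sprime (e : Λ ≃ ℕ) (x : ℤ → Λ) (m : ℕ) : ℝ := symFreq x (e.symm m)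

/-- real-valued tails -/
noncomputable def rtail (e : Λ ≃ ℕ) (x : ℤ → Λ) (n : ℕ) : ℝ := ∑' m : ℕ, sprime e x (m + n)

lemma hasSum_sprime (e : Λ ≃ ℕ) {x : ℤ → Λ} {c : ℝ} (hc : HasSum (fun a => symFreq x a) c) :
    HasSum (sprime e x) c :=
  (Equiv.hasSum_iff e.symm).2 hc

lemma summable_sprime (e : Λ ≃ ℕ) {x : ℤ → Λ} (hx : x ∈ DeficientSet Λ) :
    Summable (sprime e x) := by
  obtain ⟨c, hc, _⟩ := hx.2
  exact (hasSum_sprime e hc).summable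

set_option maxHeartbeats 1000000 in
lemma tailS_eq_ofReal (e : Λ ≃ ℕ) {x : ℤ → Λ} (hx : x ∈ DeficientSet Λ) (n : ℕ) :
    tailS e x n = ENNReal.ofReal (rtail e x n) := by
  calc tailS e x n = ∑' m : ℕ, ENNReal.ofReal (sprime e x (m + n)) :=
        tsum_congr fun m => sig_eq_ofReal hx _
    _ = ENNReal.ofReal (∑' m : ℕ, sprime e x (m + n)) :=
        (ENNReal.ofReal_tsum_of_nonneg (fun m => (symFreq_pos hx _).le)
          ((summable_nat_add_iff n).2 (summable_sprime e hx))).symm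
    _ = ENNReal.ofReal (rtail e x n) := rfl

lemma rtail_tendsto_zero (e : Λ ≃ ℕ) {x : ℤ → Λ} (hx : x ∈ DeficientSet Λ) :
    Tendsto (rtail e x) atTop (nhds 0) :=
  tendsto_sum_nat_add (sprime e x)

lemma rtail_succ_le (e : Λ ≃ ℕ) {x : ℤ → Λ} (hx : x ∈ DeficientSet Λ) (n : ℕ) :
    rtail e x (n + 1) ≤ rtail e x n := by
  have hsum : Summable (fun m => sprime e x (m + n)) :=
    (summable_nat_add_iff n).2 (summable_sprime e hx)
  have h0 : rtail e x n = sprime e x n + rtail e x (n + 1) := by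
    unfold rtail
    rw [Summable.tsum_eq_zero_add hsum]
    congr 1
    · simp
    · exact tsum_congr fun m => by ring_nf
  have := (symFreq_pos hx (e.symm n)).le
  unfold sprime at h0
  linarith [h0]

lemma rtail_antitone (e : Λ ≃ ℕ) {x : ℤ → Λ} (hx : x ∈ DeficientSet Λ) :
    Antitone (rtail e x) := by
  apply antitone_nat_of_succ_le
  intro n
  exact rtail_succ_le e hx n

lemma nseq_set_nonempty (e : Λ ≃ ℕ) {x : ℤ → Λ} (hx : x ∈ DeficientSet Λ) (k : ℕ) :
    {n | tailS e x n < ENNReal.ofReal ((1 / 16 : ℝ) ^ (k + 2))}.Nonempty := by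
  have hpos : (0 : ℝ) < (1 / 16 : ℝ) ^ (k + 2) := by positivity
  have hev : ∀ᶠ n in atTop, rtail e x n < (1 / 16 : ℝ) ^ (k + 2) :=
    Filter.Tendsto.eventually_lt_const hpos (rtail_tendsto_zero e hx)
  obtain ⟨n, hn⟩ := hev.exists
  refine ⟨n, ?_⟩
  rw [Set.mem_setOf_eq, tailS_eq_ofReal e hx]
  exact (ENNReal.ofReal_lt_ofReal_iff hpos).2 hn

lemma rtail_nseq_lt (e : Λ ≃ ℕ) {x : ℤ → Λ} (hx : x ∈ DeficientSet Λ) (k : ℕ) :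
    rtail e x (nseq e k x) < (1 / 16 : ℝ) ^ (k + 2) := by
  have hne := nseq_set_nonempty e hx k
  have hmem := Nat.sInf_mem hne
  have h1 : tailS e x (sInf {n | tailS e x n < ENNReal.ofReal ((1 / 16 : ℝ) ^ (k + 2))})
      < ENNReal.ofReal ((1 / 16 : ℝ) ^ (k + 2)) := hmem
  rw [tailS_eq_ofReal e hx] at h1
  have hpos : (0 : ℝ) < (1 / 16 : ℝ) ^ (k + 2) := by positivity
  have h2 := (ENNReal.ofReal_lt_ofReal_iff hpos).1 h1
  have h3 : rtail e x (nseq e k x) ≤ rtail e x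
      (sInf {n | tailS e x n < ENNReal.ofReal ((1 / 16 : ℝ) ^ (k + 2))}) := by
    apply rtail_antitone e hx
    unfold nseq
    omega
  linarith

lemma nseq_ge (e : Λ ≃ ℕ) (x : ℤ → Λ) (k : ℕ) : k ≤ nseq e k x := Nat.le_add_right _ _

lemma nseq_lt_succ (e : Λ ≃ ℕ) {x : ℤ → Λ} (hx : x ∈ DeficientSet Λ) (k : ℕ) :
    nseq e k x < nseq e (k + 1) x := by
  unfold nseq
  have hsub : {n | tailS e x n < ENNReal.ofReal ((1 / 16 : ℝ) ^ (k + 1 + 2))} ⊆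
      {n | tailS e x n < ENNReal.ofReal ((1 / 16 : ℝ) ^ (k + 2))} := by
    intro n hn
    refine lt_of_lt_of_le hn (ENNReal.ofReal_le_ofReal ?_)
    apply pow_le_pow_of_le_one (by norm_num) (by norm_num)
    omega
  have hne := nseq_set_nonempty e hx (k + 1)
  have := Nat.sInf_le (hsub (Nat.sInf_mem hne))
  omega

lemma nseq_mono (e : Λ ≃ ℕ) {x : ℤ → Λ} (hx : x ∈ DeficientSet Λ) :
    StrictMono (fun k => nseq e k x) :=
  strictMono_nat_of_lt_succ (nseq_lt_succ e hx)

end Deficient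
section Blocks

variable {Λ : Type*}

/-- The lower endpoint of block `k`. -/
noncomputable def blo (e : Λ ≃ ℕ) (x : ℤ → Λ) (k : ℕ) : ℕ :=
  if k = 0 then 0 else nseq e k x

/-- The block of symbols mapped to `k`. -/
noncomputable def blockSet (e : Λ ≃ ℕ) (x : ℤ → Λ) (k : ℕ) : Finset Λ :=
  (Finset.Ico (blo e x k) (nseq e (k + 1) x)).image e.symm

lemma nseq_mono' (e : Λ ≃ ℕ) {x : ℤ → Λ} (hx : x ∈ DeficientSet Λ) {j k : ℕ} (h : j ≤ k) :
    nseq e j x ≤ nseq e k x := (nseq_mono e hx).monotone h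

lemma blo_lt (e : Λ ≃ ℕ) {x : ℤ → Λ} (hx : x ∈ DeficientSet Λ) (k : ℕ) :
    blo e x k < nseq e (k + 1) x := by
  unfold blo
  split
  · have h1 := nseq_ge e x 1
    have h2 := nseq_mono' e hx (show 1 ≤ k + 1 by omega)
    omega
  · exact nseq_lt_succ e hx k

lemma blockSet_nonempty (e : Λ ≃ ℕ) {x : ℤ → Λ} (hx : x ∈ DeficientSet Λ) (k : ℕ) :
    (blockSet e x k).Nonempty := by
  refine ⟨e.symm (blo e x k), ?_⟩
  unfold blockSet
  refine Finset.mem_image.2 ⟨blo e x k, ?_, rfl⟩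
  rw [Finset.mem_Ico]
  exact ⟨le_refl _, blo_lt e hx k⟩

lemma bIdx_eq_of_block (e : Λ ≃ ℕ) {x : ℤ → Λ} (hx : x ∈ DeficientSet Λ) {k m : ℕ}
    (h1 : blo e x k ≤ m) (h2 : m < nseq e (k + 1) x) : bIdx e x m = k := by
  unfold bIdx
  rcases Nat.eq_zero_or_pos k with rfl | hk
  · have h2' : m < nseq e 1 x := by simpa using h2
    apply Finset.sum_eq_zero
    intro j hj
    rw [Finset.mem_Icc] at hj
    have : nseq e 1 x ≤ nseq e j x := nseq_mono' e hx hj.1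
    have : ¬ nseq e j x ≤ m := by omega
    simp [this]
  · have hkm : k ≤ m := by
      have := nseq_ge e x k
      have : nseq e k x ≤ m := by unfold blo at h1; simp [Nat.pos_iff_ne_zero.1 hk] at h1; omega
      omega
    have key : ∀ j ∈ Finset.Icc 1 m,
        ((if nseq e j x ≤ m then (1:ℕ) else 0) = if j ≤ k then 1 else 0) := by
      intro j hj
      rw [Finset.mem_Icc] at hj
      congr 1
      apply propext
      constructor
      · intro hle
        by_contra hgt
        have : nseq e (k+1) x ≤ nseq e j x := nseq_mono' e hx (by omega)
        omega
      · intro hle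
        have : nseq e j x ≤ nseq e k x := nseq_mono' e hx hle
        have : nseq e k x ≤ m := by unfold blo at h1; simp [Nat.pos_iff_ne_zero.1 hk] at h1; omega
        omega
    rw [Finset.sum_congr rfl key]
    have : ∀ j ∈ Finset.Icc 1 m, ((if j ≤ k then (1:ℕ) else 0) =
        if j ∈ Finset.Icc 1 k then 1 else 0) := by
      intro j hj
      rw [Finset.mem_Icc] at hj
      by_cases h : j ≤ k
      · simp [h, Finset.mem_Icc, hj.1]
      · simp [h, Finset.mem_Icc]
    rw [Finset.sum_congr rfl this, Finset.sum_ite_mem,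
      Finset.inter_eq_right.2 (by intro j hj; rw [Finset.mem_Icc] at *; omega)]
    simp

lemma exists_block (e : Λ ≃ ℕ) {x : ℤ → Λ} (hx : x ∈ DeficientSet Λ) (m : ℕ) :
    ∃ k, blo e x k ≤ m ∧ m < nseq e (k + 1) x := by
  by_cases h0 : m < nseq e 1 x
  · exact ⟨0, by unfold blo; simp, by simpa using h0⟩
  · push_neg at h0
    have h1m : 1 ≤ m := le_trans (nseq_ge e x 1) h0
    have hPk : nseq e (Nat.findGreatest (fun j => nseq e j x ≤ m) m) x ≤ m :=
      Nat.findGreatest_spec (P := fun j => nseq e j x ≤ m) h1m h0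
    have hk1 : 1 ≤ Nat.findGreatest (fun j => nseq e j x ≤ m) m :=
      Nat.le_findGreatest (P := fun j => nseq e j x ≤ m) h1m h0
    refine ⟨Nat.findGreatest (fun j => nseq e j x ≤ m) m, ?_, ?_⟩
    · unfold blo; simp only [show Nat.findGreatest (fun j => nseq e j x ≤ m) m ≠ 0 by omega,
        if_false]; exact hPk
    · by_contra hc
      push_neg at hc
      have hkm : Nat.findGreatest (fun j => nseq e j x ≤ m) m + 1 ≤ m :=
        le_trans (nseq_ge e x _) hc
      exact Nat.findGreatest_is_greatest (P := fun j => nseq e j x ≤ m)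
        (lt_add_one _) hkm hc

lemma bIdx_eq_iff (e : Λ ≃ ℕ) {x : ℤ → Λ} (hx : x ∈ DeficientSet Λ) (m k : ℕ) :
    bIdx e x m = k ↔ (blo e x k ≤ m ∧ m < nseq e (k + 1) x) := by
  constructor
  · intro h
    obtain ⟨k', h1, h2⟩ := exists_block e hx m
    have := bIdx_eq_of_block e hx h1 h2
    rw [this] at h
    subst h
    exact ⟨h1, h2⟩
  · rintro ⟨h1, h2⟩
    exact bIdx_eq_of_block e hx h1 h2

lemma mem_blockSet_iff (e : Λ ≃ ℕ) {x : ℤ → Λ} (hx : x ∈ DeficientSet Λ) (a : Λ) (k : ℕ) :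
    a ∈ blockSet e x k ↔ bIdx e x (e a) = k := by
  rw [bIdx_eq_iff e hx]
  unfold blockSet
  rw [Finset.mem_image]
  constructor
  · rintro ⟨m, hm, rfl⟩
    rw [Finset.mem_Ico] at hm
    simpa using hm
  · intro h
    exact ⟨e a, by rw [Finset.mem_Ico]; exact h, by simp⟩

end Blocks

section Shift

variable {Λ : Type*}

lemma tendsto_wordFreq_shift {x : ℤ → Λ} (hx : x ∈ DeficientSet Λ) (a : Λ) :
    Tendsto (wordFreq (shift x) [a]) atTop (nhds (symFreq x a)) := by
  set v : ℕ → ℝ := fun i => if x (i : ℤ) = a then 1 else 0 with hv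
  have hv01 : ∀ i, v i = 0 ∨ v i = 1 := by
    intro i
    by_cases h : x (i : ℤ) = a
    · right; simp [hv, h]
    · left; simp [hv, h]
  have key : ∀ N : ℕ, wordFreq (shift x) [a] N = wordFreq x [a] N + (v N - v 0) / N := by
    intro N
    rw [wordFreq_singleton, wordFreq_singleton]
    have h1 : ∀ i : ℕ, (if shift x (i : ℤ) = a then (1:ℝ) else 0) = v (i + 1) := by
      intro i
      have hc : ((i : ℤ) + 1) = ((i + 1 : ℕ) : ℤ) := by push_cast; ring
      simp only [hv, shift, hc]
    rw [Finset.sum_congr rfl fun i _ => h1 i]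
    have h2 : ∑ i ∈ Finset.range N, v (i + 1) = (∑ i ∈ Finset.range N, v i) + v N - v 0 := by
      have := Finset.sum_range_succ' v N
      rw [Finset.sum_range_succ] at this
      linarith
    rw [h2]
    ring
  rw [show (wordFreq (shift x) [a]) = fun N => wordFreq x [a] N + (v N - v 0) / N
    from funext key]
  have herr : Tendsto (fun N : ℕ => (v N - v 0) / N) atTop (nhds 0) := by
    apply squeeze_zero_norm ?_ (tendsto_const_div_atTop_nhds_zero_nat 2)
    intro N
    rw [Real.norm_eq_abs, abs_div,
      abs_of_nonneg (show (0:ℝ) ≤ (N:ℝ) from Nat.cast_nonneg N)]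
    apply div_le_div_of_nonneg_right ?_ (Nat.cast_nonneg N)
    rcases hv01 N with h | h <;> rcases hv01 0 with h' | h' <;> rw [h, h'] <;> norm_num
  have := (tendsto_wordFreq_symFreq hx a).add herr
  simpa using this

end Shift
section Image

variable {Λ : Type*}

lemma sig_shift {x : ℤ → Λ} (hx : x ∈ DeficientSet Λ) : sig (shift x) = sig x := by
  funext a
  have h := tendsto_wordFreq_shift hx a
  have h2 : Tendsto (fun N => ENNReal.ofReal (wordFreq (shift x) [a] N)) atTop
      (nhds (ENNReal.ofReal (symFreq x a))) := (ENNReal.continuous_ofReal.tendsto _).comp h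
  have h3 : sig (shift x) a = ENNReal.ofReal (symFreq x a) := h2.limsup_eq
  rw [h3, sig_eq_ofReal hx a]

lemma pimap_shift (e : Λ ≃ ℕ) {x : ℤ → Λ} (hx : x ∈ DeficientSet Λ) :
    pimap e (shift x) = shift (pimap e x) := by
  have hsig := sig_shift hx
  have ht : tailS e (shift x) = tailS e x := by
    funext n; unfold tailS; rw [hsig]
  have hn : ∀ k, nseq e k (shift x) = nseq e k x := by
    intro k; unfold nseq; rw [ht]
  have hb : ∀ m, bIdx e (shift x) m = bIdx e x m := by
    intro m; unfold bIdx; exact Finset.sum_congr rfl fun j _ => by rw [hn]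
  funext i
  show bIdx e (shift x) (e (shift x i)) = bIdx e x (e (x (i + 1)))
  rw [hb]
  rfl

/-- The symbol frequencies of the image point. -/
noncomputable def tfreq (e : Λ ≃ ℕ) (x : ℤ → Λ) (k : ℕ) : ℝ :=
  ∑ a ∈ blockSet e x k, symFreq x a

lemma wordFreq_pimap_singleton (e : Λ ≃ ℕ) {x : ℤ → Λ} (hx : x ∈ DeficientSet Λ)
    (k : ℕ) (N : ℕ) :
    wordFreq (pimap e x) [k] N = ∑ a ∈ blockSet e x k, wordFreq x [a] N := by
  rw [wordFreq_singleton]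
  rw [Finset.sum_congr rfl (fun a _ => wordFreq_singleton x a N)]
  rw [← Finset.sum_div]
  congr 1
  rw [Finset.sum_comm]
  apply Finset.sum_congr rfl
  intro i _
  rw [Finset.sum_ite_eq (blockSet e x k) (x (i : ℤ)) (fun _ => (1 : ℝ))]
  have hmem : (x (i : ℤ)) ∈ blockSet e x k ↔ pimap e x (i : ℤ) = k :=
    mem_blockSet_iff e hx _ k
  by_cases h : pimap e x (i : ℤ) = k
  · rw [if_pos h, if_pos (hmem.2 h)]
  · rw [if_neg h, if_neg (fun hm => h (hmem.1 hm))]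

lemma tendsto_wordFreq_pimap (e : Λ ≃ ℕ) {x : ℤ → Λ} (hx : x ∈ DeficientSet Λ) (k : ℕ) :
    Tendsto (wordFreq (pimap e x) [k]) atTop (nhds (tfreq e x k)) := by
  have : wordFreq (pimap e x) [k] = fun N => ∑ a ∈ blockSet e x k, wordFreq x [a] N :=
    funext (wordFreq_pimap_singleton e hx k)
  rw [this]
  exact tendsto_finset_sum _ fun a _ => tendsto_wordFreq_symFreq hx a

lemma tfreq_pos (e : Λ ≃ ℕ) {x : ℤ → Λ} (hx : x ∈ DeficientSet Λ) (k : ℕ) :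
    0 < tfreq e x k :=
  Finset.sum_pos (fun a _ => symFreq_pos hx a) (blockSet_nonempty e hx k)

lemma symFreq_pimap (e : Λ ≃ ℕ) {x : ℤ → Λ} (hx : x ∈ DeficientSet Λ) (k : ℕ) :
    symFreq (pimap e x) k = tfreq e x k :=
  (tendsto_wordFreq_pimap e hx k).limUnder_eq

lemma tfreq_eq_sum_sprime (e : Λ ≃ ℕ) {x : ℤ → Λ} (k : ℕ) :
    tfreq e x k = ∑ m ∈ Finset.Ico (blo e x k) (nseq e (k + 1) x), sprime e x m := by
  unfold tfreq blockSet
  rw [Finset.sum_image (fun m _ m' _ h => e.symm.injective h)]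
  rfl

lemma partial_sum_tfreq (e : Λ ≃ ℕ) {x : ℤ → Λ} (hx : x ∈ DeficientSet Λ) (K : ℕ) :
    ∑ k ∈ Finset.range (K + 1), tfreq e x k =
      ∑ m ∈ Finset.range (nseq e (K + 1) x), sprime e x m := by
  induction K with
  | zero =>
    rw [Finset.sum_range_one, tfreq_eq_sum_sprime e]
    unfold blo
    rw [if_pos rfl, Finset.range_eq_Ico]
  | succ K ih =>
    rw [Finset.sum_range_succ, ih, tfreq_eq_sum_sprime e]
    unfold blo
    rw [if_neg (by omega)]
    simp only [Finset.range_eq_Ico]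
    exact Finset.sum_Ico_consecutive _ (Nat.zero_le _)
      (nseq_mono' e hx (by omega))

lemma hasSum_tfreq (e : Λ ≃ ℕ) {x : ℤ → Λ} (hx : x ∈ DeficientSet Λ) {c : ℝ}
    (hc : HasSum (fun a => symFreq x a) c) : HasSum (tfreq e x) c := by
  rw [hasSum_iff_tendsto_nat_of_nonneg (fun k => (tfreq_pos e hx k).le)]
  have h1 : Tendsto (fun K : ℕ => ∑ m ∈ Finset.range (nseq e (K + 1) x), sprime e x m)
      atTop (nhds c) := by
    refine (hasSum_sprime e hc).tendsto_sum_nat.comp ?_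
    apply tendsto_atTop_mono (fun K => le_trans (by omega : K ≤ K + 1) (nseq_ge e x (K + 1)))
    exact tendsto_id
  have h2 : Tendsto (fun K : ℕ => ∑ k ∈ Finset.range (K + 1), tfreq e x k) atTop (nhds c) := by
    have := funext (partial_sum_tfreq e hx)
    rw [show (fun K : ℕ => ∑ k ∈ Finset.range (K + 1), tfreq e x k) =
      (fun K : ℕ => ∑ m ∈ Finset.range (nseq e (K + 1) x), sprime e x m) from this]
    exact h1
  exact (tendsto_add_atTop_iff_nat 1).1 h2

lemma pimap_deficient (e : Λ ≃ ℕ) {x : ℤ → Λ} (hx : x ∈ DeficientSet Λ) :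
    pimap e x ∈ DeficientSet ℕ := by
  obtain ⟨c, hc, hc1⟩ := hx.2
  constructor
  · intro k
    exact ⟨tfreq e x k, tfreq_pos e hx k, tendsto_wordFreq_pimap e hx k⟩
  · refine ⟨c, ?_, hc1⟩
    have h := hasSum_tfreq e hx hc
    have : (fun k : ℕ => symFreq (pimap e x) k) = tfreq e x :=
      funext fun k => symFreq_pimap e hx k
    rw [this]
    exact h

lemma tfreq_succ_le (e : Λ ≃ ℕ) {x : ℤ → Λ} (hx : x ∈ DeficientSet Λ) (k : ℕ) :
    tfreq e x (k + 1) ≤ (1 / 16 : ℝ) ^ (k + 3) := by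
  rw [tfreq_eq_sum_sprime e]
  unfold blo
  rw [if_neg (by omega)]
  rw [Finset.sum_Ico_eq_sum_range]
  have hle : ∑ j ∈ Finset.range (nseq e (k + 2) x - nseq e (k + 1) x),
      sprime e x (nseq e (k + 1) x + j) ≤ rtail e x (nseq e (k + 1) x) := by
    unfold rtail
    have hsum : Summable (fun m => sprime e x (m + nseq e (k + 1) x)) :=
      (summable_nat_add_iff _).2 (summable_sprime e hx)
    have := Summable.sum_le_tsum (Finset.range (nseq e (k + 2) x - nseq e (k + 1) x))
      (fun m _ => (symFreq_pos hx _).le) hsum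
    refine le_trans ?_ this
    apply le_of_eq
    refine Finset.sum_congr rfl fun j _ => ?_
    rw [Nat.add_comm (nseq e (k + 1) x) j]
    rfl
  refine le_trans hle ?_
  have := rtail_nseq_lt e hx (k + 1)
  have heq : (k + 1) + 2 = k + 3 := by omega
  rw [heq] at this
  exact this.le

lemma occursAt_ofFn {n : ℕ} (x : ℤ → Λ) (f : Fin n → Λ) (i : ℤ) :
    OccursAt x (List.ofFn f) i ↔ ∀ j : Fin n, x (i + ((j : ℕ) : ℤ)) = f j := by
  unfold OccursAt
  constructor
  · intro h j
    have := h (Fin.cast (List.length_ofFn (f := f)).symm j)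
    simpa [List.get_ofFn] using this
  · intro h j
    have := h (Fin.cast (List.length_ofFn (f := f)) j)
    simpa [List.get_ofFn, Fin.cast] using this

lemma indicator_word (e : Λ ≃ ℕ) {x : ℤ → Λ} (hx : x ∈ DeficientSet Λ) (b : List ℕ) (i : ℤ) :
    (if OccursAt (pimap e x) b i then (1 : ℝ) else 0) =
    ∑ f ∈ Fintype.piFinset (fun j : Fin b.length => blockSet e x (b.get j)),
      (if OccursAt x (List.ofFn f) i then (1 : ℝ) else 0) := by
  have h1 : ∀ f : Fin b.length → Λ,
      (OccursAt x (List.ofFn f) i ↔ f = fun j : Fin b.length => x (i + ((j : ℕ) : ℤ))) := by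
    intro f
    rw [occursAt_ofFn]
    constructor
    · intro h; funext j; exact (h j).symm
    · intro h j; rw [h]
  rw [Finset.sum_congr rfl (fun f _ => by rw [if_congr (h1 f) rfl rfl])]
  rw [Finset.sum_ite_eq' (Fintype.piFinset (fun j : Fin b.length => blockSet e x (b.get j)))
    (fun j : Fin b.length => x (i + ((j : ℕ) : ℤ))) (fun _ => (1 : ℝ))]
  refine if_congr ?_ rfl rfl
  rw [Fintype.mem_piFinset]
  unfold OccursAt
  constructor
  · intro h j
    rw [mem_blockSet_iff e hx]
    exact h j
  · intro h j
    exact (mem_blockSet_iff e hx _ _).1 (h j)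

lemma wordFreq_pimap (e : Λ ≃ ℕ) {x : ℤ → Λ} (hx : x ∈ DeficientSet Λ) (b : List ℕ) (N : ℕ) :
    wordFreq (pimap e x) b N =
    ∑ f ∈ Fintype.piFinset (fun j : Fin b.length => blockSet e x (b.get j)),
      wordFreq x (List.ofFn f) N := by
  unfold wordFreq
  rw [show (∑ i ∈ Finset.range N, if OccursAt (pimap e x) b (i : ℤ) then (1 : ℝ) else 0)
      = ∑ i ∈ Finset.range N,
          ∑ f ∈ Fintype.piFinset (fun j : Fin b.length => blockSet e x (b.get j)),
            (if OccursAt x (List.ofFn f) (i : ℤ) then (1 : ℝ) else 0)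
    from Finset.sum_congr rfl fun i _ => indicator_word e hx b i]
  rw [Finset.sum_comm, Finset.sum_div]

lemma regular_pimap (e : Λ ≃ ℕ) {x : ℤ → Λ} (hx : x ∈ DeficientSet Λ)
    (hreg : Regular x) : Regular (pimap e x) := by
  intro b
  refine ⟨∑ f ∈ Fintype.piFinset (fun j : Fin b.length => blockSet e x (b.get j)),
    Classical.choose (hreg (List.ofFn f)), ?_⟩
  have : wordFreq (pimap e x) b =
      fun N => ∑ f ∈ Fintype.piFinset (fun j : Fin b.length => blockSet e x (b.get j)),
        wordFreq x (List.ofFn f) N := funext (wordFreq_pimap e hx b)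
  rw [this]
  exact tendsto_finset_sum _ fun f _ => Classical.choose_spec (hreg (List.ofFn f))

end Image
section Entropy

variable {Λ : Type*}

lemma neg_mul_log_le_inv_e {t : ℝ} (h0 : 0 < t) : -(t * Real.log t) ≤ (Real.exp 1)⁻¹ := by
  have he : (0 : ℝ) < Real.exp 1 := Real.exp_pos 1
  have h := Real.log_le_sub_one_of_pos (show 0 < (Real.exp 1 * t)⁻¹ by positivity)
  rw [Real.log_inv, Real.log_mul (ne_of_gt he) (ne_of_gt h0), Real.log_exp] at h
  have h2 : -Real.log t ≤ (Real.exp 1 * t)⁻¹ := by linarith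
  have h3 : t * -Real.log t ≤ t * (Real.exp 1 * t)⁻¹ := mul_le_mul_of_nonneg_left h2 h0.le
  have h4 : t * (Real.exp 1 * t)⁻¹ = (Real.exp 1)⁻¹ := by field_simp
  linarith [h3, h4.symm.le]

lemma entropy_term_le {t : ℝ} (h0 : 0 < t) (h1 : t ≤ 1) : -(t * Real.logb 2 t) ≤ 0.6 := by
  unfold Real.logb
  have hl2 : (0.6931471803 : ℝ) < Real.log 2 := Real.log_two_gt_d9
  have he : (2.7182818283 : ℝ) < Real.exp 1 := Real.exp_one_gt_d9
  have h := neg_mul_log_le_inv_e h0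
  have hrw : -(t * (Real.log t / Real.log 2)) = -(t * Real.log t) / Real.log 2 := by ring
  rw [hrw, div_le_iff₀ (by linarith)]
  have hid : (Real.exp 1)⁻¹ * Real.exp 1 = 1 := inv_mul_cancel₀ (ne_of_gt (Real.exp_pos 1))
  have hipos : 0 < (Real.exp 1)⁻¹ := by positivity
  nlinarith [hid, hipos, he, hl2, h]

lemma entropy_term_le_sqrt {t : ℝ} (h0 : 0 ≤ t) (h1 : t ≤ 1) :
    -(t * Real.logb 2 t) ≤ 3 * Real.sqrt t := by
  rcases eq_or_lt_of_le h0 with h | ht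
  · rw [← h]; simp
  · have hst : 0 < Real.sqrt t := Real.sqrt_pos.2 ht
    have hlog : -Real.log t ≤ 2 / Real.sqrt t := by
      have h := Real.log_le_sub_one_of_pos (show 0 < (Real.sqrt t)⁻¹ by positivity)
      rw [Real.log_inv, Real.log_sqrt ht.le] at h
      rw [div_eq_mul_inv]
      linarith
    have h3 : t * -Real.log t ≤ t * (2 / Real.sqrt t) := mul_le_mul_of_nonneg_left hlog ht.le
    have h4 : t * (2 / Real.sqrt t) = 2 * Real.sqrt t := by
      rw [mul_comm t (2 / Real.sqrt t), div_mul_eq_mul_div, mul_div_assoc, Real.div_sqrt]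
    have hle : -(t * Real.log t) ≤ 2 * Real.sqrt t := by nlinarith [h3, h4]
    unfold Real.logb
    have hl2 : (0.6931471803 : ℝ) < Real.log 2 := Real.log_two_gt_d9
    have hrw : -(t * (Real.log t / Real.log 2)) = -(t * Real.log t) / Real.log 2 := by ring
    rw [hrw, div_le_iff₀ (by linarith)]
    nlinarith [hle, mul_nonneg hst.le (show (0:ℝ) ≤ 3 * Real.log 2 - 2 by linarith)]

lemma htilde_pimap_lt_two (e : Λ ≃ ℕ) {x : ℤ → Λ} (hx : x ∈ DeficientSet Λ) :
    Htilde (pimap e x) < 2 := by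
  obtain ⟨c, hc, hc1⟩ := hx.2
  have hts := hasSum_tfreq e hx hc
  have hrho : rho (pimap e x) = c := by
    unfold rho
    rw [show (fun k : ℕ => symFreq (pimap e x) k) = tfreq e x from
      funext (symFreq_pimap e hx)]
    exact hts.tsum_eq
  have htk_le : ∀ k, tfreq e x k ≤ c := fun k =>
    le_hasSum hts k fun j _ => (tfreq_pos e hx j).le
  have hc0 : 0 < c := lt_of_lt_of_le (tfreq_pos e hx 0) (htk_le 0)
  have hsym : ∀ k, symFreq (pimap e x) k = tfreq e x k := symFreq_pimap e hx
  unfold Htilde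
  set g : ℕ → ℝ := fun k => -(symFreq (pimap e x) k * Real.logb 2 (symFreq (pimap e x) k))
    with hg
  have hgnn : ∀ k, 0 ≤ g k := by
    intro k
    rw [hg]
    dsimp only
    rw [hsym k]
    have h1 := tfreq_pos e hx k
    have h2 : tfreq e x k ≤ 1 := le_trans (htk_le k) hc1.le
    have hlb : Real.logb 2 (tfreq e x k) ≤ 0 := Real.logb_nonpos (by norm_num) h1.le h2
    nlinarith
  set bnd : ℕ → ℝ := fun k => if k = 0 then (0.6 : ℝ) else 3 * (1/4 : ℝ) ^ (k + 2) with hbnd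
  have hbnd_succ : ∀ k : ℕ, bnd (k + 1) = (3 * (1/64 : ℝ)) * (1/4 : ℝ) ^ k := by
    intro k
    rw [hbnd]
    simp only [Nat.succ_ne_zero, if_false]
    rw [show k + 1 + 2 = k + 3 by omega, show k + 3 = 3 + k by omega, pow_add]
    norm_num
    ring
  have hgb : ∀ k, g k ≤ bnd k := by
    intro k
    rw [hg]
    dsimp only
    rw [hsym k]
    cases k with
    | zero =>
      have h40 : bnd 0 = 0.6 := by rw [hbnd]; norm_num
      rw [h40]
      exact entropy_term_le (tfreq_pos e hx 0) (le_trans (htk_le 0) hc1.le)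
    | succ k =>
      have h1 : tfreq e x (k + 1) ≤ (1/16 : ℝ) ^ (k + 3) := by
        have := tfreq_succ_le e hx k
        convert this using 2
      have h2 := entropy_term_le_sqrt (tfreq_pos e hx (k + 1)).le
        (le_trans (htk_le (k + 1)) hc1.le)
      have hpow : ((1/16 : ℝ)) ^ (k + 3) = ((1/4 : ℝ) ^ (k + 3)) ^ 2 := by
        rw [show (1/16 : ℝ) = (1/4 : ℝ) ^ 2 by norm_num, ← pow_mul, ← pow_mul, Nat.mul_comm]
      have h3 : Real.sqrt (tfreq e x (k + 1)) ≤ (1/4 : ℝ) ^ (k + 3) := by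
        calc Real.sqrt (tfreq e x (k + 1)) ≤ Real.sqrt (((1/4 : ℝ) ^ (k + 3)) ^ 2) :=
              Real.sqrt_le_sqrt (by rw [← hpow]; exact h1)
          _ = (1/4 : ℝ) ^ (k + 3) := Real.sqrt_sq (by positivity)
      have h4 : bnd (k + 1) = 3 * (1/4 : ℝ) ^ (k + 3) := by
        rw [hbnd_succ k, show k + 3 = 3 + k by omega, pow_add]
        norm_num
        ring
      rw [h4]
      linarith
  have hbs1 : Summable (fun k : ℕ => bnd (k + 1)) := by
    rw [show (fun k : ℕ => bnd (k + 1)) = fun k : ℕ => (3 * (1/64 : ℝ)) * (1/4 : ℝ) ^ k from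
      funext hbnd_succ]
    exact (summable_geometric_of_lt_one (by norm_num) (by norm_num)).mul_left _
  have hbs : Summable bnd := (summable_nat_add_iff 1).1 hbs1
  have hgs : Summable g := Summable.of_nonneg_of_le hgnn hgb hbs
  have hsum_bnd : ∑' k, bnd k ≤ 0.6625 := by
    rw [Summable.tsum_eq_zero_add hbs]
    have h0 : bnd 0 = 0.6 := by rw [hbnd]; norm_num
    have h1 : ∑' k : ℕ, bnd (k + 1) = 1/16 := by
      rw [show (fun k : ℕ => bnd (k + 1)) = fun k : ℕ => (3 * (1/64 : ℝ)) * (1/4 : ℝ) ^ k from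
        funext hbnd_succ]
      rw [tsum_mul_left, tsum_geometric_of_lt_one (by norm_num) (by norm_num)]
      norm_num
    rw [h0, h1]
    norm_num
  have hterm2 : ∑' k, ENNReal.ofReal (g k) ≤ ENNReal.ofReal 0.6625 := by
    rw [← ENNReal.ofReal_tsum_of_nonneg hgnn hgs]
    exact ENNReal.ofReal_le_ofReal (le_trans (Summable.tsum_le_tsum hgb hgs hbs) hsum_bnd)
  have hterm1 : ENNReal.ofReal (-((1 - rho (pimap e x)) * Real.logb 2 (1 - rho (pimap e x))))
      ≤ ENNReal.ofReal 0.6 := by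
    apply ENNReal.ofReal_le_ofReal
    exact entropy_term_le (by rw [hrho]; linarith) (by rw [hrho]; linarith)
  calc ENNReal.ofReal (-((1 - rho (pimap e x)) * Real.logb 2 (1 - rho (pimap e x)))) +
        ∑' k, ENNReal.ofReal (g k)
      ≤ ENNReal.ofReal 0.6 + ENNReal.ofReal 0.6625 := add_le_add hterm1 hterm2
    _ = ENNReal.ofReal 1.2625 := by
        rw [← ENNReal.ofReal_add (by norm_num) (by norm_num)]
        norm_num
    _ < 2 := by
        rw [show (2 : ℝ≥0∞) = ENNReal.ofReal 2 by simp]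
        exact (ENNReal.ofReal_lt_ofReal_iff (by norm_num)).2 (by norm_num)

end Entropy

section FiniteCase

variable {Λ : Type*}

lemma deficient_empty_of_finite [Finite Λ] (x : ℤ → Λ) (hx : x ∈ DeficientSet Λ) : False := by
  cases nonempty_fintype Λ
  obtain ⟨c, hc, hc1⟩ := hx.2
  have hkey : ∀ N : ℕ, 1 ≤ N → ∑ a : Λ, wordFreq x [a] N = 1 := by
    intro N hN
    calc ∑ a : Λ, wordFreq x [a] N
        = ∑ a : Λ, (∑ i ∈ Finset.range N, if x (i : ℤ) = a then (1 : ℝ) else 0) / N :=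
          Finset.sum_congr rfl fun a _ => wordFreq_singleton x a N
      _ = (∑ i ∈ Finset.range N, ∑ a : Λ, if x (i : ℤ) = a then (1 : ℝ) else 0) / N := by
          rw [← Finset.sum_div, Finset.sum_comm]
      _ = (∑ _i ∈ Finset.range N, (1 : ℝ)) / N := by
          congr 1
          refine Finset.sum_congr rfl fun i _ => ?_
          rw [Finset.sum_ite_eq Finset.univ (x (i : ℤ)) (fun _ => (1 : ℝ))]
          simp
      _ = 1 := by
          rw [Finset.sum_const, Finset.card_range, nsmul_eq_mul, mul_one]
          have : (N : ℝ) ≠ 0 := by positivity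
          field_simp
  have h1 : Tendsto (fun N => ∑ a : Λ, wordFreq x [a] N) atTop (nhds (∑ a : Λ, symFreq x a)) :=
    tendsto_finset_sum _ fun a _ => tendsto_wordFreq_symFreq hx a
  have h2 : Tendsto (fun N => ∑ a : Λ, wordFreq x [a] N) atTop (nhds 1) := by
    apply Tendsto.congr' ?_ tendsto_const_nhds
    filter_upwards [eventually_ge_atTop 1] with N hN
    exact (hkey N hN).symm
  have h3 : ∑ a : Λ, symFreq x a = 1 := tendsto_nhds_unique h1 h2
  have h4 : c = ∑ a : Λ, symFreq x a := hc.unique (hasSum_fintype _)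
  rw [h3] at h4
  linarith

end FiniteCase
end ReduceEntropy

/-- **Reducing the entropy.** There is a factor map `π : Deficient(Λ^ℤ) → ℕ^ℤ` with image
contained in `Deficient(ℕ^ℤ)`, such that `H̃(π(x)) < 2` for every deficient `x`, and `π`
maps regular points to regular points. -/
theorem reduce_entropy {Λ : Type*} [Countable Λ]
    [MeasurableSpace Λ] [DiscreteMeasurableSpace Λ] :
    ∃ π : (ℤ → Λ) → (ℤ → ℕ),
      Measurable π ∧
      (∀ x ∈ DeficientSet Λ, π (shift x) = shift (π x)) ∧
      (∀ x ∈ DeficientSet Λ, π x ∈ DeficientSet ℕ) ∧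
      (∀ x ∈ DeficientSet Λ, Htilde (π x) < 2) ∧
      (∀ x ∈ DeficientSet Λ, Regular x → Regular (π x)) := by
  cases finite_or_infinite Λ with
  | inl hfin =>
    refine ⟨fun _ _ => 0, measurable_const, ?_, ?_, ?_, ?_⟩
    · intro x hx; exact (ReduceEntropy.deficient_empty_of_finite x hx).elim
    · intro x hx; exact (ReduceEntropy.deficient_empty_of_finite x hx).elim
    · intro x hx; exact (ReduceEntropy.deficient_empty_of_finite x hx).elim
    · intro x hx; exact (ReduceEntropy.deficient_empty_of_finite x hx).elim
  | inr hinf =>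
    obtain ⟨d⟩ := nonempty_denumerable Λ
    let e : Λ ≃ ℕ := Denumerable.eqv Λ
    exact ⟨ReduceEntropy.pimap e, ReduceEntropy.measurable_pimap e,
      fun x hx => ReduceEntropy.pimap_shift e hx,
      fun x hx => ReduceEntropy.pimap_deficient e hx,
      fun x hx => ReduceEntropy.htilde_pimap_lt_two e hx,
      fun x hx hr => ReduceEntropy.regular_pimap e hx hr⟩
end

section
/- Let (X, 𝓑, T) be a Borel system and x ↦ F_x an allocation. Then there exists a Borel equivariant map π : X → {0,1}^ℤ (with π(Tx) = S(π(x)) for the shift S) such that the join of the σ-algebra σ(π) generated by π and the σ-algebra σ(F) generated by x ↦ F_x equals 𝓑: σ(π) ∨ σ(F) = 𝓑. -/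
private lemma measurable_decide_aux {X : Type*} [MeasurableSpace X] {P : X → Prop}
    [DecidablePred P] (h : MeasurableSet {x | P x}) : Measurable fun x => decide (P x) := by
  have : (fun x => decide (P x)) = Set.piecewise {x | P x} (fun _ => true) (fun _ => false) := by
    funext x; by_cases hx : P x <;> simp [Set.piecewise, hx]
  rw [this]; exact Measurable.piecewise h measurable_const measurable_const

private lemma measurable_zpow_aux {X : Type*} [MeasurableSpace X] (T : Equiv.Perm X)
    (hT : Measurable T) (hTinv : Measurable T.symm) : ∀ i : ℤ, Measurable ⇑(T ^ i) := by
  intro i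
  induction i using Int.induction_on with
  | zero => simpa using measurable_id
  | succ k ih =>
      have : (T ^ ((k : ℤ) + 1)) = T ^ (k : ℤ) * T := zpow_add_one T k
      rw [this]
      exact ih.comp hT
  | pred k ih =>
      have : (T ^ (-(k : ℤ) - 1)) = T ^ (-(k : ℤ)) * T⁻¹ := by
        rw [← zpow_neg_one, ← zpow_add]; ring_nf
      rw [this]
      exact ih.comp hTinv

/-- **Generators from allocations.** Let `(X,𝓑,T)` be a Borel system and `x ↦ F_x` an
allocation (a Borel, equivariant assignment of injections `ℤ×ℕ → ℤ`). Then there is a Borel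
equivariant map `π : X → {0,1}^ℤ` such that `σ(π) ∨ σ(F) = 𝓑`. -/
theorem allocation_gives_generator {X : Type*} [MeasurableSpace X] [StandardBorelSpace X]
    (T : Equiv.Perm X) (hT : Measurable T) (hTinv : Measurable T.symm)
    (F : X → (ℤ × ℕ → ℤ)) (hFmeas : Measurable F)
    (hFinj : ∀ x, Function.Injective (F x))
    (hFequiv : ∀ (x : X) (i : ℤ) (j : ℕ), F (T x) (i, j) = F x (i + 1, j) - 1) :
    ∃ π : X → (ℤ → Bool),
      Measurable π ∧
      (∀ x : X, π (T x) = fun i => π x (i + 1)) ∧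
      MeasurableSpace.comap π inferInstance ⊔ MeasurableSpace.comap F inferInstance
        = ‹MeasurableSpace X› := by
  classical
  -- embed X into ℝ, then into Cantor space via rational cuts
  obtain ⟨e, he⟩ := MeasureTheory.exists_measurableEmbedding_real X
  obtain ⟨q, hqsurj⟩ : ∃ q : ℕ → ℚ, Function.Surjective q := exists_surjective_nat ℚ
  set g : X → ℕ → Bool := fun x n => decide ((q n : ℝ) < e x) with hgdef
  have hg_meas : Measurable g := by
    apply measurable_pi_lambda
    intro n
    exact measurable_decide_aux (measurableSet_lt measurable_const he.measurable)
  have hg_inj : Function.Injective g := by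
    intro x y hxy
    by_contra hne
    have hexy : e x ≠ e y := fun h => hne (he.injective h)
    rcases lt_or_gt_of_ne hexy with h | h
    · obtain ⟨r, hr1, hr2⟩ := exists_rat_btwn h
      obtain ⟨n, hn⟩ := hqsurj r
      have := congrFun hxy n
      simp only [hgdef, decide_eq_decide] at this
      rw [hn] at this
      exact absurd (this.mpr hr2) (not_lt.mpr hr1.le)
    · obtain ⟨r, hr1, hr2⟩ := exists_rat_btwn h
      obtain ⟨n, hn⟩ := hqsurj r
      have := congrFun hxy n
      simp only [hgdef, decide_eq_decide] at this
      rw [hn] at this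
      exact absurd (this.mp hr2) (not_lt.mpr hr1.le)
  have hzpow := measurable_zpow_aux T hT hTinv
  -- the generator
  set π : X → ℤ → Bool := fun x n =>
    decide (∃ p : ℤ × ℕ, F x p = n ∧ g ((T ^ p.1) x) p.2 = true) with hπdef
  have hπ_meas : Measurable π := by
    apply measurable_pi_lambda
    intro n
    apply measurable_decide_aux
    have : {x | ∃ p : ℤ × ℕ, F x p = n ∧ g ((T ^ p.1) x) p.2 = true}
        = ⋃ p : ℤ × ℕ, ({x | F x p = n} ∩ {x | g ((T ^ p.1) x) p.2 = true}) := by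
      ext x; simp [Set.mem_iUnion, Set.mem_inter_iff]
    rw [this]
    apply MeasurableSet.iUnion
    intro p
    refine MeasurableSet.inter ?_ ?_
    · exact ((measurable_pi_apply p).comp hFmeas) (measurableSet_singleton n)
    · exact ((measurable_pi_apply p.2).comp (hg_meas.comp (hzpow p.1)))
        (measurableSet_singleton true)
  -- equivariance
  have hπ_equiv : ∀ x : X, π (T x) = fun i => π x (i + 1) := by
    intro x
    funext n
    simp only [hπdef, decide_eq_decide]
    constructor
    · rintro ⟨⟨i, j⟩, hF, hgv⟩
      refine ⟨(i + 1, j), ?_, ?_⟩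
      · have := hFequiv x i j
        rw [this] at hF; omega
      · have : (T ^ (i + 1)) x = (T ^ i) (T x) := by
          rw [zpow_add_one]; rfl
        rw [this]; exact hgv
    · rintro ⟨⟨i, j⟩, hF, hgv⟩
      refine ⟨(i - 1, j), ?_, ?_⟩
      · have := hFequiv x (i - 1) j
        simp only [sub_add_cancel] at this
        rw [this, hF]; ring
      · have : (T ^ (i - 1 : ℤ)) (T x) = (T ^ i) x := by
          have : (T ^ (i - 1 : ℤ)) * T = T ^ i := by
            group
          calc (T ^ (i - 1 : ℤ)) (T x) = ((T ^ (i - 1 : ℤ)) * T) x := rfl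
            _ = (T ^ i) x := by rw [this]
        rw [this]; exact hgv
  refine ⟨π, hπ_meas, hπ_equiv, ?_⟩
  -- recovery of g from π and F
  have hrec : ∀ x j, π x (F x (0, j)) = g x j := by
    intro x j
    simp only [hπdef]
    have : (∃ p : ℤ × ℕ, F x p = F x (0, j) ∧ g ((T ^ p.1) x) p.2 = true)
        ↔ g x j = true := by
      constructor
      · rintro ⟨p, hp, hgv⟩
        have : p = (0, j) := hFinj x hp
        subst this
        simpa using hgv
      · intro h
        exact ⟨(0, j), rfl, by simpa using h⟩
    rw [decide_eq_decide.mpr this]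
    exact Bool.decide_coe _
  -- the pair map is an injective measurable map into a countably separated space
  set Φ : X → (ℤ → Bool) × (ℤ × ℕ → ℤ) := fun x => (π x, F x) with hΦdef
  have hΦmeas : Measurable Φ := hπ_meas.prodMk hFmeas
  have hΦinj : Function.Injective Φ := by
    intro x y hxy
    have hπeq : π x = π y := congrArg Prod.fst hxy
    have hFeq : F x = F y := congrArg Prod.snd hxy
    apply hg_inj
    funext j
    rw [← hrec x j, ← hrec y j, hπeq, hFeq]
  have hemb : MeasurableEmbedding Φ := hΦmeas.measurableEmbedding hΦinj
  have hcomap : MeasurableSpace.comap Φ inferInstance = ‹MeasurableSpace X› := by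
    apply le_antisymm
    · exact hΦmeas.comap_le
    · intro s hs
      exact ⟨Φ '' s, hemb.measurableSet_image.mpr hs, (hΦinj.preimage_image s)⟩
  have hsup : MeasurableSpace.comap π inferInstance ⊔ MeasurableSpace.comap F inferInstance
      = MeasurableSpace.comap Φ inferInstance := by
    show MeasurableSpace.comap π _ ⊔ MeasurableSpace.comap F _
      = MeasurableSpace.comap Φ (MeasurableSpace.comap Prod.fst _ ⊔
          MeasurableSpace.comap Prod.snd _)
    rw [MeasurableSpace.comap_sup, MeasurableSpace.comap_comp,
      MeasurableSpace.comap_comp]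
    rfl
  rw [hsup, hcomap]
end

section
/- Let (X, 𝓑, T) be a Borel system, let α ⊆ 𝓑 be a countable partition, and let A_i, B_i ∈ 𝓑 (i ∈ ℕ). Suppose X = def(α) ∪ ⋃_{i=1}^∞ nul(A_i) ∪ ⋃_{i=1}^∞ div(B_i). Then there exist Borel sets A, B ∈ 𝓑 such that X = def(α) ∪ nul(A) ∪ div(B) and this union is disjoint. -/
open Filter
open scoped Topology
open scoped Classical

/-- The frequency of visits of the first `N` points of the forward orbit of `x` to `A`:
`S_N(x,A) = (1/N) · #{0 ≤ i < N : T^i x ∈ A}`. -/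
noncomputable def visitFreq {X : Type*} (T : Equiv.Perm X) (A : Set X) (x : X) (N : ℕ) : ℝ :=
  (∑ i ∈ Finset.range N, if (T ^ i) x ∈ A then (1 : ℝ) else 0) / N

section aux
variable {X : Type*} (T : Equiv.Perm X)

lemma measurable_perm_pow [MeasurableSpace X] (hT : Measurable T) (n : ℕ) :
    Measurable ⇑(T ^ n) := by
  induction n with
  | zero => simpa using measurable_id
  | succ k ih =>
      have h : ⇑(T ^ (k + 1)) = ⇑(T ^ k) ∘ ⇑T := by
        ext x; simp [pow_succ, Equiv.Perm.mul_apply]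
      rw [h]; exact ih.comp hT

lemma measurable_perm_zpow [MeasurableSpace X] (hT : Measurable T)
    (hTinv : Measurable T.symm) (n : ℤ) : Measurable ⇑(T ^ n) := by
  cases n with
  | ofNat m => rw [Int.ofNat_eq_coe, zpow_natCast]; exact measurable_perm_pow T hT m
  | negSucc m =>
      have h1 : (T ^ (Int.negSucc m)) = (T⁻¹) ^ (m + 1) := by
        rw [zpow_negSucc, inv_pow]
      rw [h1]
      exact measurable_perm_pow T⁻¹ hTinv (m + 1)

lemma measurable_visitFreq [MeasurableSpace X] (hT : Measurable T) {A : Set X}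
    (hA : MeasurableSet A) (N : ℕ) : Measurable fun x => visitFreq T A x N := by
  unfold visitFreq
  apply Measurable.div_const
  apply Finset.measurable_sum
  intro i _
  exact Measurable.ite ((measurable_perm_pow T hT i) hA) measurable_const measurable_const

lemma visitFreq_sum_shift (A : Set X) (x : X) (N : ℕ) :
    (∑ i ∈ Finset.range (N + 1), if (T ^ i) x ∈ A then (1 : ℝ) else 0)
      = (∑ i ∈ Finset.range N, if (T ^ i) (T x) ∈ A then (1 : ℝ) else 0)
        + (if x ∈ A then (1 : ℝ) else 0) := by
  rw [Finset.sum_range_succ']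
  simp [pow_succ, Equiv.Perm.mul_apply]

lemma visitFreq_shift_eq (A : Set X) (x : X) (N : ℕ) :
    visitFreq T A (T x) N
      = (((N : ℝ) + 1) * visitFreq T A x (N + 1) - (if x ∈ A then (1 : ℝ) else 0)) / N := by
  have hN1 : ((N : ℝ) + 1) ≠ 0 := by positivity
  unfold visitFreq
  rw [show ((N + 1 : ℕ) : ℝ) = (N : ℝ) + 1 by push_cast; ring]
  rw [mul_comm ((N : ℝ) + 1), div_mul_cancel₀ _ hN1, visitFreq_sum_shift, add_sub_cancel_right]

lemma visitFreq_succ_eq (A : Set X) (x : X) (N : ℕ) :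
    visitFreq T A x (N + 1)
      = ((N : ℝ) * visitFreq T A (T x) N + (if x ∈ A then (1 : ℝ) else 0)) / ((N : ℝ) + 1) := by
  rcases Nat.eq_zero_or_pos N with rfl | hN
  · simp only [visitFreq, Finset.sum_range_one, pow_zero, Equiv.Perm.one_apply, Nat.cast_one,
      Nat.cast_zero, zero_mul, zero_add, zero_div, div_one, Nat.cast_ofNat, zero_add]
  have hN0 : (N : ℝ) ≠ 0 := by positivity
  unfold visitFreq
  rw [show ((N + 1 : ℕ) : ℝ) = (N : ℝ) + 1 by push_cast; ring]
  rw [mul_comm (N : ℝ), div_mul_cancel₀ _ hN0, visitFreq_sum_shift]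

lemma aux_tendsto_ratio1 : Tendsto (fun N : ℕ => ((N : ℝ) + 1) / N) atTop (𝓝 1) := by
  have h := (tendsto_const_nhds (x := (1 : ℝ)) (f := atTop (α := ℕ))).add
    tendsto_one_div_atTop_nhds_zero_nat
  rw [add_zero] at h
  refine h.congr' ?_
  filter_upwards [eventually_ge_atTop 1] with N hN
  have : (N : ℝ) ≠ 0 := by positivity
  field_simp

lemma aux_tendsto_ratio2 : Tendsto (fun N : ℕ => (N : ℝ) / ((N : ℝ) + 1)) atTop (𝓝 1) := by
  have h := (tendsto_const_nhds (x := (1 : ℝ)) (f := atTop (α := ℕ))).sub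
    tendsto_one_div_add_atTop_nhds_zero_nat
  rw [sub_zero] at h
  refine h.congr fun N => ?_
  have : ((N : ℝ) + 1) ≠ 0 := by positivity
  field_simp
  ring

lemma tendsto_visitFreq_shift_iff {A : Set X} {x : X} {L : ℝ} :
    Tendsto (visitFreq T A (T x)) atTop (𝓝 L) ↔ Tendsto (visitFreq T A x) atTop (𝓝 L) := by
  set c : ℝ := if x ∈ A then (1 : ℝ) else 0 with hc
  constructor
  · intro h
    have l3 : Tendsto (fun N : ℕ => c / ((N : ℝ) + 1)) atTop (𝓝 0) := by
      have := (tendsto_const_div_atTop_nhds_zero_nat c).comp (tendsto_add_atTop_nat 1)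
      refine this.congr fun N => ?_
      simp only [Function.comp]
      push_cast
      ring_nf
    have h2 : Tendsto (fun N : ℕ => (N : ℝ) / ((N : ℝ) + 1) * visitFreq T A (T x) N
        + c / ((N : ℝ) + 1)) atTop (𝓝 (1 * L + 0)) := (aux_tendsto_ratio2.mul h).add l3
    rw [one_mul, add_zero] at h2
    have h3 : Tendsto (fun N : ℕ => visitFreq T A x (N + 1)) atTop (𝓝 L) := by
      refine h2.congr fun N => ?_
      rw [visitFreq_succ_eq, add_div, mul_div_right_comm]
    exact (tendsto_add_atTop_iff_nat 1).mp h3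
  · intro h
    have l3 : Tendsto (fun N : ℕ => c / (N : ℝ)) atTop (𝓝 0) :=
      tendsto_const_div_atTop_nhds_zero_nat c
    have hsucc : Tendsto (fun N : ℕ => visitFreq T A x (N + 1)) atTop (𝓝 L) :=
      h.comp (tendsto_add_atTop_nat 1)
    have h2 : Tendsto (fun N : ℕ => ((N : ℝ) + 1) / N * visitFreq T A x (N + 1)
        - c / (N : ℝ)) atTop (𝓝 (1 * L - 0)) := (aux_tendsto_ratio1.mul hsucc).sub l3
    rw [one_mul, sub_zero] at h2
    refine h2.congr fun N => ?_
    rw [visitFreq_shift_eq, sub_div, mul_div_right_comm]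

/-- From one-step invariance to invariance under all integer powers. -/
lemma permInv_zpow {S : Set X} (h : ∀ y, T y ∈ S ↔ y ∈ S) (n : ℤ) (x : X) :
    (T ^ n) x ∈ S ↔ x ∈ S := by
  have hs : ∀ y, T.symm y ∈ S ↔ y ∈ S := fun y => by
    conv_rhs => rw [← T.apply_symm_apply y]
    exact (h (T.symm y)).symm
  induction n using Int.induction_on generalizing x with
  | zero => simp
  | succ k ih =>
      have e : (T ^ ((k : ℤ) + 1)) x = (T ^ (k : ℤ)) (T x) := by
        rw [zpow_add_one, Equiv.Perm.mul_apply]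
      rw [e]
      exact (ih (T x)).trans (h x)
  | pred k ih =>
      have e : (T ^ (-(k : ℤ) - 1)) x = (T ^ (-(k : ℤ))) (T.symm x) := by
        rw [zpow_sub_one, Equiv.Perm.mul_apply]
        rfl
      rw [e]
      exact (ih (T.symm x)).trans (hs x)

lemma inv_pow_nat {S : Set X} (h : ∀ y, T y ∈ S ↔ y ∈ S) (n : ℕ) (x : X) :
    (T ^ n) x ∈ S ↔ x ∈ S := by
  rw [← zpow_natCast T n]
  exact permInv_zpow T h n x

lemma mem_image_zpow_shift {A : Set X} {x : X} (n m : ℤ) (hx : x ∈ ⇑(T ^ n) '' A) :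
    (T ^ m) x ∈ ⇑(T ^ (m + n)) '' A := by
  obtain ⟨a, ha, rfl⟩ := hx
  exact ⟨a, ha, by rw [← Equiv.Perm.mul_apply, ← zpow_add]⟩

lemma exists_image_shift_iff {A : Set X} {x : X} :
    (∃ n : ℤ, T x ∈ ⇑(T ^ n) '' A) ↔ ∃ n : ℤ, x ∈ ⇑(T ^ n) '' A := by
  constructor
  · rintro ⟨n, hn⟩
    refine ⟨-1 + n, ?_⟩
    have := mem_image_zpow_shift T n (-1) hn
    rwa [show (T ^ (-1 : ℤ)) (T x) = x by rw [zpow_neg_one]; exact T.symm_apply_apply x]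
      at this
  · rintro ⟨n, hn⟩
    refine ⟨1 + n, ?_⟩
    have := mem_image_zpow_shift T n 1 hn
    rwa [show (T ^ (1 : ℤ)) x = T x by rw [zpow_one]] at this
end aux


/-- The set of `A`-null points: `x ∈ ⋃_{n∈ℤ} T^n A` and `s(x,A) = 0`. -/
def nulSet {X : Type*} (T : Equiv.Perm X) (A : Set X) : Set X :=
  {x | (∃ n : ℤ, x ∈ ⇑(T ^ n) '' A) ∧ Tendsto (visitFreq T A x) atTop (nhds 0)}

/-- The set of `A`-divergent points: those `x` for which `S_N(x,A)` fails to converge. -/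
def divSet {X : Type*} (T : Equiv.Perm X) (A : Set X) : Set X :=
  {x | ¬ ∃ L : ℝ, Tendsto (visitFreq T A x) atTop (nhds L)}

/-- The set of `α`-deficient points for a countable partition `α = {A_i}_{i∈ℕ}`: the points
`x` such that `s(x,A_i)` exists and is positive for every `i`, and `∑_i s(x,A_i) < 1`. -/
def defSet {X : Type*} (T : Equiv.Perm X) (α : ℕ → Set X) : Set X :=
  {x | ∃ L : ℕ → ℝ,
    (∀ i, 0 < L i ∧ Tendsto (visitFreq T (α i) x) atTop (nhds (L i))) ∧
    ∃ c : ℝ, HasSum L c ∧ c < 1}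

section aux2
variable {X : Type*} (T : Equiv.Perm X)

lemma nulSet_inv (A : Set X) (x : X) : T x ∈ nulSet T A ↔ x ∈ nulSet T A := by
  unfold nulSet
  simp only [Set.mem_setOf_eq]
  rw [exists_image_shift_iff, tendsto_visitFreq_shift_iff]

lemma divSet_inv (A : Set X) (x : X) : T x ∈ divSet T A ↔ x ∈ divSet T A := by
  unfold divSet
  simp only [Set.mem_setOf_eq, not_iff_not]
  exact exists_congr fun L => tendsto_visitFreq_shift_iff T

lemma defSet_inv (α : ℕ → Set X) (x : X) : T x ∈ defSet T α ↔ x ∈ defSet T α := by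
  unfold defSet
  simp only [Set.mem_setOf_eq]
  refine exists_congr fun L => and_congr ?_ Iff.rfl
  exact forall_congr' fun i => and_congr Iff.rfl (tendsto_visitFreq_shift_iff T)

variable [MeasurableSpace X]

lemma measurableSet_nulSet (hT : Measurable T) (hTinv : Measurable T.symm)
    {A : Set X} (hA : MeasurableSet A) :
    MeasurableSet (nulSet T A) := by
  have h1 : MeasurableSet {x : X | ∃ n : ℤ, x ∈ ⇑(T ^ n) '' A} := by
    have : {x : X | ∃ n : ℤ, x ∈ ⇑(T ^ n) '' A} = ⋃ n : ℤ, ⇑(T ^ n) '' A := by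
      ext x; simp [Set.mem_iUnion]
    rw [this]
    refine MeasurableSet.iUnion fun n => ?_
    rw [Equiv.image_eq_preimage_symm]
    have hmeq : ⇑(T ^ n).symm = ⇑(T ^ (-n)) := by
      rw [zpow_neg]
      rfl
    rw [hmeq]
    exact measurable_perm_zpow T hT hTinv (-n) hA
  have h2 : MeasurableSet {x : X | Tendsto (visitFreq T A x) atTop (nhds 0)} :=
    MeasureTheory.measurableSet_tendsto_fun (fun N => measurable_visitFreq T hT hA N) measurable_const
  exact h1.inter h2

lemma measurableSet_divSet (hT : Measurable T) {A : Set X} (hA : MeasurableSet A) :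
    MeasurableSet (divSet T A) := by
  have h := MeasureTheory.measurableSet_exists_tendsto (l := atTop (α := ℕ))
    (fun N => measurable_visitFreq T hT hA N)
  exact h.compl

lemma measurableSet_defSet (hT : Measurable T) (α : ℕ → Set X) (hα : ∀ i, MeasurableSet (α i)) :
    MeasurableSet (defSet T α) := by
  set g : ℕ → X → ℝ := fun i x => liminf (fun N => visitFreq T (α i) x N) atTop with hg
  have hgm : ∀ i, Measurable (g i) := fun i =>
    Measurable.liminf fun N => measurable_visitFreq T hT (hα i) N
  have heq : defSet T α =
      (⋂ i, ({x : X | ∃ c : ℝ, Tendsto (fun N => visitFreq T (α i) x N) atTop (nhds c)}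
        ∩ {x : X | 0 < g i x}))
      ∩ ⋃ (q : ℚ) (_ : (q : ℝ) < 1), ⋂ n : ℕ,
          {x : X | ∑ i ∈ Finset.range n, g i x ≤ (q : ℝ)} := by
    ext x
    simp only [Set.mem_setOf_eq, Set.mem_inter_iff, Set.mem_iInter, Set.mem_iUnion,
      Set.mem_inter_iff]
    constructor
    · rintro ⟨L, hL, c, hc, hc1⟩
      have hgl : ∀ i, g i x = L i := fun i => (hL i).2.liminf_eq
      obtain ⟨q, hq1, hq2⟩ := exists_rat_btwn hc1
      refine ⟨fun i => ⟨⟨L i, (hL i).2⟩, by rw [hgl i]; exact (hL i).1⟩, q, hq2, fun n => ?_⟩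
      have hle : ∑ i ∈ Finset.range n, L i ≤ c :=
        sum_le_hasSum (Finset.range n) (fun i _ => (hL i).1.le) hc
      calc ∑ i ∈ Finset.range n, g i x = ∑ i ∈ Finset.range n, L i := by
            exact Finset.sum_congr rfl fun i _ => hgl i
        _ ≤ c := hle
        _ ≤ q := hq1.le
    · rintro ⟨h1, q, hq1, h2⟩
      have htd : ∀ i, Tendsto (fun N => visitFreq T (α i) x N) atTop (nhds (g i x)) := by
        intro i
        obtain ⟨c, hc⟩ := (h1 i).1
        have : g i x = c := hc.liminf_eq
        rw [this]; exact hc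
      have hnn : ∀ i, 0 ≤ g i x := fun i => ((h1 i).2).le
      have hsummable : Summable (fun i => g i x) := summable_of_sum_range_le hnn h2
      refine ⟨fun i => g i x, fun i => ⟨(h1 i).2, htd i⟩, ∑' i, g i x, hsummable.hasSum, ?_⟩
      exact lt_of_le_of_lt (Real.tsum_le_of_sum_range_le hnn h2) hq1
  rw [heq]
  refine MeasurableSet.inter (MeasurableSet.iInter fun i => ?_) ?_
  · exact (MeasureTheory.measurableSet_exists_tendsto fun N => measurable_visitFreq T hT (hα i) N).inter
      (measurableSet_lt measurable_const (hgm i))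
  · refine MeasurableSet.iUnion fun q => MeasurableSet.iUnion fun _ =>
      MeasurableSet.iInter fun n => ?_
    exact measurableSet_le (Finset.measurable_sum _ fun i _ => hgm i) measurable_const
end aux2

/-- **Disjointification.** If `X = def(α) ∪ ⋃_i nul(A_i) ∪ ⋃_i div(B_i)`, then there are
Borel sets `A, B` with `X = def(α) ∪ nul(A) ∪ div(B)`, the union being disjoint. -/
theorem disjointify_nul_div {X : Type*} [MeasurableSpace X] [StandardBorelSpace X]
    (T : Equiv.Perm X) (hT : Measurable T) (hTinv : Measurable T.symm)
    (α : ℕ → Set X) (hαm : ∀ i, MeasurableSet (α i))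
    (hαd : Pairwise fun i j => Disjoint (α i) (α j)) (hαu : (⋃ i, α i) = Set.univ)
    (A B : ℕ → Set X) (hA : ∀ i, MeasurableSet (A i)) (hB : ∀ i, MeasurableSet (B i))
    (hcover : defSet T α ∪ (⋃ i, nulSet T (A i)) ∪ (⋃ i, divSet T (B i)) = Set.univ) :
    ∃ A' B' : Set X, MeasurableSet A' ∧ MeasurableSet B' ∧
      defSet T α ∪ nulSet T A' ∪ divSet T B' = Set.univ ∧
      Disjoint (defSet T α) (nulSet T A') ∧
      Disjoint (defSet T α) (divSet T B') ∧
      Disjoint (nulSet T A') (divSet T B') := by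
  classical
  set Def := defSet T α with hDefdef
  set Nul : ℕ → Set X := fun i => nulSet T (A i) with hNuldef
  set Div : ℕ → Set X := fun i => divSet T (B i) with hDivdef
  set P : ℕ → Set X := fun i => Nul i \ (Def ∪ ⋃ j, ⋃ _ : j < i, Nul j) with hPdef
  set Q : ℕ → Set X :=
    fun i => Div i \ ((Def ∪ ⋃ j, Nul j) ∪ ⋃ j, ⋃ _ : j < i, Div j) with hQdef
  have hPmem : ∀ i x, x ∈ P i ↔ x ∈ Nul i ∧ ¬(x ∈ Def ∨ ∃ j, j < i ∧ x ∈ Nul j) := by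
    intro i x
    simp only [hPdef, Set.mem_diff, Set.mem_union, Set.mem_iUnion, exists_prop]
  have hQmem : ∀ i x, x ∈ Q i ↔
      x ∈ Div i ∧ ¬((x ∈ Def ∨ ∃ j, x ∈ Nul j) ∨ ∃ j, j < i ∧ x ∈ Div j) := by
    intro i x
    simp only [hQdef, Set.mem_diff, Set.mem_union, Set.mem_iUnion, exists_prop]
  -- invariance
  have hNI : ∀ i x, T x ∈ Nul i ↔ x ∈ Nul i := fun i x => nulSet_inv T (A i) x
  have hVI : ∀ i x, T x ∈ Div i ↔ x ∈ Div i := fun i x => divSet_inv T (B i) x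
  have hDI : ∀ x, T x ∈ Def ↔ x ∈ Def := fun x => defSet_inv T α x
  have hPI : ∀ i x, T x ∈ P i ↔ x ∈ P i := by
    intro i x
    rw [hPmem, hPmem]
    simp only [hNI, hDI]
  have hQI : ∀ i x, T x ∈ Q i ↔ x ∈ Q i := by
    intro i x
    rw [hQmem, hQmem]
    simp only [hNI, hVI, hDI]
  have hPZ : ∀ i (n : ℤ) x, (T ^ n) x ∈ P i ↔ x ∈ P i := fun i => permInv_zpow T (hPI i)
  have hQZ : ∀ i (n : ℤ) x, (T ^ n) x ∈ Q i ↔ x ∈ Q i := fun i => permInv_zpow T (hQI i)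
  have hPN : ∀ i (n : ℕ) x, (T ^ n) x ∈ P i ↔ x ∈ P i := fun i => inv_pow_nat T (hPI i)
  have hQN : ∀ i (n : ℕ) x, (T ^ n) x ∈ Q i ↔ x ∈ Q i := fun i => inv_pow_nat T (hQI i)
  -- the P's (resp. Q's) are pairwise disjoint
  have hPd : ∀ i j x, x ∈ P i → x ∈ P j → i = j := by
    intro i j x hi hj
    by_contra hne
    rcases Nat.lt_or_ge i j with h | h
    · exact ((hPmem j x).mp hj).2 (Or.inr ⟨i, h, ((hPmem i x).mp hi).1⟩)
    · have h' : j < i := lt_of_le_of_ne h (Ne.symm hne)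
      exact ((hPmem i x).mp hi).2 (Or.inr ⟨j, h', ((hPmem j x).mp hj).1⟩)
  have hQd : ∀ i j x, x ∈ Q i → x ∈ Q j → i = j := by
    intro i j x hi hj
    by_contra hne
    rcases Nat.lt_or_ge i j with h | h
    · exact ((hQmem j x).mp hj).2 (Or.inr ⟨i, h, ((hQmem i x).mp hi).1⟩)
    · have h' : j < i := lt_of_le_of_ne h (Ne.symm hne)
      exact ((hQmem i x).mp hi).2 (Or.inr ⟨j, h', ((hQmem j x).mp hj).1⟩)
  -- key frequency identities
  have keyA : ∀ i x, x ∈ P i → ∀ N,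
      visitFreq T (⋃ j, A j ∩ P j) x N = visitFreq T (A i) x N := by
    intro i x hx N
    unfold visitFreq
    congr 1
    apply Finset.sum_congr rfl
    intro k _
    have hiff : ((T ^ k) x ∈ ⋃ j, A j ∩ P j) ↔ (T ^ k) x ∈ A i := by
      constructor
      · intro hmem
        obtain ⟨j, haj⟩ := Set.mem_iUnion.mp hmem
        have hxj : x ∈ P j := (hPN j k x).mp haj.2
        exact (hPd j i x hxj hx) ▸ haj.1
      · intro h
        exact Set.mem_iUnion.mpr ⟨i, h, (hPN i k x).mpr hx⟩
    exact if_congr hiff rfl rfl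
  have keyB : ∀ i x, x ∈ Q i → ∀ N,
      visitFreq T (⋃ j, B j ∩ Q j) x N = visitFreq T (B i) x N := by
    intro i x hx N
    unfold visitFreq
    congr 1
    apply Finset.sum_congr rfl
    intro k _
    have hiff : ((T ^ k) x ∈ ⋃ j, B j ∩ Q j) ↔ (T ^ k) x ∈ B i := by
      constructor
      · intro hmem
        obtain ⟨j, haj⟩ := Set.mem_iUnion.mp hmem
        have hxj : x ∈ Q j := (hQN j k x).mp haj.2
        exact (hQd j i x hxj hx) ▸ haj.1
      · intro h
        exact Set.mem_iUnion.mpr ⟨i, h, (hQN i k x).mpr hx⟩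
    exact if_congr hiff rfl rfl
  have zeroB : ∀ x, (∀ j, x ∉ Q j) → ∀ N, visitFreq T (⋃ j, B j ∩ Q j) x N = 0 := by
    intro x hx N
    unfold visitFreq
    rw [Finset.sum_eq_zero, zero_div]
    intro k _
    rw [if_neg]
    intro hmem
    obtain ⟨j, hbj⟩ := Set.mem_iUnion.mp hmem
    exact hx j ((hQN j k x).mp hbj.2)
  -- P i is contained in nul(A'), Q i in div(B')
  have satA : ∀ i x, x ∈ P i → x ∈ nulSet T (⋃ j, A j ∩ P j) := by
    intro i x hx
    have hxN : x ∈ Nul i := ((hPmem i x).mp hx).1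
    obtain ⟨⟨n, a, ha, hax⟩, htd⟩ := hxN
    have haP : a ∈ P i := (hPZ i n a).mp (by rw [hax]; exact hx)
    exact ⟨⟨n, a, Set.mem_iUnion.mpr ⟨i, ha, haP⟩, hax⟩,
      htd.congr fun N => (keyA i x hx N).symm⟩
  have satA' : ∀ x, x ∈ nulSet T (⋃ j, A j ∩ P j) → ∃ j, x ∈ P j := by
    intro x hx
    obtain ⟨n, a, haA', hax⟩ := hx.1
    obtain ⟨j, haj⟩ := Set.mem_iUnion.mp haA'
    refine ⟨j, ?_⟩
    rw [← hax]
    exact (hPZ j n a).mpr haj.2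
  have divB : ∀ i x, x ∈ Q i → x ∈ divSet T (⋃ j, B j ∩ Q j) := by
    intro i x hx
    have hxD : x ∈ Div i := ((hQmem i x).mp hx).1
    rintro ⟨L, hL⟩
    exact hxD ⟨L, hL.congr (keyB i x hx)⟩
  have divB' : ∀ x, x ∈ divSet T (⋃ j, B j ∩ Q j) → ∃ j, x ∈ Q j := by
    intro x hx
    by_contra hno
    push_neg at hno
    exact hx ⟨0, tendsto_const_nhds.congr fun N => (zeroB x hno N).symm⟩
  -- cover in disjointified form
  have hcov : ∀ x : X, x ∈ Def ∨ (∃ i, x ∈ P i) ∨ (∃ i, x ∈ Q i) := by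
    intro x
    have hx : x ∈ Def ∪ (⋃ i, Nul i) ∪ ⋃ i, Div i := by rw [hcover]; trivial
    by_cases hD : x ∈ Def
    · exact Or.inl hD
    by_cases hN : ∃ i, x ∈ Nul i
    · refine Or.inr (Or.inl ⟨Nat.find hN, (hPmem _ x).mpr ⟨Nat.find_spec hN, ?_⟩⟩)
      rintro (h | ⟨j, hjlt, hjm⟩)
      · exact hD h
      · exact Nat.find_min hN hjlt hjm
    · have hDv : ∃ i, x ∈ Div i := by
        rcases hx with (h | h) | h
        · exact absurd h hD
        · exact absurd (Set.mem_iUnion.mp h) hN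
        · exact Set.mem_iUnion.mp h
      refine Or.inr (Or.inr ⟨Nat.find hDv, (hQmem _ x).mpr ⟨Nat.find_spec hDv, ?_⟩⟩)
      rintro ((h | h) | ⟨j, hjlt, hjm⟩)
      · exact hD h
      · exact hN h
      · exact Nat.find_min hDv hjlt hjm
  -- conclusion
  refine ⟨⋃ i, A i ∩ P i, ⋃ i, B i ∩ Q i, ?_, ?_, ?_, ?_, ?_, ?_⟩
  · refine MeasurableSet.iUnion fun i => (hA i).inter ?_
    exact (measurableSet_nulSet T hT hTinv (hA i)).diff
      ((measurableSet_defSet T hT α hαm).union (MeasurableSet.iUnion fun j =>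
        MeasurableSet.iUnion fun _ => measurableSet_nulSet T hT hTinv (hA j)))
  · refine MeasurableSet.iUnion fun i => (hB i).inter ?_
    exact (measurableSet_divSet T hT (hB i)).diff
      (((measurableSet_defSet T hT α hαm).union (MeasurableSet.iUnion fun j =>
          measurableSet_nulSet T hT hTinv (hA j))).union (MeasurableSet.iUnion fun j =>
        MeasurableSet.iUnion fun _ => measurableSet_divSet T hT (hB j)))
  · rw [Set.eq_univ_iff_forall]
    intro x
    rcases hcov x with hD | ⟨i, hPi⟩ | ⟨i, hQi⟩
    · exact Set.mem_union_left _ (Set.mem_union_left _ hD)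
    · exact Set.mem_union_left _ (Set.mem_union_right _ (satA i x hPi))
    · exact Set.mem_union_right _ (divB i x hQi)
  · rw [Set.disjoint_left]
    intro x hxD hxN
    obtain ⟨j, hPj⟩ := satA' x hxN
    exact ((hPmem j x).mp hPj).2 (Or.inl hxD)
  · rw [Set.disjoint_left]
    intro x hxD hxV
    obtain ⟨j, hQj⟩ := divB' x hxV
    exact ((hQmem j x).mp hQj).2 (Or.inl (Or.inl hxD))
  · rw [Set.disjoint_left]
    intro x hxN hxV
    obtain ⟨j, hPj⟩ := satA' x hxN
    obtain ⟨k, hQk⟩ := divB' x hxV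
    exact ((hQmem k x).mp hQk).2 (Or.inl (Or.inr ⟨j, ((hPmem j x).mp hPj).1⟩))
end

section
/- Let Σ be a countable alphabet and let x ∈ Σ^ℤ be aperiodic. Then for every ε > 0 there is a finite word a over Σ that occurs in x and satisfies s̲(x, a) < ε. -/
open Filter
open scoped Classical

/-- A point of `Λ^ℤ` is aperiodic if no shift `S^p`, `p ≥ 1`, fixes it. -/
def Aperiodic {Λ : Type*} (x : ℤ → Λ) : Prop :=
  ∀ p : ℕ, 1 ≤ p → (fun i => x (i + (p : ℤ))) ≠ x

/-- The lower frequency `s̲(x,a)` of the word `a` in `x`. -/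
noncomputable def lowerWordFreq {Λ : Type*} (x : ℤ → Λ) (a : List Λ) : ℝ :=
  liminf (wordFreq x a) atTop

/-- The window of length `L` of `x` at position `i`. -/
def Wnd {Λ : Type*} (x : ℤ → Λ) (L : ℕ) (i : ℤ) : Fin L → Λ := fun j => x (i + (j : ℕ))

lemma wnd_dropLast {Λ : Type*} (x : ℤ → Λ) (L : ℕ) (i : ℤ) :
    (fun j : Fin L => Wnd x (L + 1) i j.castSucc) = Wnd x L i := by
  funext j
  simp [Wnd]

lemma wnd_dropFirst {Λ : Type*} (x : ℤ → Λ) (L : ℕ) (i : ℤ) :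
    (fun j : Fin L => Wnd x (L + 1) i j.succ) = Wnd x L (i + 1) := by
  funext j
  simp only [Wnd, Fin.val_succ]
  push_cast
  ring_nf

/-- An aperiodic sequence has, for each `m`, some length `L ≥ 1` with at least `m`
distinct windows of length `L`. -/
lemma exists_many_windows {Λ : Type*} (x : ℤ → Λ) (hx : Aperiodic x) (m : ℕ) :
    ∃ L : ℕ, 1 ≤ L ∧ ∃ f : Fin m → ℤ, Function.Injective (fun k => Wnd x L (f k)) := by
  by_contra hcon
  push_neg at hcon
  -- no injection `Fin m → range (Wnd x L)` for `L ≥ 1`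
  have hno : ∀ L : ℕ, 1 ≤ L → ∀ g : Fin m → Set.range (Wnd x L), ¬ Function.Injective g := by
    intro L hL g hg
    choose f hf using fun k => (g k).2
    refine hcon L hL f ?_
    intro k k' hkk'
    apply hg
    apply Subtype.ext
    rw [← hf k, ← hf k']
    exact hkk'
  -- each window-range is finite
  have hfin : ∀ L : ℕ, 1 ≤ L → Finite (Set.range (Wnd x L)) := by
    intro L hL
    by_contra hinf
    rw [not_finite_iff_infinite] at hinf
    exact hno L hL ((Infinite.natEmbedding _) ∘ (Fin.valEmbedding (n := m)))
      ((Infinite.natEmbedding _).injective.comp Fin.val_injective)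
  -- and has fewer than `m` elements
  have hcard : ∀ L : ℕ, 1 ≤ L → Nat.card (Set.range (Wnd x L)) < m := by
    intro L hL
    by_contra hle
    push_neg at hle
    have := hfin L hL
    exact hno L hL (fun k => (Finite.equivFin (Set.range (Wnd x L))).symm (Fin.castLE hle k))
      ((Finite.equivFin _).symm.injective.comp (Fin.castLE_injective hle))
  -- the drop-last map between window ranges
  have memF1 : ∀ (L : ℕ) (w : Set.range (Wnd x (L+1))),
      (fun j : Fin L => (w : Fin (L+1) → Λ) j.castSucc) ∈ Set.range (Wnd x L) := by
    rintro L ⟨w, i, hi⟩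
    subst hi
    exact ⟨i, (wnd_dropLast x L i).symm⟩
  have memF2 : ∀ (L : ℕ) (w : Set.range (Wnd x (L+1))),
      (fun j : Fin L => (w : Fin (L+1) → Λ) j.succ) ∈ Set.range (Wnd x L) := by
    rintro L ⟨w, i, hi⟩
    subst hi
    exact ⟨i + 1, (wnd_dropFirst x L i).symm⟩
  set F1 : ∀ L : ℕ, Set.range (Wnd x (L+1)) → Set.range (Wnd x L) :=
    fun L w => ⟨_, memF1 L w⟩ with hF1
  set F2 : ∀ L : ℕ, Set.range (Wnd x (L+1)) → Set.range (Wnd x L) :=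
    fun L w => ⟨_, memF2 L w⟩ with hF2
  have hsurj1 : ∀ L : ℕ, Function.Surjective (F1 L) := by
    rintro L ⟨v, i, hi⟩
    refine ⟨⟨Wnd x (L+1) i, ⟨i, rfl⟩⟩, Subtype.ext ?_⟩
    show (fun j : Fin L => Wnd x (L+1) i j.castSucc) = v
    rw [wnd_dropLast]; exact hi
  have hsurj2 : ∀ L : ℕ, Function.Surjective (F2 L) := by
    rintro L ⟨v, i, hi⟩
    refine ⟨⟨Wnd x (L+1) (i - 1), ⟨i - 1, rfl⟩⟩, Subtype.ext ?_⟩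
    show (fun j : Fin L => Wnd x (L+1) (i-1) j.succ) = v
    rw [wnd_dropFirst, sub_add_cancel]; exact hi
  -- the cardinalities are monotone, hence stabilize
  have hmono : ∀ L : ℕ, Nat.card (Set.range (Wnd x L)) ≤ Nat.card (Set.range (Wnd x (L+1))) := by
    intro L
    have := hfin (L+1) (by omega)
    exact Nat.card_le_card_of_surjective (F1 L) (hsurj1 L)
  obtain ⟨k, hk⟩ : ∃ k : ℕ,
      Nat.card (Set.range (Wnd x (k+1))) = Nat.card (Set.range (Wnd x (k+2))) := by
    by_contra hne
    push_neg at hne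
    have hsm : StrictMono (fun k => Nat.card (Set.range (Wnd x (k+1)))) := by
      apply strictMono_nat_of_lt_succ
      intro k
      exact lt_of_le_of_ne (hmono (k+1)) (hne k)
    have h1 := hsm.le_apply (x := m)
    have h2 := hcard (m+1) (by omega)
    omega
  set L := k + 1 with hLdef
  have hL : 1 ≤ L := by omega
  have hk' : Nat.card (Set.range (Wnd x (L+1))) ≤ Nat.card (Set.range (Wnd x L)) :=
    le_of_eq hk.symm
  have hfinL := hfin L hL
  have hfinL1 := hfin (L+1) (by omega)
  have hbij1 : Function.Bijective (F1 L) :=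
    (hsurj1 L).bijective_of_nat_card_le hk'
  have hbij2 : Function.Bijective (F2 L) :=
    (hsurj2 L).bijective_of_nat_card_le hk'
  -- forward and backward determinism
  have fwd : ∀ i i' : ℤ, Wnd x L i = Wnd x L i' → Wnd x (L+1) i = Wnd x (L+1) i' := by
    intro i i' h
    have h2 : F1 L ⟨Wnd x (L+1) i, ⟨i, rfl⟩⟩ = F1 L ⟨Wnd x (L+1) i', ⟨i', rfl⟩⟩ := by
      apply Subtype.ext
      show (fun j : Fin L => Wnd x (L+1) i j.castSucc) = fun j : Fin L => Wnd x (L+1) i' j.castSucc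
      rw [wnd_dropLast, wnd_dropLast]; exact h
    have := hbij1.injective h2
    exact congrArg Subtype.val this
  have bwd : ∀ i i' : ℤ, Wnd x L (i+1) = Wnd x L (i'+1) → Wnd x (L+1) i = Wnd x (L+1) i' := by
    intro i i' h
    have h2 : F2 L ⟨Wnd x (L+1) i, ⟨i, rfl⟩⟩ = F2 L ⟨Wnd x (L+1) i', ⟨i', rfl⟩⟩ := by
      apply Subtype.ext
      show (fun j : Fin L => Wnd x (L+1) i j.succ) = fun j : Fin L => Wnd x (L+1) i' j.succ
      rw [wnd_dropFirst, wnd_dropFirst]; exact h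
    have := hbij2.injective h2
    exact congrArg Subtype.val this
  -- two equal windows at distinct nonnegative positions
  obtain ⟨u, v, huv, hw⟩ : ∃ u v : ℕ, u < v ∧ Wnd x L (u : ℤ) = Wnd x L (v : ℤ) := by
    have : Fintype (Set.range (Wnd x L)) := Fintype.ofFinite _
    have hlt : Fintype.card (Set.range (Wnd x L)) < Fintype.card (Fin (Nat.card (Set.range (Wnd x L)) + 1)) := by
      rw [Fintype.card_fin, ← Nat.card_eq_fintype_card]
      omega
    obtain ⟨t, t', htne, hteq⟩ := Fintype.exists_ne_map_eq_of_card_lt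
      (fun t : Fin (Nat.card (Set.range (Wnd x L)) + 1) => (⟨Wnd x L (t : ℕ), ⟨(t : ℕ), rfl⟩⟩ : Set.range (Wnd x L))) hlt
    have hvals : Wnd x L ((t : ℕ) : ℤ) = Wnd x L ((t' : ℕ) : ℤ) := congrArg Subtype.val hteq
    rcases lt_or_gt_of_ne (fun h => htne (Fin.ext h) : (t : ℕ) ≠ (t' : ℕ)) with h | h
    · exact ⟨t, t', h, hvals⟩
    · exact ⟨t', t, h, hvals.symm⟩
  -- propagate window equality over all of ℤ
  have claim : ∀ s : ℤ, Wnd x L ((u : ℤ) + s) = Wnd x L ((v : ℤ) + s) := by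
    intro s
    induction s using Int.induction_on with
    | zero => simpa using hw
    | succ s ih =>
      have h1 := fwd _ _ ih
      have h2 := congrArg (fun w => fun j : Fin L => w j.succ) h1
      simp only [wnd_dropFirst] at h2
      have e1 : (u : ℤ) + s + 1 = (u : ℤ) + (s + 1) := by ring
      have e2 : (v : ℤ) + s + 1 = (v : ℤ) + (s + 1) := by ring
      rwa [e1, e2] at h2
    | pred s ih =>
      have hih : Wnd x L (((u : ℤ) + (-s - 1)) + 1) = Wnd x L (((v : ℤ) + (-s - 1)) + 1) := by
        have e1 : ((u : ℤ) + (-s - 1)) + 1 = (u : ℤ) + (-s : ℤ) := by ring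
        have e2 : ((v : ℤ) + (-s - 1)) + 1 = (v : ℤ) + (-s : ℤ) := by ring
        rw [e1, e2]; exact ih
      have h1 := bwd _ _ hih
      have h2 := congrArg (fun w => fun j : Fin L => w j.castSucc) h1
      simp only [wnd_dropLast] at h2
      exact h2
  -- x is periodic with period v - u, contradiction
  refine hx (v - u) (by omega) ?_
  funext s
  have h0 := congrFun (claim (s - u)) ⟨0, by omega⟩
  simp only [Wnd] at h0
  have e1 : (u : ℤ) + (s - u) + ((0 : ℕ) : ℤ) = s := by push_cast; ring
  have e2 : (v : ℤ) + (s - u) + ((0 : ℕ) : ℤ) = s + ((v - u : ℕ) : ℤ) := by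
    push_cast [Nat.cast_sub huv.le]; ring
  rw [e1, e2] at h0
  exact h0.symm

lemma wordFreq_nonneg {Λ : Type*} (x : ℤ → Λ) (a : List Λ) (N : ℕ) : 0 ≤ wordFreq x a N := by
  unfold wordFreq
  apply div_nonneg _ (Nat.cast_nonneg N)
  apply Finset.sum_nonneg
  intro i _
  split <;> norm_num

lemma occursAt_unique {Λ : Type*} (x : ℤ → Λ) {a b : List Λ} {i : ℤ}
    (ha : OccursAt x a i) (hb : OccursAt x b i) (hlen : a.length = b.length) : a = b := by
  apply List.ext_get hlen
  intro n h1 h2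
  rw [← ha ⟨n, h1⟩, ← hb ⟨n, h2⟩]

lemma occursAt_ofFn {Λ : Type*} (x : ℤ → Λ) (L : ℕ) (i : ℤ) :
    OccursAt x (List.ofFn (Wnd x L i)) i := by
  intro j
  simp only [List.get_ofFn]
  simp [Wnd]

/-- **Low-frequency words exist.** If `x ∈ Λ^ℤ` is aperiodic (`Λ` a countable alphabet),
then for every `ε > 0` there is a finite word `a` occurring in `x` with `s̲(x,a) < ε`. -/
theorem low_frequency_word_exists {Λ : Type*} [Countable Λ] (x : ℤ → Λ)
    (hx : Aperiodic x) (ε : ℝ) (hε : 0 < ε) :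
    ∃ a : List Λ, (∃ i : ℤ, OccursAt x a i) ∧ lowerWordFreq x a < ε := by
  by_contra hcon
  push_neg at hcon
  obtain ⟨m, hm⟩ := exists_nat_gt (2 / ε)
  have hmpos : 0 < m := by
    have : (0 : ℝ) < 2 / ε := by positivity
    exact_mod_cast (Nat.cast_pos (α := ℝ)).mp (this.trans hm)
  obtain ⟨L, hL, f, hf⟩ := exists_many_windows x hx m
  set a : Fin m → List Λ := fun k => List.ofFn (Wnd x L (f k)) with ha
  have hlen : ∀ k, (a k).length = L := fun k => List.length_ofFn
  have hocc : ∀ k, OccursAt x (a k) (f k) := fun k => occursAt_ofFn x L (f k)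
  have hainj : Function.Injective a := fun k k' h => hf (List.ofFn_injective h)
  have hεk : ∀ k, ε ≤ lowerWordFreq x (a k) := fun k => hcon (a k) ⟨f k, hocc k⟩
  have hbd : ∀ k : Fin m, IsBoundedUnder (· ≥ ·) atTop (wordFreq x (a k)) :=
    fun k => isBoundedUnder_of ⟨0, fun N => wordFreq_nonneg x _ N⟩
  have hev : ∀ᶠ N in atTop, ∀ k : Fin m, ε / 2 < wordFreq x (a k) N := by
    rw [eventually_all]
    intro k
    exact eventually_lt_of_lt_liminf (lt_of_lt_of_le (by linarith) (hεk k)) (hbd k)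
  obtain ⟨N, hN1, hN2⟩ := ((eventually_ge_atTop 1).and hev).exists
  have hNpos : (0 : ℝ) < N := by exact_mod_cast hN1
  have hsum_le : ∑ k : Fin m, wordFreq x (a k) N ≤ 1 := by
    unfold wordFreq
    rw [← Finset.sum_div, div_le_one hNpos, Finset.sum_comm]
    calc ∑ i ∈ Finset.range N, ∑ k : Fin m, (if OccursAt x (a k) (i : ℤ) then (1:ℝ) else 0)
        ≤ ∑ _i ∈ Finset.range N, (1 : ℝ) := by
          apply Finset.sum_le_sum
          intro i _
          rw [Finset.sum_boole]
          have hcard : (Finset.univ.filter (fun k : Fin m => OccursAt x (a k) (i : ℤ))).card ≤ 1 := by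
            apply Finset.card_le_one.2
            intro k hk k' hk'
            simp only [Finset.mem_filter] at hk hk'
            exact hainj (occursAt_unique x hk.2 hk'.2 (by rw [hlen k, hlen k']))
          exact_mod_cast hcard
      _ = (N : ℝ) := by simp
  have hsum_gt : (m : ℝ) * (ε / 2) < ∑ k : Fin m, wordFreq x (a k) N := by
    have hne : (Finset.univ : Finset (Fin m)).Nonempty := by
      have : Nonempty (Fin m) := Fin.pos_iff_nonempty.mp hmpos
      exact Finset.univ_nonempty
    calc (m : ℝ) * (ε / 2) = ∑ _k : Fin m, (ε / 2) := by
          simp [Finset.card_univ]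
      _ < ∑ k : Fin m, wordFreq x (a k) N :=
          Finset.sum_lt_sum_of_nonempty hne (fun k _ => hN2 k)
  have h2ε : (2 : ℝ) < m * ε := by
    rw [div_lt_iff₀ hε] at hm
    linarith
  linarith
end

section
/- Let Σ be a countable alphabet. There is a Borel measurable map assigning to each y ∈ Σ_AP^ℤ, each I ⊆ ℤ, and each sequence (t_n)_{n=1}^∞ of nonnegative reals with ∑_{n=1}^∞ t_n < 1, a sequence (J_n)_{n=1}^∞ of pairwise disjoint subsets of I satisfying s̲*(J_n) ≥ t_n·s̲*(I) for every n, such that the assignment is equivariant in the sense that (Sy, SI, (t_n)) is sent to (SJ_n)_{n=1}^∞. -/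
open Filter
open scoped Classical

def shiftSet (I : Set ℤ) : Set ℤ := {i | i + 1 ∈ I}

noncomputable def lowerUniformDensity (I : Set ℤ) : ℝ :=
  liminf (fun N : ℕ =>
    ⨅ n : ℤ, (∑ i ∈ Finset.range N, if n + (i : ℤ) ∈ I then (1 : ℝ) else 0) / N) atTop

namespace StatSel

/-- number of points of `A` in `[x, y)` -/
noncomputable def cntIn (A : Set ℤ) (x y : ℤ) : ℕ := ((Finset.Ico x y).filter (· ∈ A)).card

lemma cntIn_mono_set {A B : Set ℤ} (h : A ⊆ B) (x y : ℤ) : cntIn A x y ≤ cntIn B x y := by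
  apply Finset.card_le_card
  intro i hi
  simp only [Finset.mem_filter] at *
  exact ⟨hi.1, h hi.2⟩

lemma cntIn_le (A : Set ℤ) {x y : ℤ} (hxy : x ≤ y) : (cntIn A x y : ℤ) ≤ y - x := by
  have h1 : cntIn A x y ≤ (y - x).toNat :=
    le_trans (Finset.card_filter_le _ _) (le_of_eq (Int.card_Ico x y))
  omega

lemma cntIn_split (A : Set ℤ) {x y z : ℤ} (h1 : x ≤ y) (h2 : y ≤ z) :
    cntIn A x z = cntIn A x y + cntIn A y z := by
  unfold cntIn
  rw [← Finset.Ico_union_Ico_eq_Ico h1 h2, Finset.filter_union, Finset.card_union_of_disjoint]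
  exact Finset.disjoint_filter_filter (Finset.Ico_disjoint_Ico_consecutive x y z)

lemma cntIn_succ_right (A : Set ℤ) {x y : ℤ} (h : x ≤ y) :
    cntIn A x (y + 1) = cntIn A x y + (if y ∈ A then 1 else 0) := by
  have h0 : cntIn A x (y+1) = cntIn A x y + cntIn A y (y+1) := cntIn_split A h (by omega)
  rw [h0]
  congr 1
  unfold cntIn
  have : Finset.Ico y (y+1) = {y} := by ext; simp; omega
  rw [this, Finset.filter_singleton]
  split <;> simp

lemma cntIn_shift (A : Set ℤ) (x y : ℤ) : cntIn (shiftSet A) x y = cntIn A (x+1) (y+1) := by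
  unfold cntIn
  refine Finset.card_bij' (fun i _ => i + 1) (fun i _ => i - 1) ?_ ?_ ?_ ?_
  · intro a ha
    simp only [Finset.mem_filter, Finset.mem_Ico] at ha ⊢
    obtain ⟨⟨h1, h2⟩, h3⟩ := ha
    exact ⟨⟨by omega, by omega⟩, h3⟩
  · intro a ha
    simp only [Finset.mem_filter, Finset.mem_Ico] at ha ⊢
    obtain ⟨⟨h1, h2⟩, h3⟩ := ha
    refine ⟨⟨by omega, by omega⟩, ?_⟩
    show a - 1 + 1 ∈ A
    simpa using h3
  · intro a _; ring
  · intro a _; ring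

/-- the window average appearing in `lowerUniformDensity`, as `cntIn`. -/
lemma sum_eq_cntIn (A : Set ℤ) (a : ℤ) (N : ℕ) :
    (∑ i ∈ Finset.range N, if a + (i : ℤ) ∈ A then (1 : ℝ) else 0) = cntIn A a (a + N) := by
  rw [cntIn, Finset.card_filter, Nat.cast_sum]
  rw [Finset.sum_nbij' (i := fun (i : ℕ) => a + (i : ℤ))
      (j := fun (x : ℤ) => (x - a).toNat)]
  · intro i hi
    simp only [Finset.mem_range] at hi
    simp only [Finset.mem_Ico]; omega
  · intro x hx
    simp only [Finset.mem_Ico] at hx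
    simp only [Finset.mem_range]; omega
  · intro i _; omega
  · intro x hx
    simp only [Finset.mem_Ico] at hx; omega
  · intro i _
    split <;> simp

/-- windowed density sequence -/
noncomputable def q (A : Set ℤ) (N : ℕ) : ℝ := ⨅ a : ℤ, (cntIn A a (a + N) : ℝ) / N

lemma lud_eq_liminf_q (A : Set ℤ) : lowerUniformDensity A = liminf (q A) atTop := by
  unfold lowerUniformDensity q
  congr 1
  funext N
  congr 1
  funext a
  rw [sum_eq_cntIn]

lemma q_nonneg (A : Set ℤ) (N : ℕ) : 0 ≤ q A N := by
  apply le_ciInf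
  intro a
  positivity

lemma q_le_one (A : Set ℤ) (N : ℕ) : q A N ≤ 1 := by
  rcases Nat.eq_zero_or_pos N with h | h
  · subst h
    apply (ciInf_le ⟨0, ?_⟩ (0 : ℤ)).trans
    · simp
    · rintro x ⟨a, rfl⟩; positivity
  · apply (ciInf_le ⟨0, ?_⟩ (0 : ℤ)).trans
    · rw [div_le_one (by exact_mod_cast h)]
      have h1 : (cntIn A 0 (0 + (N:ℤ)) : ℤ) ≤ N := by
        have := cntIn_le A (x := 0) (y := 0 + (N:ℤ)) (by omega); omega
      exact_mod_cast h1
    · rintro x ⟨a, rfl⟩; positivity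

lemma bddq (A : Set ℤ) : ∀ N, |q A N| ≤ 1 := by
  intro N
  rw [abs_le]
  exact ⟨by linarith [q_nonneg A N], q_le_one A N⟩

lemma lud_nonneg (A : Set ℤ) : 0 ≤ lowerUniformDensity A := by
  rw [lud_eq_liminf_q]
  have : (0:ℝ) = liminf (fun _ : ℕ => (0:ℝ)) atTop := by simp
  rw [this]
  apply liminf_le_liminf
  · exact Eventually.of_forall (fun N => q_nonneg A N)
  · exact isBoundedUnder_of ⟨0, fun _ => le_refl _⟩
  · exact (isBoundedUnder_of ⟨1, fun N => q_le_one A N⟩).isCoboundedUnder_ge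

lemma lud_shift (A : Set ℤ) : lowerUniformDensity (shiftSet A) = lowerUniformDensity A := by
  rw [lud_eq_liminf_q, lud_eq_liminf_q]
  congr 1
  funext N
  unfold q
  apply le_antisymm
  · apply le_ciInf
    intro a
    apply ciInf_le_of_le ⟨0, by rintro x ⟨b, rfl⟩; positivity⟩ (a - 1)
    rw [cntIn_shift]
    apply le_of_eq
    congr 2
    ring
  · apply le_ciInf
    intro a
    apply ciInf_le_of_le ⟨0, by rintro x ⟨b, rfl⟩; positivity⟩ (a + 1)
    rw [cntIn_shift]
    apply le_of_eq
    congr 3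
    ring

/-- Main density comparison: from uniform window-count inequalities to densities. -/
lemma den_compare {A B : Set ℤ} {γ ε C : ℝ} (hγ0 : 0 ≤ γ) (hγ1 : γ ≤ 1) (hε : 0 ≤ ε) (hC : 0 ≤ C)
    (h : ∀ (a : ℤ) (N : ℕ), γ * cntIn B a (a + N) ≤ (cntIn A a (a + N) : ℝ) + ε * N + C) :
    γ * lowerUniformDensity B ≤ lowerUniformDensity A + ε := by
  rw [lud_eq_liminf_q, lud_eq_liminf_q]
  apply le_of_forall_pos_le_add
  intro δ hδ
  -- for N large (N ≥ C/δ), q A N ≥ γ q B N - ε - δ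
  have key : ∀ᶠ N in atTop, γ * q B N - ε - δ ≤ q A N := by
    rw [eventually_atTop]
    obtain ⟨N₀, hN₀⟩ := exists_nat_ge (C / δ)
    refine ⟨N₀ + 1, fun N hN => ?_⟩
    have hN1 : 1 ≤ N := le_trans (by omega) hN
    have hCN : C / N ≤ δ := by
      rw [div_le_iff₀ (by positivity)]
      calc C ≤ (C/δ) * δ := by rw [div_mul_cancel₀]; positivity
      _ ≤ N * δ := by
        apply mul_le_mul_of_nonneg_right _ hδ.le
        calc (C/δ) ≤ N₀ := hN₀
        _ ≤ N := by exact_mod_cast le_trans (by omega) hN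
      _ = δ * N := by ring
    apply le_ciInf
    intro a
    have h1 := h a N
    have hNpos : (0:ℝ) < N := by exact_mod_cast hN1
    have e0 : (γ * cntIn B a (a+N) : ℝ)/N ≤ ((cntIn A a (a+N) : ℝ) + ε*N + C)/N := by
      gcongr
    have e1 : ((cntIn A a (a+N):ℝ) + ε*N + C)/N = (cntIn A a (a+N):ℝ)/N + ε + C/N := by
      field_simp
    have e2 : (γ * cntIn B a (a+N) : ℝ)/N = γ * ((cntIn B a (a+N):ℝ)/N) := by ring
    have h3 : γ * q B N ≤ γ * ((cntIn B a (a+N) : ℝ)/N) := by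
      apply mul_le_mul_of_nonneg_left _ hγ0
      exact ciInf_le ⟨0, by rintro x ⟨b, rfl⟩; positivity⟩ a
    rw [e1] at e0
    rw [e2] at e0
    linarith
  -- liminf comparison
  have hb1 : IsBoundedUnder (· ≥ ·) atTop (q A) := isBoundedUnder_of ⟨0, fun N => q_nonneg A N⟩
  have hb2 : IsCoboundedUnder (· ≥ ·) atTop (q A) :=
    (isBoundedUnder_of ⟨1, fun N => q_le_one A N⟩).isCoboundedUnder_ge
  have hb3 : IsBoundedUnder (· ≥ ·) atTop (fun N => γ * q B N - ε - δ) :=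
    isBoundedUnder_of ⟨-ε - δ - 1, fun N => by
      have h1 := q_nonneg B N
      have h2 := q_le_one B N
      nlinarith⟩
  have lcomp : liminf (fun N => γ * q B N - ε - δ) atTop ≤ liminf (q A) atTop :=
    liminf_le_liminf key hb3 hb2
  -- compute LHS liminf
  have heq : liminf (fun N => γ * q B N - ε - δ) atTop = γ * liminf (q B) atTop - ε - δ := by
    have hmono : Monotone (fun x : ℝ => γ * x - ε - δ) := by
      intro x y hxy
      simp only
      nlinarith
    have hcont : ContinuousAt (fun x : ℝ => γ * x - ε - δ) (liminf (q B) atTop) := by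
      fun_prop
    have hcob : IsCoboundedUnder (· ≥ ·) atTop (q B) :=
      (isBoundedUnder_of ⟨1, fun N => q_le_one B N⟩).isCoboundedUnder_ge
    have hbdd : IsBoundedUnder (· ≥ ·) atTop (q B) := isBoundedUnder_of ⟨0, fun N => q_nonneg B N⟩
    have := hmono.map_liminf_of_continuousAt (F := atTop) (q B) hcont hcob hbdd
    exact this.symm
  rw [heq] at lcomp
  linarith


section Markers
variable {Λ : Type*} [Countable Λ]

/-- shift by `j` -/
def shl (j : ℤ) (y : ℤ → Λ) : ℤ → Λ := fun i => y (i + j)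

lemma shl_shl (a b : ℤ) (y : ℤ → Λ) : shl a (shl b y) = shl (a + b) y := by
  funext i; show y (i + a + b) = y (i + (a + b)); ring_nf

lemma shl_zero (y : ℤ → Λ) : shl 0 y = y := by funext i; show y (i + 0) = y i; norm_num

lemma shift_eq_shl (y : ℤ → Λ) : shift y = shl 1 y := rfl

/-- anchored finite words -/
abbrev Wd (Λ : Type*) := ℤ × List Λ

def pat (w : Wd Λ) : Set (ℤ → Λ) :=
  {y | ∀ i : ℕ, i < w.2.length → w.2[i]? = some (y (w.1 + i))}

def good (D : ℕ) (w : Wd Λ) : Prop :=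
  ∀ p : ℕ, 1 ≤ p → p ≤ D → ∃ i j : ℕ, i < w.2.length ∧ j < w.2.length ∧ j = i + p ∧
    w.2[i]? ≠ w.2[j]?

lemma pat_disc {D : ℕ} {w : Wd Λ} (hg : good D w) {y : ℤ → Λ} (hy : y ∈ pat w)
    {p : ℕ} (hp1 : 1 ≤ p) (hpD : p ≤ D) (hy2 : shl p y ∈ pat w) : False := by
  obtain ⟨i, j, hi, hj, hij, hne⟩ := hg p hp1 hpD
  apply hne
  have e1 : w.2[j]? = some (y (w.1 + j)) := hy j hj
  have e2 : w.2[i]? = some (shl p y (w.1 + i)) := hy2 i hi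
  have e3 : shl p y (w.1 + i) = y (w.1 + i + p) := rfl
  have e4 : w.1 + (j : ℤ) = w.1 + i + p := by omega
  rw [e1, e2, e3, e4]

lemma pat_cover {y : ℤ → Λ} (hap : Aperiodic y) (D : ℕ) (hD : 1 ≤ D) :
    ∃ w : Wd Λ, good D w ∧ y ∈ pat w := by
  have hwit : ∀ p : ℕ, 1 ≤ p → p ≤ D → ∃ b : ℤ, y (b + p) ≠ y b := by
    intro p hp _
    by_contra hcon
    push_neg at hcon
    exact hap p hp (funext (fun i => hcon i))
  classical
  have hbex : ∀ p : ℕ, ∃ b : ℤ, (1 ≤ p → p ≤ D → y (b + p) ≠ y b) := by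
    intro p
    by_cases h : 1 ≤ p ∧ p ≤ D
    · obtain ⟨b, hb⟩ := hwit p h.1 h.2
      exact ⟨b, fun _ _ => hb⟩
    · exact ⟨0, fun h1 h2 => absurd ⟨h1, h2⟩ h⟩
  choose b hbspec using hbex
  have hne : (Finset.Icc 1 D).Nonempty := ⟨1, by simp [hD]⟩
  obtain ⟨lo, hlo⟩ : ∃ lo : ℤ, ∀ p ∈ Finset.Icc 1 D, lo ≤ b p :=
    ⟨(Finset.Icc 1 D).inf' hne b, fun p hp => Finset.inf'_le b hp⟩
  obtain ⟨hi, hhi⟩ : ∃ hi : ℤ, ∀ p ∈ Finset.Icc 1 D, b p + p ≤ hi :=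
    ⟨(Finset.Icc 1 D).sup' hne (fun p => b p + p), fun p hp => Finset.le_sup' (fun p => b p + p) hp⟩
  have hlohi : lo ≤ hi := by
    have h1 := hlo 1 (by simp [hD])
    have h2 := hhi 1 (by simp [hD])
    omega
  set len : ℕ := (hi - lo).toNat + 1 with hlen
  set L : List Λ := (List.range len).map (fun i : ℕ => y (lo + (i : ℤ))) with hL
  have hLlen : L.length = len := by rw [hL, List.length_map, List.length_range]
  have hLget : ∀ i : ℕ, i < len → L[i]? = some (y (lo + (i:ℤ))) := by
    intro i hi2
    rw [hL, List.getElem?_map, List.getElem?_range hi2]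
    rfl
  refine ⟨(lo, L), ?_, ?_⟩
  · intro p hp1 hpD
    have hmem : p ∈ Finset.Icc 1 D := by simp [hp1, hpD]
    have h1 := hlo p hmem
    have h2 := hhi p hmem
    have hp0 : (0:ℤ) < p := by exact_mod_cast hp1
    refine ⟨(b p - lo).toNat, (b p + p - lo).toNat, ?_, ?_, by omega, ?_⟩
    · rw [hLlen]; omega
    · rw [hLlen]; omega
    · show L[((b p - lo).toNat : ℕ)]? ≠ L[((b p + p - lo).toNat : ℕ)]?
      rw [hLget _ (by omega), hLget _ (by omega)]
      intro hcontra
      apply hbspec p hp1 hpD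
      have e1 : lo + (((b p - lo).toNat : ℕ) : ℤ) = b p := by omega
      have e2 : lo + (((b p + p - lo).toNat : ℕ) : ℤ) = b p + p := by omega
      rw [e1, e2] at hcontra
      exact (Option.some_injective _ hcontra).symm
  · intro i hilen
    rw [hLlen] at hilen
    exact hLget i hilen

variable (Λ)

noncomputable def wenum : ℕ → Wd Λ := (exists_surjective_nat (Wd Λ)).choose

lemma wenum_surj : Function.Surjective (wenum Λ) := (exists_surjective_nat (Wd Λ)).choose_spec

def nbd (D : ℕ) (B : Set (ℤ → Λ)) : Set (ℤ → Λ) := {y | ∃ j : ℤ, |j| ≤ D ∧ shl j y ∈ B}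

noncomputable def gpat (D : ℕ) (k : ℕ) : Set (ℤ → Λ) :=
  if good D (wenum Λ k) then pat (wenum Λ k) else ∅

noncomputable def UU (D : ℕ) : ℕ → Set (ℤ → Λ)
  | 0 => ∅
  | k+1 => UU D k ∪ (gpat Λ D k \ nbd Λ D (UU D k))

noncomputable def Amark (D : ℕ) : Set (ℤ → Λ) := ⋃ k, UU Λ D k

variable {Λ}

lemma UU_mono {D : ℕ} {k k' : ℕ} (h : k ≤ k') : UU Λ D k ⊆ UU Λ D k' := by
  induction k' with
  | zero => have : k = 0 := by omega
            subst this; exact subset_rfl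
  | succ n ih =>
    rcases Nat.lt_or_ge k (n+1) with h1 | h1
    · exact (ih (by omega)).trans (Set.subset_union_left)
    · have : k = n + 1 := by omega
      subst this; exact subset_rfl

lemma UU_subset_Amark {D k : ℕ} : UU Λ D k ⊆ Amark Λ D := Set.subset_iUnion (UU Λ D) k

lemma Amark_disc {D : ℕ} {y : ℤ → Λ} {j : ℤ} (hj0 : j ≠ 0) (hjD : |j| ≤ D)
    (h1 : y ∈ Amark Λ D) (h2 : shl j y ∈ Amark Λ D) : False := by
  obtain ⟨s1, ⟨k1, rfl⟩, hk1⟩ := h1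
  obtain ⟨s2, ⟨k2, rfl⟩, hk2⟩ := h2
  -- reduce to common level
  have key : ∀ K : ℕ, ∀ y : ℤ → Λ, ∀ j : ℤ, j ≠ 0 → |j| ≤ D →
      y ∈ UU Λ D K → shl j y ∈ UU Λ D K → False := by
    intro K
    induction K with
    | zero => intro y j _ _ h _; exact h.elim
    | succ n ih =>
      intro y j hj0 hjD hy hyj
      have hj' : -(D:ℤ) ≤ j ∧ j ≤ D := abs_le.mp hjD
      rcases hy with hy | hy <;> rcases hyj with hyj | hyj
      · exact ih y j hj0 hjD hy hyj
      · -- shl j y in piece n, y ∈ UU n: shl j y ∈ nbd via -j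
        apply hyj.2
        exact ⟨-j, by rw [abs_neg]; exact hjD, by rw [shl_shl]; simpa [shl_zero] using hy⟩
      · apply hy.2
        exact ⟨j, hjD, hyj⟩
      · -- both in piece: same pattern
        have hg : good D (wenum Λ n) := by
          by_contra hcon
          have : gpat Λ D n = ∅ := if_neg hcon
          rw [this] at hy
          exact hy.1.elim
        have hyp : y ∈ pat (wenum Λ n) := by
          have : gpat Λ D n = pat (wenum Λ n) := if_pos hg
          rw [this] at hy; exact hy.1
        have hyjp : shl j y ∈ pat (wenum Λ n) := by
          have : gpat Λ D n = pat (wenum Λ n) := if_pos hg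
          rw [this] at hyj; exact hyj.1
        rcases lt_or_gt_of_ne hj0 with hneg | hpos
        · -- j < 0 : apply with base point shl j y and p = -j
          have hp1 : 1 ≤ (-j).toNat := by omega
          have hp2 : (-j).toNat ≤ D := by omega
          have heq : shl (((-j).toNat : ℕ) : ℤ) (shl j y) = y := by
            rw [shl_shl]
            have h0 : (((-j).toNat : ℕ) : ℤ) + j = 0 := by omega
            rw [h0, shl_zero]
          refine pat_disc hg hyjp (p := (-j).toNat) hp1 hp2 ?_
          rw [heq]; exact hyp
        · have hp1 : 1 ≤ j.toNat := by omega
          have hp2 : j.toNat ≤ D := by omega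
          have heq : shl ((j.toNat : ℕ) : ℤ) y = shl j y := by
            have h0 : ((j.toNat : ℕ) : ℤ) = j := by omega
            rw [h0]
          refine pat_disc hg hyp (p := j.toNat) hp1 hp2 ?_
          rw [heq]; exact hyjp
  rcases Nat.le_total k1 k2 with h | h
  · exact key k2 y j hj0 hjD (UU_mono h hk1) hk2
  · exact key k1 y j hj0 hjD hk1 (UU_mono h hk2)

lemma Amark_cover {D : ℕ} {y : ℤ → Λ} (hap : Aperiodic y) (hD : 1 ≤ D) :
    ∃ j : ℤ, |j| ≤ D ∧ shl j y ∈ Amark Λ D := by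
  by_contra hcon
  push_neg at hcon
  obtain ⟨w, hgood, hpat⟩ := pat_cover hap D hD
  obtain ⟨k, hk⟩ := wenum_surj Λ w
  have hy1 : y ∈ gpat Λ D k := by
    rw [gpat, hk, if_pos hgood]
    exact hpat
  have hy2 : y ∉ nbd Λ D (UU Λ D k) := by
    rintro ⟨j, hj1, hj2⟩
    exact hcon j hj1 (UU_subset_Amark hj2)
  have : y ∈ UU Λ D (k+1) := Or.inr ⟨hy1, hy2⟩
  apply hcon 0 (by simp)
  rw [shl_zero]
  exact UU_subset_Amark this

/-- The marker set of `y` at scale `D`. -/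
noncomputable def Mk (D : ℕ) (y : ℤ → Λ) : Set ℤ := {k | shl k y ∈ Amark Λ D}

lemma Mk_shift (D : ℕ) (y : ℤ → Λ) : Mk D (shift y) = shiftSet (Mk D y) := by
  ext k
  show shl k (shl 1 y) ∈ Amark Λ D ↔ shl (k+1) y ∈ Amark Λ D
  rw [shl_shl]

lemma Mk_disc {D : ℕ} {y : ℤ → Λ} {a b : ℤ} (ha : a ∈ Mk D y) (hb : b ∈ Mk D y)
    (hne : a ≠ b) (hcl : |a - b| ≤ D) : False := by
  have hcl' : -(D:ℤ) ≤ a - b ∧ a - b ≤ D := abs_le.mp hcl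
  apply Amark_disc (Λ := Λ) (D := D) (y := shl a y) (j := b - a) (by omega)
    (abs_le.mpr ⟨by omega, by omega⟩) ha
  rw [shl_shl]
  have : b - a + a = b := by ring
  rw [this]
  exact hb

lemma aperiodic_shl {y : ℤ → Λ} (hap : Aperiodic y) (i : ℤ) : Aperiodic (shl i y) := by
  intro p hp heq
  apply hap p hp
  funext x
  have := congrFun heq (x - i)
  show y (x + p) = y x
  have e1 : shl i y (x - i + p) = y (x + p - i + i) := by show y (x - i + p + i) = _; ring_nf
  have e2 : shl i y (x - i) = y (x - i + i) := rfl
  rw [e1, e2] at this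
  have e3 : x + p - i + i = x + p := by ring
  have e4 : x - i + i = x := by ring
  rwa [e3, e4] at this

lemma Mk_cover {D : ℕ} {y : ℤ → Λ} (hap : Aperiodic y) (hD : 1 ≤ D) (i : ℤ) :
    ∃ m ∈ Mk D y, i - D ≤ m ∧ m ≤ i + D := by
  obtain ⟨j, hj1, hj2⟩ := Amark_cover (aperiodic_shl hap i) hD
  have hj1' : -(D:ℤ) ≤ j ∧ j ≤ D := abs_le.mp hj1
  refine ⟨j + i, ?_, by omega, by omega⟩
  show shl (j+i) y ∈ Amark Λ D
  rw [← shl_shl]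
  exact hj2

end Markers

section Ell
variable {Λ : Type*} [Countable Λ]

/-- a helper: equality of `Nat.find` for pointwise-equivalent predicates -/
lemma find_congr {P Q : ℕ → Prop} [DecidablePred P] [DecidablePred Q]
    (hP : ∃ n, P n) (hQ : ∃ n, Q n) (h : ∀ n, P n ↔ Q n) : Nat.find hP = Nat.find hQ := by
  apply le_antisymm
  · exact Nat.find_le ((h _).mpr (Nat.find_spec hQ))
  · exact Nat.find_le ((h _).mp (Nat.find_spec hP))

/-- the start of the marker-block containing `i` (junk value `i` in degenerate cases) -/
noncomputable def ell (D : ℕ) (y : ℤ → Λ) (i : ℤ) : ℤ :=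
  if h : ∃ k : ℕ, k ≤ 2*D ∧ (i - k) ∈ Mk D y then i - Nat.find h else i

variable {D : ℕ} {y : ℤ → Λ}

lemma ell_ex (hap : Aperiodic y) (hD : 1 ≤ D) (i : ℤ) :
    ∃ k : ℕ, k ≤ 2*D ∧ (i - k) ∈ Mk D y := by
  obtain ⟨m, hm, h1, h2⟩ := Mk_cover hap hD (i - D)
  refine ⟨(i - m).toNat, by omega, ?_⟩
  have h3 : i - (((i - m).toNat : ℕ) : ℤ) = m := by omega
  rw [h3]
  exact hm

lemma ell_spec (hap : Aperiodic y) (hD : 1 ≤ D) (i : ℤ) :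
    ell D y i ∈ Mk D y ∧ i - 2*D ≤ ell D y i ∧ ell D y i ≤ i := by
  have h := ell_ex hap hD i
  rw [ell, dif_pos h]
  have h1 := Nat.find_spec h
  have h2 : (Nat.find h : ℤ) ≤ 2*D := by exact_mod_cast h1.1
  exact ⟨h1.2, by omega, by omega⟩

lemma ell_max (hap : Aperiodic y) (hD : 1 ≤ D) {i m : ℤ} (hm : m ∈ Mk D y)
    (h1 : ell D y i < m) (h2 : m ≤ i) : False := by
  have h := ell_ex hap hD i
  rw [ell, dif_pos h] at h1
  have hk : (i - m).toNat < Nat.find h := by omega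
  apply Nat.find_min h hk
  have h4 : (Nat.find h : ℤ) ≤ 2*D := by exact_mod_cast (Nat.find_spec h).1
  constructor
  · omega
  · have h3 : i - (((i - m).toNat : ℕ) : ℤ) = m := by omega
    rw [h3]
    exact hm

lemma ell_mono (hap : Aperiodic y) (hD : 1 ≤ D) (i : ℤ) : ell D y i ≤ ell D y (i+1) := by
  by_contra hcon
  push_neg at hcon
  obtain ⟨hmem, _, hle⟩ := ell_spec hap hD i
  exact ell_max hap hD hmem hcon (by omega)

lemma ell_step (hap : Aperiodic y) (hD : 1 ≤ D) (i : ℤ) :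
    ell D y (i+1) = ell D y i ∨ ell D y (i+1) = i+1 := by
  obtain ⟨hmem1, hge1, hle1⟩ := ell_spec hap hD (i+1)
  obtain ⟨hmem0, hge0, hle0⟩ := ell_spec hap hD i
  rcases eq_or_lt_of_le hle1 with h | h
  · right; exact h
  · left
    have h2 : ell D y (i+1) ≤ ell D y i := by
      by_contra hcon
      push_neg at hcon
      exact ell_max hap hD hmem1 hcon (by omega)
    have h3 := ell_mono hap hD i
    omega

lemma ell_const (hap : Aperiodic y) (hD : 1 ≤ D) (a : ℤ) (n : ℕ)
    (hno : ∀ j : ℤ, a < j → j ≤ a + n → ell D y j ≠ j) :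
    ∀ k : ℕ, k ≤ n → ell D y (a + k) = ell D y a := by
  intro k
  induction k with
  | zero => intro _; norm_num
  | succ m ih =>
    intro hm
    have e1 : (a + ((m+1 : ℕ) : ℤ)) = (a + (m:ℤ)) + 1 := by push_cast; ring
    rcases ell_step hap hD (a + m) with h | h
    · rw [e1, h, ih (by omega)]
    · exfalso
      apply hno ((a+(m:ℤ))+1 : ℤ) (by omega) ?_
      · exact h
      · push_cast; omega

lemma ell_blockstart_mem (hap : Aperiodic y) (hD : 1 ≤ D) {i : ℤ} (h : ell D y i = i) :
    i ∈ Mk D y := by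
  have := (ell_spec hap hD i).1
  rwa [h] at this

lemma ell_shift (D : ℕ) (y : ℤ → Λ) (i : ℤ) : ell D (shift y) i = ell D y (i+1) - 1 := by
  unfold ell
  have hiff : ∀ k : ℕ, (k ≤ 2*D ∧ (i - k) ∈ Mk D (shift y)) ↔
      (k ≤ 2*D ∧ ((i+1) - k) ∈ Mk D y) := by
    intro k
    rw [Mk_shift]
    constructor
    · rintro ⟨h1, h2⟩
      refine ⟨h1, ?_⟩
      have : (i + 1 - (k:ℤ)) = (i - k) + 1 := by ring
      rw [this]
      exact h2
    · rintro ⟨h1, h2⟩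
      refine ⟨h1, ?_⟩
      show (i - (k:ℤ)) + 1 ∈ Mk D y
      have : (i - (k:ℤ)) + 1 = (i + 1 - k) := by ring
      rw [this]
      exact h2
  by_cases h : ∃ k : ℕ, k ≤ 2*D ∧ (i - k) ∈ Mk D (shift y)
  · have h' : ∃ k : ℕ, k ≤ 2*D ∧ ((i+1) - k) ∈ Mk D y := by
      obtain ⟨k, hk⟩ := h
      exact ⟨k, (hiff k).mp hk⟩
    rw [dif_pos h, dif_pos h', find_congr h h' hiff]
    ring
  · have h' : ¬ ∃ k : ℕ, k ≤ 2*D ∧ ((i+1) - k) ∈ Mk D y := by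
      intro hcon
      obtain ⟨k, hk⟩ := hcon
      exact h ⟨k, (hiff k).mpr hk⟩
    rw [dif_neg h, dif_neg h']
    ring

end Ell

section Sel
variable {Λ : Type*} [Countable Λ]

noncomputable def ind (A : Set ℤ) (i : ℤ) : ℕ := if i ∈ A then 1 else 0

/-- rank of `i` within its block -/
noncomputable def Rk (D : ℕ) (y : ℤ → Λ) (A : Set ℤ) (i : ℤ) : ℕ := cntIn A (ell D y i) i

/-- the β-proportional selection from `A`, along the block structure of `y` at scale `D` -/
noncomputable def sel (D : ℕ) (y : ℤ → Λ) (A : Set ℤ) (β : ℝ) : Set ℤ :=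
  {i | i ∈ A ∧ ⌊β * ((Rk D y A i : ℝ) + 1)⌋ > ⌊β * (Rk D y A i : ℝ)⌋}

variable {D : ℕ} {y : ℤ → Λ} {A : Set ℤ} {β : ℝ}

lemma sel_subset : sel D y A β ⊆ A := fun _ hi => hi.1

lemma cntIn_single (X : Set ℤ) (a : ℤ) : cntIn X a (a+1) = ind X a := by
  have h := cntIn_succ_right X (le_refl a)
  have h0 : cntIn X a a = 0 := by
    unfold cntIn
    rw [Finset.Ico_self, Finset.filter_empty, Finset.card_empty]
  rw [h0] at h
  simpa [ind] using h

lemma flo_mono (hβ0 : 0 ≤ β) {r s : ℝ} (h : r ≤ s) : ⌊β * r⌋ ≤ ⌊β * s⌋ :=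
  Int.floor_mono (by nlinarith)

lemma flo_succ (hβ1 : β ≤ 1) (hβ0 : 0 ≤ β) (x : ℝ) : ⌊β * (x + 1)⌋ ≤ ⌊β * x⌋ + 1 := by
  have h1 : β * (x+1) ≤ β * x + 1 := by nlinarith
  calc ⌊β * (x+1)⌋ ≤ ⌊β * x + 1⌋ := Int.floor_mono h1
  _ = ⌊β * x⌋ + 1 := by exact_mod_cast Int.floor_add_intCast (β * x) 1

/-- the pointwise telescoping identity -/
lemma sel_ind (hβ0 : 0 ≤ β) (hβ1 : β ≤ 1) (i : ℤ) :
    (ind (sel D y A β) i : ℤ)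
      = ⌊β * ((Rk D y A i : ℝ) + (ind A i : ℝ))⌋ - ⌊β * (Rk D y A i : ℝ)⌋ := by
  by_cases hiA : i ∈ A
  · have hA : (ind A i : ℝ) = 1 := by simp [ind, hiA]
    rw [hA]
    by_cases hisel : i ∈ sel D y A β
    · have h1 : (ind (sel D y A β) i : ℤ) = 1 := by simp [ind, hisel]
      rw [h1]
      have h2 := hisel.2
      have h3 := flo_succ hβ1 hβ0 (Rk D y A i : ℝ)
      omega
    · have h1 : (ind (sel D y A β) i : ℤ) = 0 := by simp [ind, hisel]
      rw [h1]
      have h2 : ¬ (⌊β * ((Rk D y A i : ℝ) + 1)⌋ > ⌊β * (Rk D y A i : ℝ)⌋) :=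
        fun hcon => hisel ⟨hiA, hcon⟩
      have h3 : ⌊β * (Rk D y A i : ℝ)⌋ ≤ ⌊β * ((Rk D y A i : ℝ) + 1)⌋ :=
        flo_mono hβ0 (by linarith)
      omega
  · have h1 : (ind (sel D y A β) i : ℤ) = 0 := by
      simp only [ind]
      rw [if_neg (fun hcon => hiA (sel_subset hcon))]
      rfl
    have hA : (ind A i : ℝ) = 0 := by simp [ind, hiA]
    rw [h1, hA, add_zero]
    omega

lemma Rk_step (hap : Aperiodic y) (hD : 1 ≤ D) {i : ℤ} (h : ell D y (i+1) = ell D y i) :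
    Rk D y A (i+1) = Rk D y A i + ind A i := by
  unfold Rk
  rw [h]
  have hle : ell D y i ≤ i := (ell_spec hap hD i).2.2
  rw [cntIn_succ_right A hle]
  rfl

/-- counting over a single block piece -/
lemma piece (hap : Aperiodic y) (hD : 1 ≤ D) (hβ0 : 0 ≤ β) (hβ1 : β ≤ 1) (a : ℤ) :
    ∀ b : ℤ, a ≤ b → (∀ j : ℤ, a ≤ j → j ≤ b → ell D y j = ell D y a) →
    ((cntIn (sel D y A β) a (b+1) : ℤ)
        = ⌊β * ((Rk D y A b : ℝ) + (ind A b : ℝ))⌋ - ⌊β * (Rk D y A a : ℝ)⌋)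
    ∧ ((cntIn A a (b+1) : ℤ) = (Rk D y A b + ind A b) - (Rk D y A a : ℤ)) := by
  have H : ∀ n : ℕ, (∀ j : ℤ, a ≤ j → j ≤ a + n → ell D y j = ell D y a) →
      ((cntIn (sel D y A β) a ((a + (n:ℤ))+1) : ℤ)
        = ⌊β * ((Rk D y A (a + (n:ℤ)) : ℝ) + (ind A (a + (n:ℤ)) : ℝ))⌋ - ⌊β * (Rk D y A a : ℝ)⌋)
      ∧ ((cntIn A a ((a + (n:ℤ))+1) : ℤ)
        = (Rk D y A (a + (n:ℤ)) + ind A (a + (n:ℤ))) - (Rk D y A a : ℤ)) := by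
    intro n
    induction n with
    | zero =>
      intro _
      have e0 : a + ((0:ℕ):ℤ) = a := by norm_num
      rw [e0, cntIn_single, cntIn_single]
      exact ⟨sel_ind hβ0 hβ1 a, by push_cast; ring⟩
    | succ m ih =>
      intro hconst
      have hcast : a + (((m+1) : ℕ) : ℤ) = (a + (m:ℤ)) + 1 := by push_cast; ring
      rw [hcast]
      set i : ℤ := a + (m:ℤ) with hi
      have ihc : ∀ j : ℤ, a ≤ j → j ≤ a + (m:ℕ) → ell D y j = ell D y a :=
        fun j h1 h2 => hconst j h1 (by push_cast at h2 ⊢; omega)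
      obtain ⟨ih1, ih2⟩ := ih ihc
      have hstep : ell D y (i+1) = ell D y i := by
        have c1 : ell D y (i+1) = ell D y a := hconst (i+1) (by omega) (by push_cast; omega)
        have c2 : ell D y i = ell D y a := hconst i (by omega) (by push_cast; omega)
        rw [c1, c2]
      have hRstep : Rk D y A (i+1) = Rk D y A i + ind A i := Rk_step hap hD hstep
      have hext : ∀ X : Set ℤ, cntIn X a ((i+1)+1) = cntIn X a (i+1) + ind X (i+1) := by
        intro X
        rw [cntIn_succ_right X (by omega)]
        rfl
      constructor
      · rw [hext (sel D y A β)]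
        have hsi := sel_ind (D := D) (y := y) (A := A) hβ0 hβ1 (i+1)
        have hcast2 : ((Rk D y A i : ℝ) + (ind A i : ℝ)) = (Rk D y A (i+1) : ℝ) := by
          rw [hRstep]; push_cast; ring
        rw [hcast2] at ih1
        push_cast
        push_cast at ih1 hsi
        linarith [ih1, hsi]
      · rw [hext A]
        push_cast
        push_cast at ih2 hRstep
        linarith [ih2, hRstep]
  intro b hab hconst
  obtain ⟨n, rfl⟩ : ∃ n : ℕ, b = a + n := ⟨(b - a).toNat, by omega⟩
  exact H n hconst

lemma ell_const' (hap : Aperiodic y) (hD : 1 ≤ D) {x b : ℤ} (hxb : x ≤ b)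
    (hno : ∀ j : ℤ, x < j → j ≤ b → ell D y j ≠ j) :
    ∀ j : ℤ, x ≤ j → j ≤ b → ell D y j = ell D y x := by
  intro j h1 h2
  have hmain := ell_const hap hD x (b - x).toNat
    (fun j hj1 hj2 => hno j hj1 (by omega)) (j - x).toNat (by omega)
  have e : x + (((j - x).toNat : ℕ) : ℤ) = j := by omega
  rw [e] at hmain
  exact hmain

lemma piece_bound (hap : Aperiodic y) (hD : 1 ≤ D) (hβ0 : 0 ≤ β) (hβ1 : β ≤ 1) {a b : ℤ}
    (hab : a ≤ b) (hconst : ∀ j : ℤ, a ≤ j → j ≤ b → ell D y j = ell D y a) :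
    |(cntIn (sel D y A β) a (b+1) : ℝ) - β * (cntIn A a (b+1) : ℝ)| ≤ 1 := by
  obtain ⟨e1, e2⟩ := piece hap hD hβ0 hβ1 a b hab hconst
  set RB : ℝ := (Rk D y A b : ℝ) + (ind A b : ℝ) with hRB
  set RA : ℝ := (Rk D y A a : ℝ) with hRA
  have c1 : (cntIn (sel D y A β) a (b+1) : ℝ) = (⌊β * RB⌋ : ℝ) - (⌊β * RA⌋ : ℝ) := by
    exact_mod_cast congrArg (fun z : ℤ => (z : ℝ)) e1
  have c2 : (cntIn A a (b+1) : ℝ) = RB - RA := by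
    have c2' := congrArg (fun z : ℤ => (z : ℝ)) e2
    push_cast at c2'
    rw [hRB, hRA]
    linarith [c2']
  have f1a : (⌊β * RB⌋ : ℝ) ≤ β * RB := Int.floor_le _
  have f1b : β * RB - 1 < (⌊β * RB⌋ : ℝ) := Int.sub_one_lt_floor _
  have f2a : (⌊β * RA⌋ : ℝ) ≤ β * RA := Int.floor_le _
  have f2b : β * RA - 1 < (⌊β * RA⌋ : ℝ) := Int.sub_one_lt_floor _
  rw [c1, c2, abs_le]
  constructor <;> nlinarith

/-- number of block starts strictly inside the window -/
noncomputable def bsCnt (D : ℕ) (y : ℤ → Λ) (a b : ℤ) : ℕ :=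
  ((Finset.Ico (a+1) b).filter (fun i => ell D y i = i)).card

lemma window (hap : Aperiodic y) (hD : 1 ≤ D) (hβ0 : 0 ≤ β) (hβ1 : β ≤ 1) :
    ∀ N : ℕ, ∀ a : ℤ,
      |(cntIn (sel D y A β) a (a+N) : ℝ) - β * (cntIn A a (a+N) : ℝ)|
        ≤ (bsCnt D y a (a+N) : ℝ) + 1 := by
  intro N
  induction N using Nat.strong_induction_on with
  | _ N IH =>
  intro a
  rcases Nat.eq_zero_or_pos N with h0 | hpos
  · subst h0
    have e0 : (a + ((0:ℕ):ℤ)) = a := by norm_num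
    have hz : cntIn (sel D y A β) a (a + ((0:ℕ):ℤ)) = 0 ∧ cntIn A a (a + ((0:ℕ):ℤ)) = 0 := by
      rw [e0]
      unfold cntIn
      rw [Finset.Ico_self, Finset.filter_empty, Finset.card_empty]
      exact ⟨rfl, rfl⟩
    rw [hz.1, hz.2]
    simp
    positivity
  · set S := (Finset.Ico (a+1) (a+(N:ℤ))).filter (fun i => ell D y i = i) with hSdef
    have hbs : bsCnt D y a (a + (N:ℤ)) = S.card := rfl
    rcases S.eq_empty_or_nonempty with hSe | hSne
    · -- single piece
      have hno : ∀ j : ℤ, a < j → j ≤ a + (N:ℤ) - 1 → ell D y j ≠ j := by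
        intro j h1 h2 hcon
        have : j ∈ S := by
          rw [hSdef, Finset.mem_filter, Finset.mem_Ico]
          exact ⟨⟨by omega, by omega⟩, hcon⟩
        rw [hSe] at this
        exact absurd this (Finset.notMem_empty j)
      have hconst := ell_const' hap hD (x := a) (b := a + (N:ℤ) - 1) (by omega) hno
      have hb1 : (a + (N:ℤ)) = (a + (N:ℤ) - 1) + 1 := by ring
      rw [hb1]
      have := piece_bound (A := A) hap hD hβ0 hβ1 (a := a) (b := a + (N:ℤ) - 1) (by omega) hconst
      apply this.trans
      have : (0:ℝ) ≤ (bsCnt D y a (a + (N:ℤ)) : ℝ) := by positivity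
      rw [← hb1]
      linarith
    · -- split at the last block start
      set m := S.max' hSne with hm
      have hmS : m ∈ S := S.max'_mem hSne
      have hmax : ∀ j ∈ S, j ≤ m := fun j hj => S.le_max' j hj
      rw [hSdef, Finset.mem_filter, Finset.mem_Ico] at hmS
      obtain ⟨⟨hm1, hm2⟩, hm3⟩ := hmS
      -- split the counts
      have hsplit : ∀ X : Set ℤ, cntIn X a (a + (N:ℤ))
          = cntIn X a m + cntIn X m (a + (N:ℤ)) :=
        fun X => cntIn_split X (by omega) (by omega)
      -- right piece
      have hno_r : ∀ j : ℤ, m < j → j ≤ a + (N:ℤ) - 1 → ell D y j ≠ j := by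
        intro j h1 h2 hcon
        have hjS : j ∈ S := by
          rw [hSdef, Finset.mem_filter, Finset.mem_Ico]
          exact ⟨⟨by omega, by omega⟩, hcon⟩
        have := hmax j hjS
        omega
      have hconst_r := ell_const' hap hD (x := m) (b := a + (N:ℤ) - 1) (by omega) hno_r
      have hright := piece_bound (A := A) hap hD hβ0 hβ1 (a := m) (b := a + (N:ℤ) - 1) (by omega) hconst_r
      have hb1 : (a + (N:ℤ) - 1) + 1 = (a + (N:ℤ)) := by ring
      rw [hb1] at hright
      -- left piece by induction
      set N' : ℕ := (m - a).toNat with hN'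
      have hN'lt : N' < N := by omega
      have hma : a + (N' : ℤ) = m := by omega
      have hleft := IH N' hN'lt a
      rw [hma] at hleft
      -- block start counts
      have hbsle : (bsCnt D y a m : ℝ) + 1 ≤ (bsCnt D y a (a + (N:ℤ)) : ℝ) := by
        have hsub : insert m ((Finset.Ico (a+1) m).filter (fun i => ell D y i = i)) ⊆ S := by
          intro j hj
          rcases Finset.mem_insert.mp hj with rfl | hj2
          · rw [hSdef, Finset.mem_filter, Finset.mem_Ico]
            exact ⟨⟨by omega, by omega⟩, hm3⟩
          · rw [Finset.mem_filter, Finset.mem_Ico] at hj2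
            rw [hSdef, Finset.mem_filter, Finset.mem_Ico]
            exact ⟨⟨by omega, by omega⟩, hj2.2⟩
        have hnotmem : m ∉ (Finset.Ico (a+1) m).filter (fun i => ell D y i = i) := by
          intro hcon
          rw [Finset.mem_filter, Finset.mem_Ico] at hcon
          omega
        have hcard := Finset.card_le_card hsub
        rw [Finset.card_insert_of_notMem hnotmem] at hcard
        have : bsCnt D y a m + 1 ≤ S.card := hcard
        rw [hbs]
        exact_mod_cast this
      -- combine
      rw [hsplit (sel D y A β), hsplit A]
      have habs : |((cntIn (sel D y A β) a m + cntIn (sel D y A β) m (a + (N:ℤ)) : ℕ) : ℝ)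
          - β * ((cntIn A a m + cntIn A m (a + (N:ℤ)) : ℕ) : ℝ)|
          ≤ |(cntIn (sel D y A β) a m : ℝ) - β * (cntIn A a m : ℝ)|
            + |(cntIn (sel D y A β) m (a + (N:ℤ)) : ℝ) - β * (cntIn A m (a + (N:ℤ)) : ℝ)| := by
        push_cast
        have e : ((cntIn (sel D y A β) a m : ℝ) + (cntIn (sel D y A β) m (a + (N:ℤ)) : ℝ))
            - β * ((cntIn A a m : ℝ) + (cntIn A m (a + (N:ℤ)) : ℝ))
            = ((cntIn (sel D y A β) a m : ℝ) - β * (cntIn A a m : ℝ))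
              + ((cntIn (sel D y A β) m (a + (N:ℤ)) : ℝ) - β * (cntIn A m (a + (N:ℤ)) : ℝ)) := by
          ring
        rw [e]
        exact abs_add_le _ _
      apply habs.trans
      have := add_le_add hleft hright
      apply this.trans
      linarith

/-- block starts are `D+1`-separated, so there are few of them -/
lemma bs_mul_le (hap : Aperiodic y) (hD : 1 ≤ D) (a : ℤ) (N : ℕ) :
    bsCnt D y a (a + (N:ℤ)) * (D+1) ≤ N + D := by
  set S := (Finset.Ico (a+1) (a+(N:ℤ))).filter (fun i => ell D y i = i) with hSdef
  have hbs : bsCnt D y a (a + (N:ℤ)) = S.card := rfl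
  rcases Nat.lt_or_ge N 2 with hN2 | hN2
  · have : S = ∅ := by
      rw [hSdef]
      apply Finset.filter_false_of_mem
      intro i hi
      rw [Finset.mem_Ico] at hi
      intro _
      omega
    rw [hbs, this, Finset.card_empty]
    omega
  · have hmem : ∀ x ∈ S, a + 1 ≤ x ∧ x ≤ a + (N:ℤ) - 1 := by
      intro x hx
      rw [hSdef, Finset.mem_filter, Finset.mem_Ico] at hx
      omega
    have hgap : ∀ x ∈ S, ∀ z ∈ S, x ≠ z → (D:ℤ)+1 ≤ |x - z| := by
      intro x hx z hz hne
      by_contra hcon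
      push_neg at hcon
      rw [hSdef, Finset.mem_filter] at hx hz
      exact Mk_disc (ell_blockstart_mem hap hD hx.2) (ell_blockstart_mem hap hD hz.2) hne
        (by omega)
    set f : ℤ → ℕ := fun x => ((x - (a+1)).toNat)/(D+1) with hf
    have hinj : Set.InjOn f S := by
      intro x hx z hz hfe
      by_contra hne
      have hgapx := hgap x hx z hz hne
      have h1 := (hmem x hx).1
      have h2 := (hmem z hz).1
      have key : ∀ u v : ℤ, a + 1 ≤ u → a + 1 ≤ v → u + (D:ℤ) + 1 ≤ v → f u ≠ f v := by
        intro u v hu hv huv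
        have e1 : (v - (a+1)).toNat ≥ (u - (a+1)).toNat + (D+1) := by omega
        have e2 : (v - (a+1)).toNat / (D+1) ≥ ((u - (a+1)).toNat + (D+1)) / (D+1) :=
          Nat.div_le_div_right e1
        rw [Nat.add_div_right _ (by omega)] at e2
        have e3 : (u - (a+1)).toNat / (D+1) < (v - (a+1)).toNat / (D+1) := by omega
        simp only [hf]
        omega
      rcases lt_or_gt_of_ne hne with hlt | hgt
      · exact key x z h1 h2 (by rw [abs_sub_comm] at hgapx; rw [abs_of_nonneg (by omega)] at hgapx; omega) hfe
      · exact (key z x h2 h1 (by rw [abs_of_nonneg (by omega)] at hgapx; omega) (Eq.symm hfe))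
    have hrange : ∀ x ∈ S, f x ∈ Finset.range ((N-2)/(D+1) + 1) := by
      intro x hx
      rw [Finset.mem_range]
      have h2 := (hmem x hx).2
      have e1 : (x - (a+1)).toNat ≤ N - 2 := by omega
      have e2 : (x - (a+1)).toNat / (D+1) ≤ (N-2)/(D+1) := Nat.div_le_div_right e1
      simp only [hf]
      omega
    have hcard : S.card ≤ (N-2)/(D+1) + 1 := by
      have := Finset.card_le_card_of_injOn f hrange hinj
      simpa using this
    rw [hbs]
    calc S.card * (D+1) ≤ ((N-2)/(D+1) + 1) * (D+1) := Nat.mul_le_mul_right _ hcard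
    _ = ((N-2)/(D+1)) * (D+1) + (D+1) := by ring
    _ ≤ (N-2) + (D+1) := by
        have := Nat.div_mul_le_self (N-2) (D+1)
        omega
    _ ≤ N + D := by omega

lemma bs_real_le (hap : Aperiodic y) (hD : 1 ≤ D) (a : ℤ) (N : ℕ) :
    (bsCnt D y a (a + (N:ℤ)) : ℝ) + 1 ≤ (1/((D:ℝ)+1)) * N + 2 := by
  have h := bs_mul_le hap hD a N
  have hDpos : (0:ℝ) < (D:ℝ) + 1 := by positivity
  have h2 : (bsCnt D y a (a + (N:ℤ)) : ℝ) * ((D:ℝ)+1) ≤ (N:ℝ) + D := by exact_mod_cast h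
  rw [← sub_nonneg]
  have key : (bsCnt D y a (a + (N:ℤ)) : ℝ) ≤ ((N:ℝ) + D) / ((D:ℝ)+1) := by
    rw [le_div_iff₀ hDpos]
    exact h2
  have e1 : ((N:ℝ) + D) / ((D:ℝ)+1) = (N:ℝ)/((D:ℝ)+1) + ((D:ℝ))/((D:ℝ)+1) := by ring
  have e2 : ((D:ℝ))/((D:ℝ)+1) ≤ 1 := by
    rw [div_le_one hDpos]; linarith
  have e3 : (1/((D:ℝ)+1)) * N = (N:ℝ)/((D:ℝ)+1) := by ring
  rw [e3]
  linarith [key, e2, e1.le, e1.ge]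

lemma cnt_split_subset {J : Set ℤ} (hJA : J ⊆ A) (x z : ℤ) :
    cntIn A x z = cntIn J x z + cntIn (A \ J) x z := by
  unfold cntIn
  have hdisj : Disjoint ((Finset.Ico x z).filter (· ∈ J))
      ((Finset.Ico x z).filter (· ∈ A \ J)) := by
    rw [Finset.disjoint_left]
    intro i hi1 hi2
    rw [Finset.mem_filter] at hi1 hi2
    exact absurd hi1.2 hi2.2.2
  have hpart : (Finset.Ico x z).filter (· ∈ A)
      = ((Finset.Ico x z).filter (· ∈ J)) ∪ ((Finset.Ico x z).filter (· ∈ A \ J)) := by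
    ext i
    simp only [Finset.mem_union, Finset.mem_filter, Set.mem_diff]
    constructor
    · rintro ⟨h1, h2⟩
      by_cases hJ : i ∈ J
      · exact Or.inl ⟨h1, hJ⟩
      · exact Or.inr ⟨h1, h2, hJ⟩
    · rintro (⟨h1, h2⟩ | ⟨h1, h2, _⟩)
      · exact ⟨h1, hJA h2⟩
      · exact ⟨h1, h2⟩
  rw [hpart, Finset.card_union_of_disjoint hdisj]
  congr 1
  apply Finset.card_bij (fun a _ => a) <;> simp

/-- density lower bound for the selected set -/
lemma sel_dens (hap : Aperiodic y) (hD : 1 ≤ D) (hβ0 : 0 ≤ β) (hβ1 : β ≤ 1) :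
    β * lowerUniformDensity A ≤ lowerUniformDensity (sel D y A β) + 1/((D:ℝ)+1) := by
  apply den_compare hβ0 hβ1 (by positivity) (by norm_num : (0:ℝ) ≤ 2)
  intro a N
  have h1 := window (A := A) hap hD hβ0 hβ1 N a
  have h2 := bs_real_le hap hD a N
  have h3 := abs_le.mp h1
  linarith [h3.1, h3.2]

/-- density lower bound for the remainder -/
lemma rem_dens (hap : Aperiodic y) (hD : 1 ≤ D) (hβ0 : 0 ≤ β) (hβ1 : β ≤ 1) :
    (1-β) * lowerUniformDensity A
      ≤ lowerUniformDensity (A \ sel D y A β) + 1/((D:ℝ)+1) := by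
  apply den_compare (by linarith) (by linarith) (by positivity) (by norm_num : (0:ℝ) ≤ 2)
  intro a N
  have h1 := window (A := A) hap hD hβ0 hβ1 N a
  have h2 := bs_real_le hap hD a N
  have h3 := abs_le.mp h1
  have h4 := cnt_split_subset (A := A) (J := sel D y A β) sel_subset a (a + (N:ℤ))
  have h5 : (cntIn A a (a + (N:ℤ)) : ℝ)
      = (cntIn (sel D y A β) a (a + (N:ℤ)) : ℝ) + (cntIn (A \ sel D y A β) a (a + (N:ℤ)) : ℝ) := by
    exact_mod_cast h4
  linarith [h3.1, h3.2]

/-- equivariance of the selection -/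
lemma Rk_shift (D : ℕ) (y : ℤ → Λ) (A : Set ℤ) (i : ℤ) :
    Rk D (shift y) (shiftSet A) i = Rk D y A (i+1) := by
  unfold Rk
  rw [ell_shift, cntIn_shift]
  congr 1
  ring

lemma sel_shift (D : ℕ) (y : ℤ → Λ) (A : Set ℤ) (β : ℝ) :
    sel D (shift y) (shiftSet A) β = shiftSet (sel D y A β) := by
  ext i
  show (i ∈ shiftSet A ∧ _) ↔ (i + 1 ∈ A ∧ _)
  rw [Rk_shift]
  exact Iff.rfl

end Sel

section Assemble
variable {Λ : Type*} [Countable Λ]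

/-- robust (clamped) sum of a series, agreeing with the sum for nonneg series with sum < 1 -/
noncomputable def cHat (t : ℕ → ℝ) : ℝ :=
  ⨆ N : ℕ, min 1 (max 0 (∑ j ∈ Finset.range N, t j))

lemma cHat_eq {t : ℕ → ℝ} {c : ℝ} (ht0 : ∀ n, 0 ≤ t n) (hsum : HasSum t c) (hc1 : c < 1) :
    cHat t = c := by
  have hpart : ∀ N, ∑ j ∈ Finset.range N, t j ≤ c := by
    intro N
    exact sum_le_hasSum (Finset.range N) (fun j _ => ht0 j) hsum
  have hpos : ∀ N, 0 ≤ ∑ j ∈ Finset.range N, t j := fun N => Finset.sum_nonneg (fun j _ => ht0 j)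
  have hclamp : ∀ N, min 1 (max 0 (∑ j ∈ Finset.range N, t j)) = ∑ j ∈ Finset.range N, t j := by
    intro N
    rw [max_eq_right (hpos N), min_eq_right ((hpart N).trans hc1.le)]
  unfold cHat
  have hmono : Monotone (fun N => ∑ j ∈ Finset.range N, t j) := by
    intro a b hab
    exact Finset.sum_le_sum_of_subset_of_nonneg (Finset.range_subset_range.mpr hab)
      (fun j _ _ => ht0 j)
  have hbdd : BddAbove (Set.range (fun N => min 1 (max 0 (∑ j ∈ Finset.range N, t j)))) := by
    refine ⟨1, ?_⟩
    rintro x ⟨N, rfl⟩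
    exact min_le_left _ _
  have htend : Filter.Tendsto (fun N => min 1 (max 0 (∑ j ∈ Finset.range N, t j)))
      Filter.atTop (nhds c) := by
    have := hsum.tendsto_sum_nat
    apply this.congr
    intro N
    exact (hclamp N).symm
  have hmono' : Monotone (fun N => min 1 (max 0 (∑ j ∈ Finset.range N, t j))) := by
    intro a b hab
    exact min_le_min (le_refl 1) (max_le_max (le_refl 0) (hmono hab))
  have h2 := tendsto_atTop_ciSup hmono' hbdd
  exact tendsto_nhds_unique h2 htend

/-- per-step error budget -/
noncomputable def eS (s c : ℝ) (n : ℕ) : ℝ := (1 - c) * s * (1/2:ℝ)^n / 12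

lemma eS_pos {s c : ℝ} (hs : 0 < s) (hc : c < 1) (n : ℕ) : 0 < eS s c n := by
  unfold eS
  have h1 : (0:ℝ) < 1 - c := by linarith
  positivity

lemma eS_sum_le {s c : ℝ} (hs : 0 ≤ s) (hc : c ≤ 1) (m : ℕ) :
    ∑ j ∈ Finset.range m, eS s c j ≤ (1 - c) * s / 6 := by
  unfold eS
  rw [← Finset.sum_div]
  rw [div_le_div_iff₀ (by norm_num) (by norm_num)]
  have hgeo : ∑ j ∈ Finset.range m, (1 - c) * s * (1/2:ℝ)^j
      = (1-c) * s * ∑ j ∈ Finset.range m, (1/2:ℝ)^j := by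
    rw [Finset.mul_sum]
  rw [hgeo]
  have hsum2 : ∑ j ∈ Finset.range m, (1/2:ℝ)^j ≤ 2 := by
    have hgs := geom_sum_eq (by norm_num : (1/2:ℝ) ≠ 1) m
    have hq : (0:ℝ) ≤ (1/2:ℝ)^m := by positivity
    have he : (((1/2:ℝ)^m - 1)/((1/2:ℝ) - 1)) = 2*(1-(1/2:ℝ)^m) := by ring
    rw [hgs, he]
    linarith
  have h0 : 0 ≤ (1-c) * s := by nlinarith
  nlinarith [hsum2, h0]

/-- per-step scale -/
noncomputable def DS (s c : ℝ) (n : ℕ) : ℕ := max 1 (Int.toNat ⌈2/(eS s c n)⌉)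

lemma DS_ge_one (s c : ℝ) (n : ℕ) : 1 ≤ DS s c n := le_max_left _ _

lemma DS_err {s c : ℝ} (hs : 0 < s) (hc : c < 1) (n : ℕ) :
    1/((DS s c n : ℝ)+1) ≤ eS s c n / 2 := by
  have he := eS_pos hs hc n
  have h1 : (2:ℝ)/(eS s c n) ≤ ((⌈2/(eS s c n)⌉ : ℤ) : ℝ) := Int.le_ceil _
  have h2 : (0:ℤ) ≤ ⌈2/(eS s c n)⌉ := by
    have : (0:ℝ) < 2/(eS s c n) := by positivity
    exact_mod_cast (Int.ceil_pos.mpr this).le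
  have h3 : ((⌈2/(eS s c n)⌉ : ℤ) : ℝ) ≤ ((DS s c n : ℕ) : ℝ) := by
    have : Int.toNat ⌈2/(eS s c n)⌉ ≤ DS s c n := le_max_right _ _
    have h4 : ((Int.toNat ⌈2/(eS s c n)⌉ : ℕ) : ℝ) ≤ ((DS s c n : ℕ) : ℝ) := by exact_mod_cast this
    have h5 : ((⌈2/(eS s c n)⌉ : ℤ) : ℝ) = ((Int.toNat ⌈2/(eS s c n)⌉ : ℕ) : ℝ) := by
      exact_mod_cast (Int.toNat_of_nonneg h2).symm
    rw [h5]
    exact h4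
  have hD : (2:ℝ)/(eS s c n) ≤ (DS s c n : ℝ) + 1 := by linarith
  have hDpos : (0:ℝ) < (DS s c n : ℝ) + 1 := by positivity
  rw [div_le_div_iff₀ hDpos (by norm_num)]
  rw [div_le_iff₀ he] at hD
  nlinarith

/-- the step selection -/
noncomputable def stepSel (y : ℤ → Λ) (A : Set ℤ) (s c : ℝ) (t : ℕ → ℝ) (n : ℕ) : Set ℤ :=
  sel (DS s c n) y A ((t n * s + 2 * eS s c n) / lowerUniformDensity A)

/-- the sequence of remainder sets -/
noncomputable def IS (y : ℤ → Λ) (I : Set ℤ) (t : ℕ → ℝ) : ℕ → Set ℤ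
  | 0 => I
  | n+1 => IS y I t n \ stepSel y (IS y I t n) (lowerUniformDensity I) (cHat t) t n

/-- the selected sets -/
noncomputable def JS (y : ℤ → Λ) (I : Set ℤ) (t : ℕ → ℝ) (n : ℕ) : Set ℤ :=
  stepSel y (IS y I t n) (lowerUniformDensity I) (cHat t) t n

lemma JS_subset_IS (y : ℤ → Λ) (I : Set ℤ) (t : ℕ → ℝ) (n : ℕ) : JS y I t n ⊆ IS y I t n :=
  sel_subset

lemma IS_succ (y : ℤ → Λ) (I : Set ℤ) (t : ℕ → ℝ) (n : ℕ) :
    IS y I t (n+1) = IS y I t n \ JS y I t n := rfl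

lemma IS_mono (y : ℤ → Λ) (I : Set ℤ) (t : ℕ → ℝ) {m n : ℕ} (h : m ≤ n) :
    IS y I t n ⊆ IS y I t m := by
  induction n with
  | zero => have : m = 0 := by omega
            subst this; exact subset_rfl
  | succ k ih =>
    rcases Nat.lt_or_ge m (k+1) with h1 | h1
    · exact (Set.diff_subset).trans (ih (by omega))
    · have : m = k + 1 := by omega
      subst this; exact subset_rfl

lemma JS_subset (y : ℤ → Λ) (I : Set ℤ) (t : ℕ → ℝ) (n : ℕ) : JS y I t n ⊆ I :=
  (JS_subset_IS y I t n).trans (IS_mono y I t (Nat.zero_le n))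

lemma JS_disjoint (y : ℤ → Λ) (I : Set ℤ) (t : ℕ → ℝ) :
    Pairwise fun m n => Disjoint (JS y I t m) (JS y I t n) := by
  have key : ∀ m n : ℕ, m < n → Disjoint (JS y I t m) (JS y I t n) := by
    intro m n hmn
    rw [Set.disjoint_right]
    intro i hin him
    have h1 : JS y I t n ⊆ IS y I t (m+1) := (JS_subset_IS y I t n).trans (IS_mono y I t hmn)
    have h2 := h1 hin
    rw [IS_succ] at h2
    exact h2.2 him
  intro m n hmn
  rcases lt_or_gt_of_ne hmn with h | h
  · exact key m n h
  · exact (key n m h).symm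

lemma IS_shift (y : ℤ → Λ) (I : Set ℤ) (t : ℕ → ℝ) (n : ℕ) :
    IS (shift y) (shiftSet I) t n = shiftSet (IS y I t n) := by
  induction n with
  | zero => rfl
  | succ k ih =>
    show IS (shift y) (shiftSet I) t k \ _ = shiftSet (IS y I t k \ _)
    rw [ih]
    unfold stepSel
    rw [lud_shift, lud_shift, sel_shift]
    ext i
    simp only [Set.mem_diff, shiftSet, Set.mem_setOf_eq]

lemma JS_shift (y : ℤ → Λ) (I : Set ℤ) (t : ℕ → ℝ) (n : ℕ) :
    JS (shift y) (shiftSet I) t n = shiftSet (JS y I t n) := by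
  unfold JS stepSel
  rw [IS_shift, lud_shift, lud_shift, sel_shift]

/-- the main density estimate -/
lemma JS_dens {y : ℤ → Λ} {I : Set ℤ} {t : ℕ → ℝ} (hap : Aperiodic y)
    (ht0 : ∀ n, 0 ≤ t n) (hsum : ∃ c : ℝ, HasSum t c ∧ c < 1) (n : ℕ) :
    t n * lowerUniformDensity I ≤ lowerUniformDensity (JS y I t n) := by
  obtain ⟨c₀, hsum, hc1⟩ := hsum
  set s := lowerUniformDensity I with hs
  rcases eq_or_lt_of_le (lud_nonneg I) with hs0 | hspos
  · -- trivial case s = 0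
    rw [hs, ← hs0, mul_zero]
    exact lud_nonneg _
  · set c := cHat t with hc
    have hceq : c = c₀ := cHat_eq ht0 hsum hc1
    have hc0 : 0 ≤ c₀ := by
      rw [← hsum.tsum_eq]
      exact tsum_nonneg ht0
    have hcl1 : c < 1 := by rw [hceq]; exact hc1
    have hcge : 0 ≤ c := by rw [hceq]; exact hc0
    have hpart : ∀ m : ℕ, ∑ j ∈ Finset.range m, t j ≤ c := by
      intro m
      rw [hceq]
      exact sum_le_hasSum (Finset.range m) (fun j _ => ht0 j) hsum
    -- the invariant
    have hinv : ∀ m : ℕ, s - (∑ j ∈ Finset.range m, t j) * s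
        - 3 * (∑ j ∈ Finset.range m, eS s c j) ≤ lowerUniformDensity (IS y I t m) := by
      intro m
      induction m with
      | zero => simp [IS, ← hs]
      | succ k ih =>
        -- feasibility at step k
        have hfeas : t k * s + 2 * eS s c k ≤ lowerUniformDensity (IS y I t k) := by
          apply le_trans _ ih
          have h1 : (∑ j ∈ Finset.range (k+1), t j) ≤ c := hpart (k+1)
          have h2 : ∑ j ∈ Finset.range (k+1), eS s c j ≤ (1-c) * s / 6 :=
            eS_sum_le hspos.le hcl1.le (k+1)
          have h3 : ∑ j ∈ Finset.range (k+1), t j = (∑ j ∈ Finset.range k, t j) + t k :=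
            Finset.sum_range_succ _ _
          have h4 : ∑ j ∈ Finset.range (k+1), eS s c j
              = (∑ j ∈ Finset.range k, eS s c j) + eS s c k := Finset.sum_range_succ _ _
          have h5 : 0 ≤ eS s c k := (eS_pos hspos hcl1 k).le
          nlinarith [hspos.le]
        set A := IS y I t k with hA
        set sk := lowerUniformDensity A with hsk
        have hskpos : 0 < sk := by
          have := eS_pos hspos hcl1 k
          have := ht0 k
          nlinarith [hfeas]
        set β := (t k * s + 2 * eS s c k) / sk with hβ
        have hβ0 : 0 ≤ β := by
          apply div_nonneg _ hskpos.le
          have := (eS_pos hspos hcl1 k).le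
          have := ht0 k
          nlinarith [hspos.le]
        have hβ1 : β ≤ 1 := by
          rw [hβ, div_le_one hskpos]
          exact hfeas
        have hβmul : β * sk = t k * s + 2 * eS s c k := by
          rw [hβ, div_mul_cancel₀]
          exact hskpos.ne'
        have hrem := rem_dens (A := A) (β := β) (D := DS s c k) hap (DS_ge_one s c k) hβ0 hβ1
        have herr := DS_err hspos hcl1 k
        have hstep : IS y I t (k+1) = A \ sel (DS s c k) y A β := rfl
        rw [hstep]
        have h3 : ∑ j ∈ Finset.range (k+1), t j = (∑ j ∈ Finset.range k, t j) + t k :=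
          Finset.sum_range_succ _ _
        have h4 : ∑ j ∈ Finset.range (k+1), eS s c j
            = (∑ j ∈ Finset.range k, eS s c j) + eS s c k := Finset.sum_range_succ _ _
        rw [h3, h4]
        have he5 : 0 < eS s c k := eS_pos hspos hcl1 k
        nlinarith [hrem, ih, hβmul, herr]
    -- conclusion at n
    have hfeas : t n * s + 2 * eS s c n ≤ lowerUniformDensity (IS y I t n) := by
      apply le_trans _ (hinv n)
      have h1 : (∑ j ∈ Finset.range (n+1), t j) ≤ c := hpart (n+1)
      have h2 : ∑ j ∈ Finset.range (n+1), eS s c j ≤ (1-c) * s / 6 :=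
        eS_sum_le hspos.le hcl1.le (n+1)
      have h3 : ∑ j ∈ Finset.range (n+1), t j = (∑ j ∈ Finset.range n, t j) + t n :=
        Finset.sum_range_succ _ _
      have h4 : ∑ j ∈ Finset.range (n+1), eS s c j
          = (∑ j ∈ Finset.range n, eS s c j) + eS s c n := Finset.sum_range_succ _ _
      have h5 : 0 ≤ eS s c n := (eS_pos hspos hcl1 n).le
      nlinarith [hspos.le]
    set A := IS y I t n with hA
    set sk := lowerUniformDensity A with hsk
    have hskpos : 0 < sk := by
      have := eS_pos hspos hcl1 n
      have := ht0 n
      nlinarith [hfeas]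
    set β := (t n * s + 2 * eS s c n) / sk with hβ
    have hβ0 : 0 ≤ β := by
      apply div_nonneg _ hskpos.le
      have := (eS_pos hspos hcl1 n).le
      have := ht0 n
      nlinarith [hspos.le]
    have hβ1 : β ≤ 1 := by
      rw [hβ, div_le_one hskpos]
      exact hfeas
    have hβmul : β * sk = t n * s + 2 * eS s c n := by
      rw [hβ, div_mul_cancel₀]
      exact hskpos.ne'
    have hseld := sel_dens (A := A) (β := β) (D := DS s c n) hap (DS_ge_one s c n) hβ0 hβ1
    have herr := DS_err hspos hcl1 n
    have he5 : 0 < eS s c n := eS_pos hspos hcl1 n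
    have hJS : JS y I t n = sel (DS s c n) y A β := rfl
    rw [hJS]
    nlinarith [hseld, hβmul, herr]

end Assemble

section Meas
variable {Λ : Type*} [Countable Λ] [MeasurableSpace Λ] [DiscreteMeasurableSpace Λ]
variable {X : Type*} [MeasurableSpace X]

lemma measurable_shl (j : ℤ) : Measurable (fun y : ℤ → Λ => shl j y) :=
  measurable_pi_lambda _ (fun i => measurable_pi_apply (i + j))

lemma measurableSet_pat (w : Wd Λ) : MeasurableSet (pat w) := by
  have h : pat w = ⋂ i : ℕ, {y : ℤ → Λ | i < w.2.length → w.2[i]? = some (y (w.1 + i))} := by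
    ext y; simp only [pat, Set.mem_setOf_eq, Set.mem_iInter]
  rw [h]
  apply MeasurableSet.iInter
  intro i
  by_cases hi : i < w.2.length
  · have h2 : {y : ℤ → Λ | i < w.2.length → w.2[i]? = some (y (w.1 + i))}
        = (fun y : ℤ → Λ => y (w.1 + i)) ⁻¹' {v | w.2[i]? = some v} := by
      ext y
      simp only [Set.mem_setOf_eq, Set.mem_preimage]
      constructor
      · intro h2; exact h2 hi
      · intro h2 _; exact h2
    rw [h2]
    exact (measurable_pi_apply _) MeasurableSet.of_discrete
  · have h2 : {y : ℤ → Λ | i < w.2.length → w.2[i]? = some (y (w.1 + i))} = Set.univ := by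
      ext y; simp [hi]
    rw [h2]; exact MeasurableSet.univ

lemma measurableSet_gpat (D k : ℕ) : MeasurableSet (gpat Λ D k) := by
  unfold gpat
  split
  · exact measurableSet_pat _
  · exact MeasurableSet.empty

lemma measurableSet_nbd (D : ℕ) {B : Set (ℤ → Λ)} (hB : MeasurableSet B) :
    MeasurableSet (nbd Λ D B) := by
  have h : nbd Λ D B = ⋃ j : ℤ, ⋃ (_ : |j| ≤ (D:ℤ)), (fun y => shl j y) ⁻¹' B := by
    ext y; simp [nbd]
  rw [h]
  exact MeasurableSet.iUnion (fun j => MeasurableSet.iUnion (fun _ => (measurable_shl j) hB))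

lemma measurableSet_UU (D : ℕ) : ∀ k, MeasurableSet (UU Λ D k)
  | 0 => MeasurableSet.empty
  | (k+1) => ((measurableSet_UU D k).union
      ((measurableSet_gpat D k).diff (measurableSet_nbd D (measurableSet_UU D k))))

lemma measurableSet_Amark (D : ℕ) : MeasurableSet (Amark Λ D) :=
  MeasurableSet.iUnion (measurableSet_UU D)

lemma measurableSet_Mk {g : X → ℤ → Λ} (hg : Measurable g) (d : ℕ) (m : ℤ) :
    MeasurableSet {x | m ∈ Mk d (g x)} := by
  have h : {x | m ∈ Mk d (g x)} = g ⁻¹' ((fun y => shl m y) ⁻¹' Amark Λ d) := rfl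
  rw [h]
  exact hg ((measurable_shl m) (measurableSet_Amark d))

lemma ell_ex_k (d : ℕ) (y : ℤ → Λ) (i : ℤ) : ∃ k : ℕ, k ≤ 2*d ∧ ell d y i = i - k := by
  unfold ell
  by_cases h : ∃ k : ℕ, k ≤ 2*d ∧ (i - k) ∈ Mk d y
  · rw [dif_pos h]; exact ⟨Nat.find h, (Nat.find_spec h).1, rfl⟩
  · rw [dif_neg h]; exact ⟨0, by omega, by norm_num⟩

lemma ell_eq_sub_iff (d : ℕ) (y : ℤ → Λ) (i : ℤ) (k : ℕ) (hk : k ≤ 2*d) :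
    ell d y i = i - k ↔
      (((i - (k:ℤ)) ∈ Mk d y ∧ ∀ k' : ℕ, k' < k → (i - (k':ℤ)) ∉ Mk d y)
        ∨ (k = 0 ∧ ∀ k'' : ℕ, k'' ≤ 2*d → (i - (k'':ℤ)) ∉ Mk d y)) := by
  unfold ell
  by_cases h : ∃ k : ℕ, k ≤ 2*d ∧ (i - k) ∈ Mk d y
  · rw [dif_pos h]
    constructor
    · intro heq
      have hfk : Nat.find h = k := by omega
      left
      constructor
      · have := (Nat.find_spec h).2
        rwa [hfk] at this
      · intro k' hk' hmem
        have := Nat.find_min h (hfk ▸ hk')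
        exact this ⟨by omega, hmem⟩
    · rintro (⟨hmem, hmin⟩ | ⟨rfl, hall⟩)
      · have h1 : Nat.find h ≤ k := Nat.find_le ⟨hk, hmem⟩
        have h2 : ¬ Nat.find h < k := by
          intro hcon
          exact hmin (Nat.find h) hcon (Nat.find_spec h).2
        have : Nat.find h = k := by omega
        omega
      · exfalso
        obtain ⟨k', hk', hmem⟩ := h
        exact hall k' hk' hmem
  · rw [dif_neg h]
    push_neg at h
    constructor
    · intro heq
      right
      have : k = 0 := by omega
      exact ⟨this, h⟩
    · rintro (⟨hmem, _⟩ | ⟨rfl, _⟩)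
      · exact absurd hmem (h k hk)
      · norm_num

lemma measurable_ell {g : X → ℤ → Λ} (hg : Measurable g) (d : ℕ) (i : ℤ) :
    Measurable (fun x => ell d (g x) i) := by
  apply measurable_to_countable'
  intro m
  by_cases hm : ∃ k : ℕ, k ≤ 2*d ∧ m = i - k
  · obtain ⟨k, hk, rfl⟩ := hm
    have hset : (fun x => ell d (g x) i) ⁻¹' {i - (k:ℤ)}
        = ({x | (i - (k:ℤ)) ∈ Mk d (g x)}
            ∩ ⋂ (k' : ℕ), ⋂ (_ : k' < k), {x | (i - (k':ℤ)) ∈ Mk d (g x)}ᶜ)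
          ∪ ⋃ (_ : k = 0),
              ⋂ (k'' : ℕ), ⋂ (_ : k'' ≤ 2*d), {x | (i - (k'':ℤ)) ∈ Mk d (g x)}ᶜ := by
      ext x
      simp only [Set.mem_preimage, Set.mem_singleton_iff, Set.mem_union, Set.mem_inter_iff,
        Set.mem_iInter, Set.mem_iUnion, Set.mem_compl_iff, Set.mem_setOf_eq]
      rw [ell_eq_sub_iff d (g x) i k hk]
      constructor
      · rintro (h | ⟨h1, h2⟩)
        · exact Or.inl h
        · exact Or.inr ⟨h1, h2⟩
      · rintro (h | ⟨h1, h2⟩)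
        · exact Or.inl h
        · exact Or.inr ⟨h1, h2⟩
    rw [hset]
    apply MeasurableSet.union
    · exact (measurableSet_Mk hg d _).inter
        (MeasurableSet.iInter (fun k' => MeasurableSet.iInter
          (fun _ => (measurableSet_Mk hg d _).compl)))
    · exact MeasurableSet.iUnion (fun _ => MeasurableSet.iInter (fun k'' =>
        MeasurableSet.iInter (fun _ => (measurableSet_Mk hg d _).compl)))
  · have hset : (fun x => ell d (g x) i) ⁻¹' {m} = ∅ := by
      ext x
      simp only [Set.mem_preimage, Set.mem_singleton_iff, Set.mem_empty_iff_false, iff_false]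
      intro hcon
      obtain ⟨k, hk, hke⟩ := ell_ex_k d (g x) i
      exact hm ⟨k, hk, by omega⟩
    rw [hset]
    exact MeasurableSet.empty

lemma measurable_cnt {H : X → Set ℤ} (hH : ∀ j, MeasurableSet {x | j ∈ H x}) (a b : ℤ) :
    Measurable (fun x => (cntIn (H x) a b : ℝ)) := by
  have h : (fun x => (cntIn (H x) a b : ℝ))
      = fun x => ∑ j ∈ Finset.Ico a b, (if j ∈ H x then (1:ℝ) else 0) := by
    funext x
    rw [cntIn, Finset.card_filter, Nat.cast_sum]
    apply Finset.sum_congr rfl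
    intro j _
    split <;> simp
  rw [h]
  apply Finset.measurable_sum
  intro j _
  exact Measurable.ite (hH j) measurable_const measurable_const

lemma measurable_lud {H : X → Set ℤ} (hH : ∀ j, MeasurableSet {x | j ∈ H x}) :
    Measurable (fun x => lowerUniformDensity (H x)) := by
  have h : (fun x => lowerUniformDensity (H x))
      = fun x => liminf (fun N : ℕ => ⨅ a : ℤ, (cntIn (H x) a (a + (N:ℤ)) : ℝ)/(N:ℝ)) atTop := by
    funext x
    rw [lud_eq_liminf_q]
    rfl
  rw [h]
  apply Measurable.liminf
  intro N
  apply Measurable.iInf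
  intro a
  exact (measurable_cnt hH a (a + (N:ℤ))).div_const _

lemma measurableSet_sel (d : ℕ) {g : X → ℤ → Λ} (hg : Measurable g)
    {H : X → Set ℤ} (hH : ∀ j, MeasurableSet {x | j ∈ H x})
    {b : X → ℝ} (hb : Measurable b) (i : ℤ) :
    MeasurableSet {x | i ∈ sel d (g x) (H x) (b x)} := by
  have hdecomp : {x | i ∈ sel d (g x) (H x) (b x)}
      = ⋃ k : ℕ, ⋃ (_ : k ≤ 2*d),
          ({x | ell d (g x) i = i - k} ∩
            {x | i ∈ H x ∧
              ⌊b x * ((cntIn (H x) (i - (k:ℤ)) i : ℝ)+1)⌋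
                > ⌊b x * (cntIn (H x) (i - (k:ℤ)) i : ℝ)⌋}) := by
    ext x
    simp only [Set.mem_iUnion, Set.mem_inter_iff, Set.mem_setOf_eq]
    constructor
    · intro hx
      obtain ⟨k, hk, hke⟩ := ell_ex_k d (g x) i
      refine ⟨k, hk, hke, ?_⟩
      have hR : Rk d (g x) (H x) i = cntIn (H x) (i - (k:ℤ)) i := by
        unfold Rk; rw [hke]
      obtain ⟨h1, h2⟩ := hx
      rw [hR] at h2
      exact ⟨h1, h2⟩
    · rintro ⟨k, hk, hke, h1, h2⟩
      have hR : Rk d (g x) (H x) i = cntIn (H x) (i - (k:ℤ)) i := by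
        unfold Rk; rw [hke]
      refine ⟨h1, ?_⟩
      rw [hR]
      exact h2
  rw [hdecomp]
  apply MeasurableSet.iUnion; intro k
  apply MeasurableSet.iUnion; intro _
  apply MeasurableSet.inter
  · exact (measurable_ell hg d i) (measurableSet_singleton _)
  · have hR := measurable_cnt hH (i - (k:ℤ)) i
    have hu : Measurable fun x => ⌊b x * ((cntIn (H x) (i - (k:ℤ)) i : ℝ)+1)⌋ :=
      Int.measurable_floor.comp (hb.mul (hR.add measurable_const))
    have hv : Measurable fun x => ⌊b x * (cntIn (H x) (i - (k:ℤ)) i : ℝ)⌋ :=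
      Int.measurable_floor.comp (hb.mul hR)
    exact (hH i).inter (measurableSet_lt hv hu)

lemma measurable_cHat : Measurable (fun t : ℕ → ℝ => cHat t) := by
  unfold cHat
  apply Measurable.iSup
  intro N
  apply Measurable.min measurable_const
  apply Measurable.max measurable_const
  apply Finset.measurable_sum
  intro j _
  exact measurable_pi_apply j

/-- joint measurability of the recursion, coordinatewise -/
lemma measurable_ISJS :
    ∀ n : ℕ,
      (∀ j : ℤ, MeasurableSet {p : (ℤ → Λ) × Set ℤ × (ℕ → ℝ) | j ∈ IS p.1 p.2.1 p.2.2 n}) ∧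
      (∀ j : ℤ, MeasurableSet {p : (ℤ → Λ) × Set ℤ × (ℕ → ℝ) | j ∈ JS p.1 p.2.1 p.2.2 n}) := by
  have hI0 : ∀ j : ℤ, MeasurableSet {p : (ℤ → Λ) × Set ℤ × (ℕ → ℝ) | j ∈ p.2.1} := by
    intro j
    apply measurableSet_setOf.mpr
    exact (measurable_pi_apply j).comp (measurable_fst.comp measurable_snd)
  have hs : Measurable (fun p : (ℤ → Λ) × Set ℤ × (ℕ → ℝ) => lowerUniformDensity p.2.1) :=
    measurable_lud hI0
  have hcm : Measurable (fun p : (ℤ → Λ) × Set ℤ × (ℕ → ℝ) => cHat p.2.2) :=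
    measurable_cHat.comp (measurable_snd.comp measurable_snd)
  have hJstep : ∀ n : ℕ,
      (∀ j : ℤ, MeasurableSet {p : (ℤ → Λ) × Set ℤ × (ℕ → ℝ) | j ∈ IS p.1 p.2.1 p.2.2 n}) →
      (∀ j : ℤ, MeasurableSet {p : (ℤ → Λ) × Set ℤ × (ℕ → ℝ) | j ∈ JS p.1 p.2.1 p.2.2 n}) := by
    intro n ihn j
    have he : Measurable (fun p : (ℤ → Λ) × Set ℤ × (ℕ → ℝ)
        => eS (lowerUniformDensity p.2.1) (cHat p.2.2) n) := by
      unfold eS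
      exact (((measurable_const.sub hcm).mul hs).mul measurable_const).div_const _
    have hD : Measurable (fun p : (ℤ → Λ) × Set ℤ × (ℕ → ℝ)
        => DS (lowerUniformDensity p.2.1) (cHat p.2.2) n) := by
      unfold DS
      have h1 : Measurable (fun p : (ℤ → Λ) × Set ℤ × (ℕ → ℝ)
          => ⌈2/(eS (lowerUniformDensity p.2.1) (cHat p.2.2) n)⌉) :=
        Int.measurable_ceil.comp (measurable_const.div he)
      exact (measurable_from_top (f := fun z : ℤ => max 1 (Int.toNat z))).comp h1
    have hln : Measurable (fun p : (ℤ → Λ) × Set ℤ × (ℕ → ℝ)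
        => lowerUniformDensity (IS p.1 p.2.1 p.2.2 n)) := measurable_lud ihn
    have hβ : Measurable (fun p : (ℤ → Λ) × Set ℤ × (ℕ → ℝ)
        => (p.2.2 n * lowerUniformDensity p.2.1
            + 2 * eS (lowerUniformDensity p.2.1) (cHat p.2.2) n)
          / lowerUniformDensity (IS p.1 p.2.1 p.2.2 n)) := by
      apply Measurable.div _ hln
      apply Measurable.add
      · exact (((measurable_pi_apply n).comp (measurable_snd.comp measurable_snd)).mul hs)
      · exact measurable_const.mul he
    have hdecomp : {p : (ℤ → Λ) × Set ℤ × (ℕ → ℝ) | j ∈ JS p.1 p.2.1 p.2.2 n}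
        = ⋃ d : ℕ,
            ({p : (ℤ → Λ) × Set ℤ × (ℕ → ℝ)
                | DS (lowerUniformDensity p.2.1) (cHat p.2.2) n = d}
              ∩ {p : (ℤ → Λ) × Set ℤ × (ℕ → ℝ)
                | j ∈ sel d p.1 (IS p.1 p.2.1 p.2.2 n)
                    ((p.2.2 n * lowerUniformDensity p.2.1
                        + 2 * eS (lowerUniformDensity p.2.1) (cHat p.2.2) n)
                      / lowerUniformDensity (IS p.1 p.2.1 p.2.2 n))}) := by
      ext p
      simp only [Set.mem_iUnion, Set.mem_inter_iff, Set.mem_setOf_eq]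
      constructor
      · intro hp
        exact ⟨DS (lowerUniformDensity p.2.1) (cHat p.2.2) n, rfl, hp⟩
      · rintro ⟨d, hd, hp⟩
        show j ∈ stepSel p.1 (IS p.1 p.2.1 p.2.2 n) (lowerUniformDensity p.2.1) (cHat p.2.2)
          p.2.2 n
        unfold stepSel
        rw [hd]
        exact hp
    rw [hdecomp]
    apply MeasurableSet.iUnion
    intro d
    exact (hD (measurableSet_singleton d)).inter
      (measurableSet_sel d measurable_fst ihn hβ j)
  intro n
  induction n with
  | zero =>
    refine ⟨hI0, hJstep 0 hI0⟩
  | succ k ih =>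
    have hIk1 : ∀ j : ℤ, MeasurableSet
        {p : (ℤ → Λ) × Set ℤ × (ℕ → ℝ) | j ∈ IS p.1 p.2.1 p.2.2 (k+1)} := by
      intro j
      have h : {p : (ℤ → Λ) × Set ℤ × (ℕ → ℝ) | j ∈ IS p.1 p.2.1 p.2.2 (k+1)}
          = {p : (ℤ → Λ) × Set ℤ × (ℕ → ℝ) | j ∈ IS p.1 p.2.1 p.2.2 k}
            \ {p : (ℤ → Λ) × Set ℤ × (ℕ → ℝ) | j ∈ JS p.1 p.2.1 p.2.2 k} := by
        ext p
        show j ∈ IS p.1 p.2.1 p.2.2 (k+1) ↔ _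
        rw [IS_succ]
        simp [Set.mem_diff]
      rw [h]
      exact (ih.1 j).diff (ih.2 j)
    exact ⟨hIk1, hJstep (k+1) hIk1⟩

end Meas
end StatSel

/-- **Stationary selection of a sequence of subsets.** There is a Borel map assigning to
each aperiodic `y ∈ Λ^ℤ`, each `I ⊆ ℤ` and each sequence `(t_n)` of nonnegative reals with
`∑ t_n < 1`, a sequence `(J_n)` of pairwise disjoint subsets of `I` with
`s̲*(J_n) ≥ t_n·s̲*(I)`, equivariantly: `(Sy, SI, (t_n)) ↦ (SJ_n)`. -/
theorem stationary_selection_sequence {Λ : Type*} [Countable Λ]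
    [MeasurableSpace Λ] [DiscreteMeasurableSpace Λ] :
    ∃ Jmap : (ℤ → Λ) → Set ℤ → (ℕ → ℝ) → (ℕ → Set ℤ),
      Measurable (fun p : (ℤ → Λ) × Set ℤ × (ℕ → ℝ) => Jmap p.1 p.2.1 p.2.2) ∧
      ∀ (y : ℤ → Λ) (I : Set ℤ) (t : ℕ → ℝ),
        Aperiodic y → (∀ n, 0 ≤ t n) → (∃ c : ℝ, HasSum t c ∧ c < 1) →
          (∀ n, Jmap y I t n ⊆ I) ∧
          (Pairwise fun m n => Disjoint (Jmap y I t m) (Jmap y I t n)) ∧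
          (∀ n, t n * lowerUniformDensity I ≤ lowerUniformDensity (Jmap y I t n)) ∧
          (∀ n, Jmap (shift y) (shiftSet I) t n = shiftSet (Jmap y I t n)) := by
  classical
  refine ⟨fun y I t n => StatSel.JS y I t n, ?_, ?_⟩
  · apply measurable_pi_lambda
    intro n
    apply measurable_pi_lambda
    intro i
    apply measurable_to_prop
    have h : ((fun p : (ℤ → Λ) × Set ℤ × (ℕ → ℝ) => StatSel.JS p.1 p.2.1 p.2.2 n i) ⁻¹' {True})
        = {p : (ℤ → Λ) × Set ℤ × (ℕ → ℝ) | i ∈ StatSel.JS p.1 p.2.1 p.2.2 n} := by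
      ext p
      simp only [Set.mem_preimage, Set.mem_singleton_iff, Set.mem_setOf_eq, eq_iff_iff,
        iff_true]
      rfl
    rw [h]
    exact (StatSel.measurable_ISJS n).2 i
  · intro y I t hap ht0 hsum
    exact ⟨fun n => StatSel.JS_subset y I t n, StatSel.JS_disjoint y I t,
      fun n => StatSel.JS_dens hap ht0 hsum n, fun n => StatSel.JS_shift y I t n⟩
end

section
/- Let I ⊆ ℤ and let f : I → ℤ be an injection with bounded displacement, i.e. there is M such that |f(n) − n| ≤ M for all n ∈ I; let J = f(I). Then s̲*(J) = s̲*(I) and s̄*(J) = s̄*(I). -/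
open Filter
open scoped Classical

/-- The upper uniform density of a set `I ⊆ ℤ`:
`limsup_{N→∞} sup_{n∈ℤ} (1/N)·|I ∩ [n, n+N−1]|`. -/
noncomputable def upperUniformDensity (I : Set ℤ) : ℝ :=
  limsup (fun N : ℕ =>
    ⨆ n : ℤ, (∑ i ∈ Finset.range N, if n + (i : ℤ) ∈ I then (1 : ℝ) else 0) / N) atTop

noncomputable def cntZ (A : Set ℤ) (n : ℤ) (N : ℕ) : ℝ :=
  ∑ i ∈ Finset.range N, if n + (i : ℤ) ∈ A then (1 : ℝ) else 0

lemma cntZ_nonneg (A : Set ℤ) (n : ℤ) (N : ℕ) : 0 ≤ cntZ A n N :=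
  Finset.sum_nonneg fun _ _ => by positivity

lemma cntZ_le (A : Set ℤ) (n : ℤ) (N : ℕ) : cntZ A n N ≤ N := by
  calc cntZ A n N ≤ ∑ _i ∈ Finset.range N, (1 : ℝ) :=
        Finset.sum_le_sum fun i _ => by split <;> norm_num
    _ = N := by simp

lemma cntZ_add (A : Set ℤ) (n : ℤ) (N L : ℕ) :
    cntZ A n (N + L) = cntZ A n N + cntZ A (n + N) L := by
  rw [cntZ, Finset.sum_range_add]
  congr 1
  apply Finset.sum_congr rfl
  intro i _
  congr 1
  push_cast
  ring_nf

lemma cntZ_eq_card (A : Set ℤ) (n : ℤ) (N : ℕ) :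
    cntZ A n N = ((Finset.range N).filter (fun i : ℕ => n + (i : ℤ) ∈ A)).card := by
  rw [cntZ, ← Finset.sum_filter]
  simp

lemma cntZ_map (A B : Set ℤ) (g : ℤ → ℤ) (K : ℕ)
    (hmem : ∀ a ∈ A, g a ∈ B) (hK : ∀ a ∈ A, |g a - a| ≤ (K : ℤ))
    (hginj : Set.InjOn g A) (n : ℤ) (N : ℕ) :
    cntZ A n N ≤ cntZ B (n - K) (N + 2 * K) := by
  rw [cntZ_eq_card, cntZ_eq_card]
  have : ((Finset.range N).filter (fun i : ℕ => n + (i : ℤ) ∈ A)).card ≤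
      ((Finset.range (N + 2 * K)).filter (fun j : ℕ => (n - K) + (j : ℤ) ∈ B)).card := by
    apply Finset.card_le_card_of_injOn (fun i : ℕ => (g (n + (i:ℤ)) - (n - (K:ℤ))).toNat)
    · intro i hi
      simp only [Finset.mem_coe, Finset.mem_filter, Finset.mem_range] at hi ⊢
      obtain ⟨hiN, hiA⟩ := hi
      have habs := hK _ hiA
      rw [abs_le] at habs
      have hge : (0 : ℤ) ≤ g (n + i) - (n - K) := by omega
      have hcast : ((g (n + i) - (n - K)).toNat : ℤ) = g (n + i) - (n - K) :=
        Int.toNat_of_nonneg hge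
      constructor
      · have : g (n + i) - (n - K) < (N : ℤ) + 2 * K := by omega
        omega
      · rw [hcast]
        have heq : n - (K:ℤ) + (g (n + i) - (n - K)) = g (n + i) := by ring
        rw [heq]
        exact hmem _ hiA
    · intro i hi i' hi' heq
      simp only [Finset.mem_coe, Finset.mem_filter, Finset.mem_range] at hi hi'
      have habs := hK _ hi.2
      have habs' := hK _ hi'.2
      rw [abs_le] at habs habs'
      have h1 : ((g (n + i) - (n - K)).toNat : ℤ) = g (n + i) - (n - K) :=
        Int.toNat_of_nonneg (by omega)
      have h2 : ((g (n + i') - (n - K)).toNat : ℤ) = g (n + i') - (n - K) :=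
        Int.toNat_of_nonneg (by omega)
      have : g (n + i) = g (n + i') := by
        have := congrArg (fun x : ℕ => (x : ℤ)) heq
        simp only at this
        omega
      have := hginj hi.2 hi'.2 this
      omega
  exact_mod_cast this

lemma term_nonneg (A : Set ℤ) (n : ℤ) (N : ℕ) : 0 ≤ cntZ A n N / N :=
  div_nonneg (cntZ_nonneg A n N) (Nat.cast_nonneg N)

lemma term_le_one (A : Set ℤ) (n : ℤ) (N : ℕ) : cntZ A n N / N ≤ 1 := by
  rcases Nat.eq_zero_or_pos N with h | h
  · subst h; simp [cntZ]
  · rw [div_le_one (by exact_mod_cast h)]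
    exact cntZ_le A n N

lemma bddAbove_range (A : Set ℤ) (N : ℕ) :
    BddAbove (Set.range fun n : ℤ => cntZ A n N / N) :=
  ⟨1, by rintro _ ⟨n, rfl⟩; exact term_le_one A n N⟩

lemma bddBelow_range (A : Set ℤ) (N : ℕ) :
    BddBelow (Set.range fun n : ℤ => cntZ A n N / N) :=
  ⟨0, by rintro _ ⟨n, rfl⟩; exact term_nonneg A n N⟩

lemma supDens_nonneg (A : Set ℤ) (N : ℕ) : 0 ≤ ⨆ n : ℤ, cntZ A n N / N :=
  (term_nonneg A 0 N).trans (le_ciSup (bddAbove_range A N) 0)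

lemma supDens_le_one (A : Set ℤ) (N : ℕ) : (⨆ n : ℤ, cntZ A n N / N) ≤ 1 :=
  ciSup_le fun n => term_le_one A n N

lemma infDens_nonneg (A : Set ℤ) (N : ℕ) : 0 ≤ ⨅ n : ℤ, cntZ A n N / N :=
  le_ciInf fun n => term_nonneg A n N

lemma infDens_le_one (A : Set ℤ) (N : ℕ) : (⨅ n : ℤ, cntZ A n N / N) ≤ 1 :=
  (ciInf_le (bddBelow_range A N) 0).trans (term_le_one A 0 N)


lemma div_mono_N {N : ℕ} {a b : ℝ} (hab : a ≤ b) : a / (N:ℝ) ≤ b / (N:ℝ) := by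
  rcases Nat.eq_zero_or_pos N with h | h
  · subst h; simp
  · exact (div_le_div_iff_of_pos_right (by exact_mod_cast h)).2 hab

lemma sup_ineq (A B : Set ℤ) (K : ℕ) (N : ℕ)
    (h : ∀ n : ℤ, cntZ A n N ≤ cntZ B (n - K) N + 2 * K) :
    (⨆ n : ℤ, cntZ A n N / N) ≤ (⨆ n : ℤ, cntZ B n N / N) + 2 * K / N := by
  apply ciSup_le
  intro n
  have h1 : cntZ A n N / N ≤ cntZ B (n - K) N / N + 2 * K / N := by
    rw [← add_div]
    exact div_mono_N (h n)
  exact h1.trans (add_le_add (le_ciSup (bddAbove_range B N) (n - K)) le_rfl)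

lemma inf_ineq (A B : Set ℤ) (K : ℕ) (N : ℕ)
    (h : ∀ n : ℤ, cntZ A n N ≤ cntZ B (n - K) N + 2 * K) :
    (⨅ n : ℤ, cntZ A n N / N) ≤ (⨅ n : ℤ, cntZ B n N / N) + 2 * K / N := by
  rw [← sub_le_iff_le_add]
  apply le_ciInf
  intro m
  rw [sub_le_iff_le_add]
  have h1 : cntZ A (m + K) N / N ≤ cntZ B m N / N + 2 * K / N := by
    have := h (m + K)
    simp only [add_sub_cancel_right] at this
    rw [← add_div]
    exact div_mono_N this
  exact (ciInf_le (bddBelow_range A N) (m + K)).trans h1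

lemma limsup_le_of_close (u v : ℕ → ℝ) (hu0 : ∀ N, 0 ≤ u N) (hv0 : ∀ N, 0 ≤ v N) (hv1 : ∀ N, v N ≤ 1)
    (C : ℝ) (h : ∀ N : ℕ, u N ≤ v N + C / N) :
    limsup u atTop ≤ limsup v atTop := by
  have hbv : IsBoundedUnder (· ≤ ·) atTop v := isBoundedUnder_of ⟨1, hv1⟩
  have hcv : IsCoboundedUnder (· ≤ ·) atTop u :=
    (isBoundedUnder_of (r := (· ≥ ·)) ⟨0, hu0⟩).isCoboundedUnder_le
  apply le_of_forall_sub_le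
  intro ε hε
  rw [sub_le_iff_le_add]
  have hev : ∀ᶠ N : ℕ in atTop, C / (N : ℝ) < ε :=
    (tendsto_const_div_atTop_nhds_zero_nat C).eventually (gt_mem_nhds hε)
  have hev2 : ∀ᶠ N in atTop, u N ≤ v N + ε :=
    hev.mono fun N hN => (h N).trans (by linarith)
  have h1 : limsup u atTop ≤ limsup (fun N => v N + ε) atTop := by
    refine limsup_le_limsup hev2 hcv ?_
    exact isBoundedUnder_of ⟨1 + ε, fun N => add_le_add (hv1 N) le_rfl⟩
  have h2 : limsup (fun N => v N + ε) atTop = limsup v atTop + ε :=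
    limsup_add_const atTop v ε hbv ((isBoundedUnder_of (r := (· ≥ ·)) ⟨0, hv0⟩).isCoboundedUnder_le)
  rw [h2] at h1
  exact h1

lemma liminf_le_of_close (u v : ℕ → ℝ) (hu0 : ∀ N, 0 ≤ u N) (hu1 : ∀ N, u N ≤ 1)
    (hv0 : ∀ N, 0 ≤ v N) (hv1 : ∀ N, v N ≤ 1)
    (C : ℝ) (h : ∀ N : ℕ, u N ≤ v N + C / N) :
    liminf u atTop ≤ liminf v atTop := by
  have hbu : IsBoundedUnder (· ≥ ·) atTop u := isBoundedUnder_of ⟨0, hu0⟩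
  have hbv : IsBoundedUnder (· ≥ ·) atTop v := isBoundedUnder_of ⟨0, hv0⟩
  have hcv : IsCoboundedUnder (· ≥ ·) atTop v :=
    (isBoundedUnder_of (r := (· ≤ ·)) ⟨1, hv1⟩).isCoboundedUnder_ge
  apply le_of_forall_sub_le
  intro ε hε
  rw [sub_le_iff_le_add]
  have hev : ∀ᶠ N : ℕ in atTop, C / (N : ℝ) < ε :=
    (tendsto_const_div_atTop_nhds_zero_nat C).eventually (gt_mem_nhds hε)
  have hev2 : ∀ᶠ N in atTop, u N ≤ v N + ε :=
    hev.mono fun N hN => (h N).trans (by linarith)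
  have h1 : liminf u atTop ≤ liminf (fun N => v N + ε) atTop := by
    refine liminf_le_liminf hev2 hbu ?_
    exact ((isBoundedUnder_of (r := (· ≤ ·))
      ⟨1 + ε, fun N => add_le_add (hv1 N) le_rfl⟩)).isCoboundedUnder_ge
  have h2 : liminf (fun N => v N + ε) atTop = liminf v atTop + ε :=
    liminf_add_const atTop v ε hcv hbv
  rw [h2] at h1
  exact h1


/-- **Bounded displacement preserves uniform densities.** If `f : I → ℤ` is injective with
`|f(n) − n| ≤ M` for all `n ∈ I`, and `J = f(I)`, then `s̲*(J) = s̲*(I)` and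
`s̄*(J) = s̄*(I)`. -/
theorem boundedDisplacement_preserves_uniform_density (I : Set ℤ) (f : ℤ → ℤ)
    (hinj : Set.InjOn f I) (M : ℤ) (hdisp : ∀ n ∈ I, |f n - n| ≤ M) :
    lowerUniformDensity (f '' I) = lowerUniformDensity I ∧
    upperUniformDensity (f '' I) = upperUniformDensity I := by
  set J := f '' I with hJdef
  set K := M.toNat with hKdef
  have hMK : M ≤ (K : ℤ) := Int.self_le_toNat M
  have hcast : ((2 * K : ℕ) : ℝ) = 2 * (K : ℝ) := by push_cast; ring
  have h1 : ∀ (n : ℤ) (N : ℕ), cntZ I n N ≤ cntZ J (n - K) N + 2 * K := by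
    intro n N
    have hmap := cntZ_map I J f K (fun a ha => ⟨a, ha, rfl⟩)
      (fun a ha => (hdisp a ha).trans hMK) hinj n N
    have hsplit := cntZ_add J (n - K) N (2 * K)
    have hle := cntZ_le J (n - (K : ℤ) + (N : ℤ)) (2 * K)
    rw [hcast] at hle
    rw [hsplit] at hmap
    linarith
  have h2 : ∀ (n : ℤ) (N : ℕ), cntZ J n N ≤ cntZ I (n - K) N + 2 * K := by
    intro n N
    set g := Function.invFunOn f I with hgdef
    have hprop : ∀ b ∈ J, g b ∈ I ∧ f (g b) = b := by
      intro b hb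
      obtain ⟨a, ha, hab⟩ := hb
      exact ⟨Function.invFunOn_mem ⟨a, ha, hab⟩, Function.invFunOn_eq ⟨a, ha, hab⟩⟩
    have hmap := cntZ_map J I g K (fun b hb => (hprop b hb).1)
      (fun b hb => by
        obtain ⟨hgI, hfg⟩ := hprop b hb
        have : |g b - b| = |f (g b) - g b| := by rw [hfg, abs_sub_comm]
        rw [this]
        exact (hdisp _ hgI).trans hMK)
      (fun b hb b' hb' he => by
        rw [← (hprop b hb).2, ← (hprop b' hb').2, he]) n N
    have hsplit := cntZ_add I (n - K) N (2 * K)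
    have hle := cntZ_le I (n - (K : ℤ) + (N : ℤ)) (2 * K)
    rw [hcast] at hle
    rw [hsplit] at hmap
    linarith
  have goal1 : liminf (fun N : ℕ => ⨅ n : ℤ, cntZ J n N / N) atTop =
      liminf (fun N : ℕ => ⨅ n : ℤ, cntZ I n N / N) atTop := by
    apply le_antisymm
    · exact liminf_le_of_close _ _ (fun N => infDens_nonneg J N) (fun N => infDens_le_one J N)
        (fun N => infDens_nonneg I N) (fun N => infDens_le_one I N) (2 * K)
        (fun N => inf_ineq J I K N (fun n => h2 n N))
    · exact liminf_le_of_close _ _ (fun N => infDens_nonneg I N) (fun N => infDens_le_one I N)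
        (fun N => infDens_nonneg J N) (fun N => infDens_le_one J N) (2 * K)
        (fun N => inf_ineq I J K N (fun n => h1 n N))
  have goal2 : limsup (fun N : ℕ => ⨆ n : ℤ, cntZ J n N / N) atTop =
      limsup (fun N : ℕ => ⨆ n : ℤ, cntZ I n N / N) atTop := by
    apply le_antisymm
    · exact limsup_le_of_close _ _ (fun N => supDens_nonneg J N)
        (fun N => supDens_nonneg I N) (fun N => supDens_le_one I N) (2 * K)
        (fun N => sup_ineq J I K N (fun n => h2 n N))
    · exact limsup_le_of_close _ _ (fun N => supDens_nonneg I N)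
        (fun N => supDens_nonneg J N) (fun N => supDens_le_one J N) (2 * K)
        (fun N => sup_ineq I J K N (fun n => h1 n N))
  exact ⟨goal1, goal2⟩
end
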